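/- arXiv:math/0404298 — 8 statements merged into one kernel-verified Lean document; each statement's English description precedes it below -/
import Mathlib

section
/- Let X be a strip-concave trapezoidal array of size (n,m) with μ^X = 0 (i.e., x_{i0} = 0 for all i). Then for every subset I ⊆ {1,…,n} with k := |I|, the inequality λ[1,k] − ν(I) − Δ_k ≥ 0 holds, where λ := λ^X, λ̄ := λ̄^X, ν := ν^X, Δ_k := Σ_{j=1}^{n+m} max{0, λ̄_{j−k} − λ_j} (with λ̄_{j−k} := −∞, i.e. the term taken as 0, if j−k ≤ 0 or j−k > m), λ[1,k] := λ_1 + … + λ_k, and ν(I) := Σ_{i∈I} ν_i. -/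
open Finset

/-- Row derivative `∂x_{ij} := x_{ij} − x_{i,j−1}`. -/
noncomputable def pd (x : ℕ → ℕ → ℝ) (i j : ℕ) : ℝ := x i j - x i (j - 1)

/-- Strip-concavity for a trapezoidal array of size `(n,m)` (entries `x i j`, `i ≤ n`,
`j ≤ i + m`). -/
def TrapSC (n m : ℕ) (x : ℕ → ℕ → ℝ) : Prop :=
  ∀ i j, 1 ≤ i → i ≤ n → 1 ≤ j → j ≤ i + m →
    (j ≤ i - 1 + m → pd x i j ≥ pd x (i - 1) j) ∧
    (j < i + m → pd x (i - 1) j ≥ pd x i (j + 1))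

lemma sum_shift (f : ℕ → ℝ) (a b c : ℕ) :
    ∑ j ∈ Icc (a+c) (b+c), f j = ∑ j ∈ Icc a b, f (j+c) := by
  rw [← Finset.map_add_right_Icc, Finset.sum_map]
  simp [addRightEmbedding]

lemma tele (x : ℕ → ℕ → ℝ) (i : ℕ) : ∀ N, ∑ j ∈ Icc 1 N, pd x i j = x i N - x i 0
  | 0 => by simp
  | (N+1) => by
      rw [Finset.sum_Icc_succ_top (by omega), tele x i N]
      simp only [pd, Nat.add_sub_cancel]
      ring

lemma sum_Icc_split (f : ℕ → ℝ) (a b c : ℕ) (h1 : a ≤ b + 1) (h2 : b ≤ c) :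
    ∑ j ∈ Icc a c, f j = (∑ j ∈ Icc a b, f j) + ∑ j ∈ Icc (b+1) c, f j := by
  rw [← Finset.sum_union]
  · congr 1
    ext t
    simp only [mem_union, mem_Icc]
    omega
  · rw [Finset.disjoint_left]
    intro t ht1 ht2
    simp only [mem_Icc] at ht1 ht2
    omega

lemma key (m : ℕ) (x : ℕ → ℕ → ℝ) :
    ∀ n, TrapSC n m x → (∀ i ≤ n, x i 0 = 0) → ∀ I, I ⊆ Icc 1 n →
    (∑ j ∈ Icc 1 I.card, pd x n j) - (∑ i ∈ I, (x i (i + m) - x (i - 1) (i - 1 + m)))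
      - (∑ t ∈ Icc 1 m, max 0 (pd x 0 t - pd x n (t + I.card))) ≥ 0 := by
  intro n
  induction n with
  | zero =>
      intro _ _ I hI
      have hIe : I = ∅ := by
        rw [← Finset.subset_empty]
        simpa using hI
      subst hIe
      simp
  | succ n ih =>
      intro hsc hx0 I hI
      have hsc' : TrapSC n m x := fun i j h1 h2 h3 h4 => hsc i j h1 (by omega) h3 h4
      have hx0' : ∀ i ≤ n, x i 0 = 0 := fun i h => hx0 i (by omega)
      by_cases hmem : (n+1) ∈ I
      · -- n+1 ∈ I
        set k := I.card with hkdef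
        have hk1 : 1 ≤ k := Finset.card_pos.mpr ⟨_, hmem⟩
        have hkn : k ≤ n + 1 := by
          have := Finset.card_le_card hI
          simpa using this
        set I' := I.erase (n+1) with hI'def
        have hI'sub : I' ⊆ Icc 1 n := by
          intro a ha
          have h1 := Finset.mem_of_mem_erase ha
          have h2 := Finset.ne_of_mem_erase ha
          have h3 := hI h1
          simp only [mem_Icc] at h3 ⊢
          omega
        have hcard : I'.card = k - 1 := Finset.card_erase_of_mem hmem
        have IH := ih hsc' hx0' I' hI'sub
        rw [hcard] at IH
        -- split B
        have hB : (∑ i ∈ I, (x i (i + m) - x (i - 1) (i - 1 + m)))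
            = (x (n+1) (n+1+m) - x n (n+m))
              + ∑ i ∈ I', (x i (i + m) - x (i - 1) (i - 1 + m)) :=
          (Finset.add_sum_erase I (fun i => x i (i + m) - x (i - 1) (i - 1 + m)) hmem).symm
        -- nu via telescoping
        have hv : x (n+1) (n+1+m) - x n (n+m)
            = (∑ j ∈ Icc 1 (n+1+m), pd x (n+1) j) - (∑ j ∈ Icc 1 (n+m), pd x n j) := by
          rw [tele, tele, hx0 (n+1) le_rfl, hx0 n (by omega)]
          ring
        -- split full row sums
        have hsplit1 : ∑ j ∈ Icc 1 (n+1+m), pd x (n+1) j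
            = (∑ j ∈ Icc 1 k, pd x (n+1) j) + ∑ j ∈ Icc (k+1) (n+1+m), pd x (n+1) j :=
          sum_Icc_split _ 1 k (n+1+m) (by omega) (by omega)
        have hsplit0 : ∑ j ∈ Icc 1 (n+m), pd x n j
            = (∑ j ∈ Icc 1 (k-1), pd x n j) + ∑ j ∈ Icc k (n+m), pd x n j := by
          have h := sum_Icc_split (fun j => pd x n j) 1 (k-1) (n+m) (by omega) (by omega)
          have hkk : k - 1 + 1 = k := by omega
          rw [hkk] at h
          exact h
        -- shift the (n+1)-row tail sum
        have hshift : ∑ j ∈ Icc (k+1) (n+1+m), pd x (n+1) j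
            = ∑ j ∈ Icc k (n+m), pd x (n+1) (j+1) := by
          have : n+1+m = (n+m)+1 := by omega
          rw [this, sum_shift (fun j => pd x (n+1) j) k (n+m) 1]
        -- bound on C difference, termwise
        have hC : (∑ t ∈ Icc 1 m, max 0 (pd x 0 t - pd x (n+1) (t + k)))
              - (∑ t ∈ Icc 1 m, max 0 (pd x 0 t - pd x n (t + (k-1))))
            ≤ ∑ t ∈ Icc 1 m, (pd x n (t + (k-1)) - pd x (n+1) (t + k)) := by
          rw [← Finset.sum_sub_distrib]
          apply Finset.sum_le_sum
          intro t ht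
          simp only [mem_Icc] at ht
          have hbc : pd x n (t + (k-1)) ≥ pd x (n+1) (t + (k-1) + 1) := by
            have h := (hsc (n+1) (t + (k-1)) (by omega) le_rfl (by omega) (by omega)).2 (by omega)
            simpa using h
          have htk : t + (k-1) + 1 = t + k := by omega
          rw [htk] at hbc
          set a := pd x 0 t
          set b := pd x n (t + (k-1))
          set c := pd x (n+1) (t + k)
          have h1 : (0:ℝ) ≤ max 0 (a-b) + (b-c) :=
            add_nonneg (le_max_left _ _) (by linarith)
          have h2 : a - c ≤ max 0 (a-b) + (b-c) := by
            have := le_max_right (0:ℝ) (a-b)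
            linarith
          have h3 : max 0 (a-c) ≤ max 0 (a-b) + (b-c) := max_le h1 h2
          linarith
        -- reindex the C-bound sum and compare with tail-sum difference
        have hnonneg : ∀ j ∈ Icc k (n+m), (0:ℝ) ≤ pd x n j - pd x (n+1) (j+1) := by
          intro j hj
          simp only [mem_Icc] at hj
          have h := (hsc (n+1) j (by omega) le_rfl (by omega) (by omega)).2 (by omega)
          simp only [Nat.add_sub_cancel] at h
          linarith [h]
        have hre : ∑ j ∈ Icc k (m + (k-1)), (pd x n j - pd x (n+1) (j+1))
            = ∑ t ∈ Icc 1 m, (pd x n (t + (k-1)) - pd x (n+1) (t + k)) := by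
          have h := sum_shift (fun j => pd x n j - pd x (n+1) (j+1)) 1 m (k-1)
          rw [show 1 + (k-1) = k by omega] at h
          rw [h]
          apply Finset.sum_congr rfl
          intro t _
          rw [show t + (k-1) + 1 = t + k by omega]
        have hsubset : ∑ j ∈ Icc k (m + (k-1)), (pd x n j - pd x (n+1) (j+1))
            ≤ ∑ j ∈ Icc k (n+m), (pd x n j - pd x (n+1) (j+1)) := by
          apply Finset.sum_le_sum_of_subset_of_nonneg
          · apply Finset.Icc_subset_Icc_right
            omega
          · intro j hj _
            exact hnonneg j hj
        have htail : ∑ j ∈ Icc k (n+m), (pd x n j - pd x (n+1) (j+1))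
            = (∑ j ∈ Icc k (n+m), pd x n j) - ∑ j ∈ Icc k (n+m), pd x (n+1) (j+1) :=
          Finset.sum_sub_distrib _ _
        -- simplify natural subtractions in the goal
        linarith [IH, hB, hv, hsplit1, hsplit0, hshift, hC, hre, hsubset, htail]
      · -- n+1 ∉ I
        have hI' : I ⊆ Icc 1 n := by
          intro a ha
          have h1 := hI ha
          simp only [mem_Icc] at h1 ⊢
          have : a ≠ n + 1 := fun h => hmem (h ▸ ha)
          omega
        have IH := ih hsc' hx0' I hI'
        have hk : I.card ≤ n := by
          have := Finset.card_le_card hI'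
          simpa using this
        have h1 : ∑ j ∈ Icc 1 I.card, pd x n j ≤ ∑ j ∈ Icc 1 I.card, pd x (n+1) j := by
          apply Finset.sum_le_sum
          intro j hj
          simp only [mem_Icc] at hj
          have h := (hsc (n+1) j (by omega) le_rfl (by omega) (by omega)).1 (by simpa using (by omega : j ≤ n + m))
          simpa using h
        have h2 : ∑ t ∈ Icc 1 m, max 0 (pd x 0 t - pd x (n+1) (t + I.card))
            ≤ ∑ t ∈ Icc 1 m, max 0 (pd x 0 t - pd x n (t + I.card)) := by
          apply Finset.sum_le_sum
          intro t ht
          simp only [mem_Icc] at ht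
          have h := (hsc (n+1) (t + I.card) (by omega) le_rfl (by omega) (by omega)).1
            (by simpa using (by omega : t + I.card ≤ n + m))
          simp only [Nat.add_sub_cancel] at h
          apply max_le_max le_rfl
          linarith [h]
        linarith [IH, h1, h2]

/-- For a strip-concave trapezoidal array with `μ^X = 0`, for every `I ⊆ {1,…,n}` the
inequality `λ[1,|I|] − ν(I) − Δ_{|I|} ≥ 0` holds. -/
theorem stmt2 (n m : ℕ) (x : ℕ → ℕ → ℝ) (hsc : TrapSC n m x)
    (hx0 : ∀ i ≤ n, x i 0 = 0)
    (I : Finset ℕ) (hI : I ⊆ Icc 1 n) :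
    (∑ j ∈ Icc 1 I.card, pd x n j) - (∑ i ∈ I, (x i (i + m) - x (i - 1) (i - 1 + m)))
      - (∑ j ∈ Icc 1 (n + m), if I.card < j ∧ j ≤ m + I.card
          then max 0 (pd x 0 (j - I.card) - pd x n j) else 0) ≥ 0 := by
  have hkn : I.card ≤ n := by
    have := Finset.card_le_card hI
    simpa using this
  have hCeq : (∑ j ∈ Icc 1 (n + m), if I.card < j ∧ j ≤ m + I.card
          then max 0 (pd x 0 (j - I.card) - pd x n j) else 0)
      = ∑ t ∈ Icc 1 m, max 0 (pd x 0 t - pd x n (t + I.card)) := by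
    rw [← Finset.sum_filter]
    have hf : (Icc 1 (n+m)).filter (fun j => I.card < j ∧ j ≤ m + I.card)
        = Icc (1 + I.card) (m + I.card) := by
      ext j
      simp only [mem_filter, mem_Icc]
      omega
    rw [hf, sum_shift (fun j => max 0 (pd x 0 (j - I.card) - pd x n j)) 1 m I.card]
    apply Finset.sum_congr rfl
    intro t _
    simp [Nat.add_sub_cancel]
  rw [hCeq]
  exact key m x n hsc hx0 I hI
end

section
/- Let n ≥ 1, let λ ∈ R^n be weakly decreasing with λ_1 + … + λ_n = ν_1 + … + ν_n for a given ν ∈ R^n, and suppose λ_1 + … + λ_{|I|} ≥ Σ_{i∈I} ν_i for every subset I ⊆ {1,…,n}. Then there exists a strip-concave triangular array X of size n with x_{i0} = 0 for all i, ∂x_{nj} = λ_j for j = 1,…,n, and x_{ii} − x_{i−1,i−1} = ν_i for i = 1,…,n. Moreover, if λ and ν are integer-valued then X can be chosen integer-valued. -/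
open Finset

/-- Strip-concavity for a triangular array of size `n` (entries `x i j`, `j ≤ i ≤ n`). -/
def TriSC (n : ℕ) (x : ℕ → ℕ → ℝ) : Prop :=
  ∀ i j, 1 ≤ i → i ≤ n → 1 ≤ j → j ≤ i →
    (j ≤ i - 1 → pd x i j ≥ pd x (i - 1) j) ∧
    (j < i → pd x (i - 1) j ≥ pd x i (j + 1))

/-- The triangular array, indexed by depth `d = n - i` and column `k`. -/
noncomputable def gtRow (n : ℕ) (lam nu : ℕ → ℝ) : ℕ → ℕ → ℝ
  | 0, k => ∑ j ∈ Icc 1 k, lam j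
  | d+1, k => min (gtRow n lam nu d k) (gtRow n lam nu d (k+1) - nu (n - d))

lemma gtRow_zero (n : ℕ) (lam nu : ℕ → ℝ) (k : ℕ) :
    gtRow n lam nu 0 k = ∑ j ∈ Icc 1 k, lam j := rfl

lemma gtRow_succ (n : ℕ) (lam nu : ℕ → ℝ) (d k : ℕ) :
    gtRow n lam nu (d+1) k
      = min (gtRow n lam nu d k) (gtRow n lam nu d (k+1) - nu (n - d)) := rfl

/-- The main invariant, proved by induction on the depth `d`. -/
lemma gtRow_inv (n : ℕ) (lam nu : ℕ → ℝ)
    (hdec : ∀ j, 1 ≤ j → j < n → lam (j + 1) ≤ lam j)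
    (hsum : ∑ j ∈ Icc 1 n, lam j = ∑ i ∈ Icc 1 n, nu i)
    (hmaj : ∀ I : Finset ℕ, I ⊆ Icc 1 n → ∑ i ∈ I, nu i ≤ ∑ j ∈ Icc 1 I.card, lam j) :
    ∀ d, d ≤ n →
      (gtRow n lam nu d 0 = 0) ∧
      (∀ k, k + 2 ≤ n - d →
        gtRow n lam nu d (k+2) + gtRow n lam nu d k ≤ 2 * gtRow n lam nu d (k+1)) ∧
      (gtRow n lam nu d (n - d) = ∑ i ∈ Icc 1 (n - d), nu i) ∧
      (∀ I : Finset ℕ, I ⊆ Icc 1 (n - d) → ∑ i ∈ I, nu i ≤ gtRow n lam nu d I.card) := by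
  intro d
  induction d with
  | zero =>
    intro _
    refine ⟨by simp [gtRow_zero], ?_, by simp [gtRow_zero, hsum], ?_⟩
    · intro k hk
      have h1 : ∑ j ∈ Icc 1 (k+1), lam j = (∑ j ∈ Icc 1 k, lam j) + lam (k+1) :=
        Finset.sum_Icc_succ_top (by omega) lam
      have h2 : ∑ j ∈ Icc 1 (k+2), lam j = (∑ j ∈ Icc 1 (k+1), lam j) + lam (k+2) :=
        Finset.sum_Icc_succ_top (by omega) lam
      have := hdec (k+1) (by omega) (by omega)
      simp only [gtRow_zero]
      rw [h2, h1]; linarith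
    · intro I hI
      simpa [gtRow_zero] using hmaj I (by simpa using hI)
  | succ d ih =>
    intro hd
    obtain ⟨ha, hb, hc, hm⟩ := ih (by omega)
    set m := n - (d+1) with hmdef
    have hnd : n - d = m + 1 := by omega
    have F := gtRow n lam nu d
    -- singleton bound : nu (m+1) ≤ F 1
    have hsingle : nu (m+1) ≤ gtRow n lam nu d 1 := by
      have := hm {m+1} (by rw [hnd]; simp)
      simpa using this
    refine ⟨?_, ?_, ?_, ?_⟩
    · -- (a) first entry 0
      rw [gtRow_succ, hnd, ha]
      have : (0:ℝ) ≤ gtRow n lam nu d 1 - nu (m+1) := by linarith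
      simp [min_eq_left, this]
    · -- (b) concavity
      intro k hk
      have hk' : k + 2 ≤ m := by omega
      rw [gtRow_succ, gtRow_succ, gtRow_succ, hnd]
      have c1 := hb k (by omega)
      have c2 := hb (k+1) (by omega)
      have A1 : min (gtRow n lam nu d (k+2)) (gtRow n lam nu d (k+3) - nu (m+1)) ≤
          gtRow n lam nu d (k+2) := min_le_left _ _
      have A2 : min (gtRow n lam nu d (k+2)) (gtRow n lam nu d (k+3) - nu (m+1)) ≤
          gtRow n lam nu d (k+3) - nu (m+1) := min_le_right _ _
      have B1 : min (gtRow n lam nu d k) (gtRow n lam nu d (k+1) - nu (m+1)) ≤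
          gtRow n lam nu d k := min_le_left _ _
      have B2 : min (gtRow n lam nu d k) (gtRow n lam nu d (k+1) - nu (m+1)) ≤
          gtRow n lam nu d (k+1) - nu (m+1) := min_le_right _ _
      rcases le_total (gtRow n lam nu d (k+1)) (gtRow n lam nu d (k+2) - nu (m+1)) with h | h
      · rw [min_eq_left h]
        have : k + 3 = (k+1) + 2 := by ring
        rw [this] at A2
        linarith
      · rw [min_eq_right h]
        have : k + 3 = (k+1) + 2 := by ring
        rw [this] at A2
        linarith
    · -- (c) diagonal value
      rw [gtRow_succ, hnd]
      have hIcc : (Icc 1 m) ⊆ Icc 1 (m+1) := Finset.Icc_subset_Icc (le_refl _) (by omega)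
      have hcard : (Icc 1 m).card = m := by simp
      have h1 : ∑ i ∈ Icc 1 m, nu i ≤ gtRow n lam nu d m := by
        have := hm (Icc 1 m) (by rw [hnd]; exact hIcc)
        rwa [hcard] at this
      have h2 : ∑ i ∈ Icc 1 (m+1), nu i = (∑ i ∈ Icc 1 m, nu i) + nu (m+1) :=
        Finset.sum_Icc_succ_top (by omega) nu
      rw [hnd] at hc
      rw [hc, h2]
      rw [min_eq_right (by linarith)]
      ring
    · -- (d) majorization
      intro I hI
      rw [gtRow_succ, hnd]
      have hI' : I ⊆ Icc 1 (m+1) := hI.trans (Finset.Icc_subset_Icc (le_refl _) (by omega))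
      have hIm : (m+1) ∉ I := by
        intro hmem
        have := hI hmem
        simp only [Finset.mem_Icc] at this
        omega
      have h1 : ∑ i ∈ I, nu i ≤ gtRow n lam nu d I.card := hm I (by rw [hnd]; exact hI')
      have h2 : ∑ i ∈ insert (m+1) I, nu i ≤ gtRow n lam nu d (I.card + 1) := by
        have := hm (insert (m+1) I) (by
          rw [hnd]
          intro x hx
          rcases Finset.mem_insert.mp hx with h | h
          · simp only [h, Finset.mem_Icc]; omega
          · exact hI' h)
        rwa [Finset.card_insert_of_notMem hIm] at this
      rw [Finset.sum_insert hIm] at h2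
      exact le_min h1 (by linarith)

def IsIntR (x : ℝ) : Prop := ∃ z : ℤ, x = z

lemma IsIntR.min' {a b : ℝ} (ha : IsIntR a) (hb : IsIntR b) : IsIntR (min a b) := by
  obtain ⟨z, rfl⟩ := ha; obtain ⟨w, rfl⟩ := hb
  exact ⟨min z w, by push_cast; rfl⟩

lemma IsIntR.sub' {a b : ℝ} (ha : IsIntR a) (hb : IsIntR b) : IsIntR (a - b) := by
  obtain ⟨z, rfl⟩ := ha; obtain ⟨w, rfl⟩ := hb
  exact ⟨z - w, by push_cast; ring⟩

/-- Triangular existence theorem: if `λ` is weakly decreasing, `|λ| = |ν|` and the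
majorization inequalities hold, then a strip-concave triangular array with the prescribed
boundary data exists; moreover, if `λ, ν` are integral then it may be chosen integral. -/
theorem stmt3 (n : ℕ) (hn : 1 ≤ n) (lam nu : ℕ → ℝ)
    (hdec : ∀ j, 1 ≤ j → j < n → lam (j + 1) ≤ lam j)
    (hsum : ∑ j ∈ Icc 1 n, lam j = ∑ i ∈ Icc 1 n, nu i)
    (hmaj : ∀ I : Finset ℕ, I ⊆ Icc 1 n → ∑ i ∈ I, nu i ≤ ∑ j ∈ Icc 1 I.card, lam j) :
    (∃ x : ℕ → ℕ → ℝ, TriSC n x ∧ (∀ i ≤ n, x i 0 = 0) ∧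
      (∀ j, 1 ≤ j → j ≤ n → pd x n j = lam j) ∧
      (∀ i, 1 ≤ i → i ≤ n → x i i - x (i - 1) (i - 1) = nu i)) ∧
    ((∀ j, 1 ≤ j → j ≤ n → ∃ z : ℤ, lam j = z) →
     (∀ i, 1 ≤ i → i ≤ n → ∃ z : ℤ, nu i = z) →
      ∃ x : ℕ → ℕ → ℝ, TriSC n x ∧ (∀ i ≤ n, x i 0 = 0) ∧
        (∀ j, 1 ≤ j → j ≤ n → pd x n j = lam j) ∧
        (∀ i, 1 ≤ i → i ≤ n → x i i - x (i - 1) (i - 1) = nu i) ∧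
        (∀ i j, j ≤ i → i ≤ n → ∃ z : ℤ, x i j = z)) := by
  have inv := gtRow_inv n lam nu hdec hsum hmaj
  set x : ℕ → ℕ → ℝ := fun i j => gtRow n lam nu (n - i) j with hx
  -- basic facts about x
  have hrow : ∀ i k, 1 ≤ i → i ≤ n →
      x (i-1) k = min (x i k) (x i (k+1) - nu i) := by
    intro i k h1 h2
    have e1 : n - (i-1) = (n - i) + 1 := by omega
    have e2 : n - (n - i) = i := by omega
    simp only [hx, e1, gtRow_succ, e2]
  have hconc : ∀ i k, i ≤ n → k + 2 ≤ i →
      x i (k+2) + x i k ≤ 2 * x i (k+1) := by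
    intro i k h1 h2
    have e2 : n - (n - i) = i := by omega
    have := (inv (n - i) (by omega)).2.1 k (by omega)
    simpa [hx, e2] using this
  have hTri : TriSC n x := by
    intro i j hi1 hin hj1 hji
    obtain ⟨m, rfl⟩ : ∃ m, j = m + 1 := ⟨j - 1, by omega⟩
    constructor
    · intro hj
      have hkey : m + 2 ≤ i := by omega
      have conc := hconc i m hin hkey
      have hr0 := hrow i m hi1 hin
      have hr1 := hrow i (m+1) hi1 hin
      simp only [pd, Nat.add_sub_cancel]
      rw [hr0, hr1]
      have A1 : min (x i (m+1)) (x i (m+2) - nu i) ≤ x i (m+1) := min_le_left _ _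
      have A2 : min (x i (m+1)) (x i (m+2) - nu i) ≤ x i (m+2) - nu i := min_le_right _ _
      rcases le_total (x i m) (x i (m+1) - nu i) with h | h
      · rw [min_eq_left h]; linarith
      · rw [min_eq_right h]; linarith
    · intro hj
      have hkey : m + 2 ≤ i := by omega
      have conc := hconc i m hin hkey
      have hr0 := hrow i m hi1 hin
      have hr1 := hrow i (m+1) hi1 hin
      simp only [pd, Nat.add_sub_cancel]
      rw [hr0, hr1]
      have B1 : min (x i m) (x i (m+1) - nu i) ≤ x i m := min_le_left _ _
      have B2 : min (x i m) (x i (m+1) - nu i) ≤ x i (m+1) - nu i := min_le_right _ _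
      rcases le_total (x i (m+1)) (x i (m+2) - nu i) with h | h
      · rw [min_eq_left h]; linarith
      · rw [min_eq_right h]; linarith
  have hzero : ∀ i ≤ n, x i 0 = 0 := by
    intro i hi
    exact (inv (n - i) (by omega)).1
  have hpd : ∀ j, 1 ≤ j → j ≤ n → pd x n j = lam j := by
    intro j hj1 hjn
    obtain ⟨m, rfl⟩ : ∃ m, j = m + 1 := ⟨j - 1, by omega⟩
    simp only [pd, hx, Nat.sub_self, Nat.add_sub_cancel, gtRow_zero]
    rw [Finset.sum_Icc_succ_top (by omega : 1 ≤ m + 1) lam]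
    ring
  have hdiag : ∀ i, 1 ≤ i → i ≤ n → x i i - x (i-1) (i-1) = nu i := by
    intro i h1 h2
    have e1 : n - (n - i) = i := by omega
    have e2 : n - (n - (i-1)) = i - 1 := by omega
    have c1 := (inv (n - i) (by omega)).2.2.1
    have c2 := (inv (n - (i-1)) (by omega)).2.2.1
    rw [e1] at c1; rw [e2] at c2
    simp only [hx]
    rw [c1, c2]
    obtain ⟨m, rfl⟩ : ∃ m, i = m + 1 := ⟨i - 1, by omega⟩
    simp only [Nat.add_sub_cancel]
    rw [Finset.sum_Icc_succ_top (by omega : 1 ≤ m + 1) nu]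
    ring
  refine ⟨⟨x, hTri, hzero, hpd, hdiag⟩, ?_⟩
  intro hlz hvz
  refine ⟨x, hTri, hzero, hpd, hdiag, ?_⟩
  -- integrality
  have hint : ∀ d k, d + k ≤ n → IsIntR (gtRow n lam nu d k) := by
    intro d
    induction d with
    | zero =>
      intro k hk
      rw [gtRow_zero]
      induction k with
      | zero => exact ⟨0, by simp⟩
      | succ m ihm =>
        rw [Finset.sum_Icc_succ_top (by omega : 1 ≤ m + 1) lam]
        obtain ⟨z, hz⟩ := ihm (by omega)
        obtain ⟨w, hw⟩ := hlz (m+1) (by omega) (by omega)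
        exact ⟨z + w, by rw [hz, hw]; push_cast; ring⟩
    | succ d ihd =>
      intro k hk
      rw [gtRow_succ]
      have h1 := ihd k (by omega)
      have h2 := ihd (k+1) (by omega)
      have h3 : IsIntR (nu (n - d)) := by
        obtain ⟨z, hz⟩ := hvz (n - d) (by omega) (by omega)
        exact ⟨z, hz⟩
      exact h1.min' (h2.sub' h3)
  intro i j hji hin
  exact hint (n - i) j (by omega)
end

section
/- Let n ≥ 1, m ≥ 0, let λ ∈ R^{n+m} and λ̄ ∈ R^m be weakly decreasing, and ν ∈ R^n with |λ| − |λ̄| − |ν| = 0. Then there exists a strip-concave trapezoidal array X of size (n,m) with x_{i0} = 0 for all i, λ^X = λ, λ̄^X = λ̄ and ν^X = ν if and only if for every subset I ⊆ {1,…,n}, λ[1,|I|] − ν(I) − Δ_{|I|} ≥ 0, where Δ_k := Σ_{j=1}^{n+m} max{0, λ̄_{j−k} − λ_j} with the term taken as 0 whenever j−k ≤ 0 or j−k > m. -/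
open Finset

namespace Trap4

/-! ### Helper notation -/

/-- prefix sum `f 1 + ... + f k`. -/
noncomputable def S (f : ℕ → ℝ) (k : ℕ) : ℝ := ∑ j ∈ Ioc 0 k, f j

/-- window sum `∑_{s=1}^m min (f (k+s)) (lamb s)`. -/
noncomputable def W (m : ℕ) (lamb f : ℕ → ℝ) (k : ℕ) : ℝ :=
  ∑ s ∈ Ioc 0 m, min (f (k + s)) (lamb s)

/-- deficit `∑_{s=1}^m max 0 (lamb s - f (k+s))`. -/
noncomputable def DE (m : ℕ) (lamb f : ℕ → ℝ) (k : ℕ) : ℝ :=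
  ∑ s ∈ Ioc 0 m, max 0 (lamb s - f (k + s))

noncomputable def GG (m : ℕ) (lamb f : ℕ → ℝ) (k : ℕ) : ℝ := S f k + W m lamb f k

/-- The deficit-inequality condition. -/
def Cond (n m : ℕ) (lam lamb nu : ℕ → ℝ) : Prop :=
  ∀ I : Finset ℕ, I ⊆ Icc 1 n →
    (∑ i ∈ I, nu i) ≤ S lam I.card - DE m lamb lam I.card

/-- Existence of a strip-concave trapezoidal array with the given boundary data. -/
def Ex (n m : ℕ) (lam lamb nu : ℕ → ℝ) : Prop :=
  ∃ x : ℕ → ℕ → ℝ, TrapSC n m x ∧ (∀ i ≤ n, x i 0 = 0) ∧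
      (∀ j, 1 ≤ j → j ≤ n + m → pd x n j = lam j) ∧
      (∀ j, 1 ≤ j → j ≤ m → pd x 0 j = lamb j) ∧
      (∀ i, 1 ≤ i → i ≤ n → x i (i + m) - x (i - 1) (i - 1 + m) = nu i)

/-! ### small lemmas -/

lemma sum_shift (f : ℕ → ℝ) (a b c : ℕ) :
    ∑ j ∈ Ioc (c + a) (c + b), f j = ∑ j ∈ Ioc a b, f (c + j) := by
  rw [← Finset.map_add_left_Ioc, Finset.sum_map]; rfl

lemma sum_shift1 (f : ℕ → ℝ) (a b : ℕ) :
    ∑ j ∈ Ioc (a + 1) (b + 1), f j = ∑ j ∈ Ioc a b, f (j + 1) := by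
  have := sum_shift f a b 1
  simpa [Nat.add_comm] using this

lemma S_succ (f : ℕ → ℝ) (k : ℕ) : S f (k + 1) = S f k + f (k + 1) := by
  unfold S
  rw [← Finset.sum_Ioc_consecutive _ (Nat.zero_le k) (Nat.le_succ k)]
  simp

lemma max0_add (a c : ℝ) : a + max 0 (c - a) = max a c := by
  rcases le_total a c with h | h
  · rw [max_eq_right (by linarith), max_eq_right h]; ring
  · rw [max_eq_left (by linarith), max_eq_left h]; ring

lemma min_as_max0 (a c : ℝ) : min a c = c - max 0 (c - a) := by
  rcases le_total a c with h | h
  · rw [min_eq_left h, max_eq_right (by linarith)]; ring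
  · rw [min_eq_right h, max_eq_left (by linarith)]; ring

/-- key exchange lemma -/
lemma lemM {x y u c d : ℝ} (hdc : d ≤ c) (h1 : min x d ≤ u) (h2 : y ≤ u) :
    min x d + min y c ≤ min u c + min y d := by
  rcases le_total (min x d) y with h | h
  · have : min x d ≤ min y d := le_min h (min_le_right _ _)
    have : min y c ≤ min u c := min_le_min h2 le_rfl
    linarith [le_min h (min_le_right x d), min_le_min h2 (le_refl c)]
  · have hyd : y ≤ d := le_trans h (min_le_right _ _)
    have h3 : min y d = y := min_eq_left hyd
    have h4 : min y c = y := min_eq_left (le_trans hyd hdc)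
    have h5 : min x d ≤ min u c := le_min h1 (le_trans (min_le_right _ _) hdc)
    linarith

lemma W_eq (m : ℕ) (lamb f : ℕ → ℝ) (k : ℕ) :
    W m lamb f k = (∑ s ∈ Ioc 0 m, lamb s) - DE m lamb f k := by
  unfold W DE
  rw [← Finset.sum_sub_distrib]
  exact Finset.sum_congr rfl fun s _ => min_as_max0 _ _

lemma GG_eq (m : ℕ) (lamb f : ℕ → ℝ) (k : ℕ) :
    GG m lamb f k = S f k - DE m lamb f k + (∑ s ∈ Ioc 0 m, lamb s) := by
  unfold GG; rw [W_eq]; ring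

end Trap4

namespace Trap4

section Forward

variable {n m : ℕ} {lam lamb nu : ℕ → ℝ} {x : ℕ → ℕ → ℝ}

/-- telescoping of a row -/
lemma row_telescope (hx0 : ∀ i ≤ n, x i 0 = 0) (i q : ℕ) (hi : i ≤ n) :
    x i q = S (pd x i) q := by
  induction q with
  | zero => simpa [S] using hx0 i hi
  | succ q ih =>
    rw [S_succ, ← ih]
    unfold pd
    simp

noncomputable def A (m : ℕ) (lamb : ℕ → ℝ) (x : ℕ → ℕ → ℝ) (i k : ℕ) : ℝ :=
  S (pd x i) k - DE m lamb (pd x i) k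

lemma fa (hsc : TrapSC n m x) (i k : ℕ) (hi : i + 1 ≤ n) (hk : k ≤ i) :
    A m lamb x i k ≤ A m lamb x (i + 1) k := by
  unfold A
  have hR : ∀ j, 1 ≤ j → j ≤ i + m → pd x i j ≤ pd x (i + 1) j := by
    intro j hj1 hj2
    have := (hsc (i + 1) j (by omega) hi hj1 (by omega)).1 (by simpa using hj2)
    simpa using this
  have h1 : S (pd x i) k ≤ S (pd x (i+1)) k := by
    unfold S
    refine Finset.sum_le_sum fun j hj => ?_
    rw [Finset.mem_Ioc] at hj
    exact hR j hj.1 (by omega)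
  have h2 : DE m lamb (pd x (i+1)) k ≤ DE m lamb (pd x i) k := by
    unfold DE
    refine Finset.sum_le_sum fun s hs => ?_
    rw [Finset.mem_Ioc] at hs
    have := hR (k + s) (by omega) (by omega)
    exact max_le_max le_rfl (by linarith)
  linarith

lemma fb (hsc : TrapSC n m x) (hx0 : ∀ i ≤ n, x i 0 = 0)
    (hnu : ∀ i, 1 ≤ i → i ≤ n → x i (i + m) - x (i - 1) (i - 1 + m) = nu i)
    (i k : ℕ) (hi : i + 1 ≤ n) (hk : k + 1 ≤ i + 1) :
    A m lamb x i k + nu (i + 1) ≤ A m lamb x (i + 1) (k + 1) := by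
  have hnui : nu (i + 1) =
      S (pd x (i+1)) (i + 1 + m) - S (pd x i) (i + m) := by
    have := hnu (i + 1) (by omega) hi
    rw [← row_telescope hx0 (i+1) (i+1+m) hi,
        ← row_telescope hx0 i (i+m) (by omega)]
    simpa using this.symm
  have hint : ∀ j, 1 ≤ j → j ≤ i + m → pd x (i + 1) (j + 1) ≤ pd x i j := by
    intro j hj1 hj2
    have := (hsc (i + 1) j (by omega) hi hj1 (by omega)).2 (by omega)
    simpa using this
  unfold A
  rw [hnui]
  have e1 : S (pd x (i+1)) (i+1+m) = S (pd x (i+1)) (k+1)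
      + ∑ j ∈ Ioc k (i + m), pd x (i+1) (j+1) := by
    unfold S
    rw [← Finset.sum_Ioc_consecutive _ (Nat.zero_le (k+1)) (show k+1 ≤ i+1+m by omega)]
    congr 1
    have h : Ioc (k+1) (i+1+m) = Ioc (k+1) (i+m+1) := by congr 1; omega
    rw [h, sum_shift1]
  have e2 : S (pd x i) (i+m) = S (pd x i) k + ∑ j ∈ Ioc k (i + m), pd x i j := by
    unfold S
    rw [← Finset.sum_Ioc_consecutive _ (Nat.zero_le k) (show k ≤ i+m by omega)]
  rw [e1, e2]
  have key : ∑ j ∈ Ioc k (i + m), pd x (i+1) (j+1) - ∑ j ∈ Ioc k (i + m), pd x i j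
      + DE m lamb (pd x (i+1)) (k+1) - DE m lamb (pd x i) k ≤ 0 := by
    have hsplit : ∀ (g : ℕ → ℝ), ∑ j ∈ Ioc k (i+m), g j
        = ∑ j ∈ Ioc k (k+m), g j + ∑ j ∈ Ioc (k+m) (i+m), g j := by
      intro g
      rw [Finset.sum_Ioc_consecutive _ (by omega) (by omega : k + m ≤ i + m)]
    rw [hsplit, hsplit]
    have hDE1 : DE m lamb (pd x (i+1)) (k+1) = ∑ j ∈ Ioc k (k+m),
        max 0 (lamb (j - k) - pd x (i+1) (j+1)) := by
      unfold DE
      rw [show Ioc k (k+m) = Ioc (k+0) (k+m) by norm_num, sum_shift]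
      refine Finset.sum_congr rfl fun s hs => ?_
      have e1 : k + s - k = s := by omega
      have e2 : k + s + 1 = k + 1 + s := by omega
      rw [e1, e2]
    have hDE2 : DE m lamb (pd x i) k = ∑ j ∈ Ioc k (k+m),
        max 0 (lamb (j - k) - pd x i j) := by
      unfold DE
      rw [show Ioc k (k+m) = Ioc (k+0) (k+m) by norm_num, sum_shift]
      refine Finset.sum_congr rfl fun s hs => ?_
      have e1 : k + s - k = s := by omega
      rw [e1]
    rw [hDE1, hDE2]
    have t1 : ∑ j ∈ Ioc k (k+m), pd x (i+1) (j+1)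
        - ∑ j ∈ Ioc k (k+m), pd x i j
        + ∑ j ∈ Ioc k (k+m), max 0 (lamb (j - k) - pd x (i+1) (j+1))
        - ∑ j ∈ Ioc k (k+m), max 0 (lamb (j - k) - pd x i j) ≤ 0 := by
      rw [← Finset.sum_sub_distrib, ← Finset.sum_add_distrib, ← Finset.sum_sub_distrib]
      refine Finset.sum_nonpos fun j hj => ?_
      rw [Finset.mem_Ioc] at hj
      have h1 : pd x (i+1) (j+1) ≤ pd x i j := hint j (by omega) (by omega)
      have m1 := max0_add (pd x (i+1) (j+1)) (lamb (j-k))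
      have m2 := max0_add (pd x i j) (lamb (j-k))
      have h2 : max (pd x (i+1) (j+1)) (lamb (j-k)) ≤ max (pd x i j) (lamb (j-k)) :=
        max_le_max h1 le_rfl
      linarith
    have t2 : ∑ j ∈ Ioc (k+m) (i+m), pd x (i+1) (j+1)
        - ∑ j ∈ Ioc (k+m) (i+m), pd x i j ≤ 0 := by
      rw [← Finset.sum_sub_distrib]
      refine Finset.sum_nonpos fun j hj => ?_
      rw [Finset.mem_Ioc] at hj
      have := hint j (by omega) (by omega)
      linarith
    linarith
  linarith

lemma forward_main (hsc : TrapSC n m x) (hx0 : ∀ i ≤ n, x i 0 = 0)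
    (hbot : ∀ j, 1 ≤ j → j ≤ n + m → pd x n j = lam j)
    (htop : ∀ j, 1 ≤ j → j ≤ m → pd x 0 j = lamb j)
    (hnu : ∀ i, 1 ≤ i → i ≤ n → x i (i + m) - x (i - 1) (i - 1 + m) = nu i) :
    Cond n m lam lamb nu := by
  have main : ∀ i ≤ n, ∀ I : Finset ℕ, I ⊆ Icc 1 i →
      (∑ t ∈ I, nu t) ≤ A m lamb x i I.card := by
    intro i
    induction i with
    | zero =>
      intro _ I hI
      have hIe : I = ∅ := by
        have : I ⊆ ∅ := by simpa using hI
        exact Finset.subset_empty.mp this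
      subst hIe
      simp only [Finset.sum_empty, Finset.card_empty]
      unfold A S DE
      have h0 : ∑ s ∈ Ioc 0 m, max 0 (lamb s - pd x 0 (0 + s)) = 0 := by
        refine Finset.sum_eq_zero fun s hs => ?_
        rw [Finset.mem_Ioc] at hs
        rw [zero_add, htop s hs.1 hs.2]
        simp
      rw [h0]
      simp
    | succ i ih =>
      intro hi1 I hI
      by_cases hmem : (i + 1) ∈ I
      · have hI' : I.erase (i+1) ⊆ Icc 1 i := by
          intro t ht
          rw [Finset.mem_erase] at ht
          have := hI ht.2
          rw [Finset.mem_Icc] at this ⊢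
          omega
        have hcard : I.card = (I.erase (i+1)).card + 1 := by
          rw [Finset.card_erase_of_mem hmem]
          have : 1 ≤ I.card := Finset.card_pos.mpr ⟨_, hmem⟩
          omega
        have hsum : ∑ t ∈ I, nu t = (∑ t ∈ I.erase (i+1), nu t) + nu (i+1) := by
          rw [Finset.sum_erase_add _ _ hmem]
        rw [hsum, hcard]
        have h1 := ih (by omega) _ hI'
        have hkle : (I.erase (i+1)).card + 1 ≤ i + 1 := by
          have := Finset.card_le_card hI'
          simp only [Nat.card_Icc] at this
          omega
        have h2 := fb (lamb := lamb) hsc hx0 hnu i (I.erase (i+1)).card hi1 hkle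
        linarith
      · have hI' : I ⊆ Icc 1 i := by
          intro t ht
          have h := hI ht
          rw [Finset.mem_Icc] at h ⊢
          have : t ≠ i + 1 := fun he => hmem (he ▸ ht)
          omega
        have h1 := ih (by omega) _ hI'
        have hkle : I.card ≤ i := by
          have := Finset.card_le_card hI'
          simpa using this
        have h2 := fa (lamb := lamb) hsc i I.card hi1 hkle
        linarith
  intro I hI
  have h := main n le_rfl I hI
  have hcard : I.card ≤ n := by
    have := Finset.card_le_card hI
    simpa using this
  have hA : A m lamb x n I.card = S lam I.card - DE m lamb lam I.card := by
    unfold A S DE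
    congr 1
    · refine Finset.sum_congr rfl fun j hj => ?_
      rw [Finset.mem_Ioc] at hj
      exact hbot j hj.1 (by omega)
    · refine Finset.sum_congr rfl fun s hs => ?_
      rw [Finset.mem_Ioc] at hs
      rw [hbot (I.card + s) (by omega) (by omega)]
  rw [← hA]
  exact h

end Forward

end Trap4

namespace Trap4

section Converse

variable {m : ℕ} {lam lamb : ℕ → ℝ}

/-- monotonicity from step condition -/
lemma anti_of_step {f : ℕ → ℝ} {M : ℕ} (h : ∀ j, 1 ≤ j → j < M → f (j+1) ≤ f j) :
    ∀ a b, 1 ≤ a → a ≤ b → b ≤ M → f b ≤ f a := by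
  intro a b ha hab hbM
  induction b with
  | zero => omega
  | succ b ih =>
    rcases Nat.eq_or_lt_of_le hab with he | hl
    · rw [he]
    · have h1 := ih (by omega) (by omega)
      have h2 := h b (by omega) (by omega)
      linarith

/-- the floor -/
noncomputable def flo (m : ℕ) (lam lamb : ℕ → ℝ) (j : ℕ) : ℝ :=
  if j ≤ m then max (lam (j+1)) (lamb j) else lam (j+1)

noncomputable def capr (m : ℕ) (lam lamb : ℕ → ℝ) (r j : ℕ) : ℝ :=
  if j ≤ r then lam j else if j ≤ r + m then lamb (j - r) else flo m lam lamb j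

noncomputable def mur (m : ℕ) (lam lamb : ℕ → ℝ) (r j : ℕ) : ℝ :=
  max (flo m lam lamb j) (min (lam j) (capr m lam lamb r j))

section MuFacts

variable {n : ℕ}
variable (hl : ∀ j, 1 ≤ j → j < n+1+m → lam (j+1) ≤ lam j)
variable (hlb : ∀ j, 1 ≤ j → j < m → lamb (j+1) ≤ lamb j)
variable (hbl : ∀ s, 1 ≤ s → s ≤ m → lamb s ≤ lam s)

include hl hbl in
lemma flo_le_lam {j : ℕ} (h1 : 1 ≤ j) (h2 : j ≤ n + m) : flo m lam lamb j ≤ lam j := by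
  unfold flo
  split_ifs with h
  · exact max_le (hl j h1 (by omega)) (hbl j h1 h)
  · exact hl j h1 (by omega)

lemma lam_le_flo {j : ℕ} : lam (j+1) ≤ flo m lam lamb j := by
  unfold flo; split_ifs with h
  · exact le_max_left _ _
  · exact le_refl _

include hl hbl in
lemma mu_le_lam {r j : ℕ} (h1 : 1 ≤ j) (h2 : j ≤ n + m) : mur m lam lamb r j ≤ lam j :=
  max_le (flo_le_lam hl hbl h1 h2) (min_le_left _ _)

lemma lam_le_mu {r j : ℕ} : lam (j+1) ≤ mur m lam lamb r j :=
  le_trans lam_le_flo (le_max_left _ _)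

include hl hbl in
lemma mu_prefix {r j : ℕ} (h1 : 1 ≤ j) (hjr : j ≤ r) (hrn : r ≤ n) :
    mur m lam lamb r j = lam j := by
  unfold mur capr
  rw [if_pos hjr, min_self]
  exact max_eq_right (flo_le_lam hl hbl h1 (by omega))

include hl hlb hbl in
lemma mu_window {r j : ℕ} (hrj : r < j) (hjm : j ≤ r + m) (hjn : j ≤ n + m) :
    mur m lam lamb r j
      = lam (j+1) + min (lam j) (lamb (j - r)) - min (lam (j+1)) (lamb (j - r)) := by
  have h1 : 1 ≤ j := by omega
  unfold mur capr
  rw [if_neg (by omega), if_pos hjm]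
  have hstep : lam (j+1) ≤ lam j := hl j h1 (by omega)
  have hmaxflo : max (flo m lam lamb j) (min (lam j) (lamb (j - r)))
      = max (lam (j+1)) (min (lam j) (lamb (j - r))) := by
    unfold flo
    split_ifs with h
    · rw [max_assoc]
      congr 1
      exact max_eq_right (le_min (hbl j h1 h)
        (anti_of_step hlb (j - r) j (by omega) (by omega) h))
    · rfl
  rw [hmaxflo]
  have hminmin : min (lam (j+1)) (min (lam j) (lamb (j - r)))
      = min (lam (j+1)) (lamb (j - r)) := by
    rw [← min_assoc, min_eq_left hstep]
  have := max_add_min (lam (j+1)) (min (lam j) (lamb (j - r)))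
  linarith [hminmin, this]

include hl hbl in
lemma mu_tail {r j : ℕ} (hrj : r + m < j) (h1 : 1 ≤ j) (hjn : j ≤ n + m) :
    mur m lam lamb r j = lam (j+1) := by
  unfold mur capr
  rw [if_neg (by omega), if_neg (by omega)]
  rw [min_eq_right (flo_le_lam hl hbl h1 hjn), max_self]
  unfold flo
  rw [if_neg (by omega)]

end MuFacts

end Converse

end Trap4

namespace Trap4

section Converse2

variable {m n : ℕ} {lam lamb : ℕ → ℝ}
variable (hl : ∀ j, 1 ≤ j → j < n+1+m → lam (j+1) ≤ lam j)
variable (hlb : ∀ j, 1 ≤ j → j < m → lamb (j+1) ≤ lamb j)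
variable (hbl : ∀ s, 1 ≤ s → s ≤ m → lamb s ≤ lam s)

lemma sum_add_sub (s : Finset ℕ) (f g h : ℕ → ℝ) :
    ∑ u ∈ s, (f u + g u - h u) = ∑ u ∈ s, f u + ∑ u ∈ s, g u - ∑ u ∈ s, h u := by
  simp only [Finset.sum_sub_distrib, Finset.sum_add_distrib]

lemma sum_sub_sub (s : Finset ℕ) (g h : ℕ → ℝ) :
    ∑ u ∈ s, (g u - h u) = ∑ u ∈ s, g u - ∑ u ∈ s, h u := by
  simp only [Finset.sum_sub_distrib]

include hl hlb hbl in
lemma musum {r : ℕ} (hr : r ≤ n) :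
    ∑ j ∈ Ioc 0 (n+m), mur m lam lamb r j
      = S lam (n+1+m) - (GG m lamb lam (r+1) - GG m lamb lam r) := by
  have hsplit : ∑ j ∈ Ioc 0 (n+m), mur m lam lamb r j
      = ∑ j ∈ Ioc 0 r, mur m lam lamb r j + ∑ j ∈ Ioc r (r+m), mur m lam lamb r j
        + ∑ j ∈ Ioc (r+m) (n+m), mur m lam lamb r j := by
    rw [Finset.sum_Ioc_consecutive _ (by omega : (0:ℕ) ≤ r) (by omega : r ≤ r + m),
        Finset.sum_Ioc_consecutive _ (by omega : (0:ℕ) ≤ r + m) (by omega : r + m ≤ n + m)]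
  have s1 : ∑ j ∈ Ioc 0 r, mur m lam lamb r j = S lam r := by
    refine Finset.sum_congr rfl fun j hj => ?_
    rw [Finset.mem_Ioc] at hj
    exact mu_prefix hl hbl hj.1 hj.2 hr
  have s2 : ∑ j ∈ Ioc r (r+m), mur m lam lamb r j
      = ∑ s ∈ Ioc 0 m, lam (r+s+1) + ∑ s ∈ Ioc 0 m, min (lam (r+s)) (lamb s)
          - ∑ s ∈ Ioc 0 m, min (lam (r+s+1)) (lamb s) := by
    rw [show Ioc r (r+m) = Ioc (r+0) (r+m) by norm_num, sum_shift, ← sum_add_sub]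
    refine Finset.sum_congr rfl fun s hs => ?_
    rw [Finset.mem_Ioc] at hs
    rw [mu_window hl hlb hbl (by omega) (by omega) (by omega)]
    rw [show r + s - r = s by omega]
  have s3 : ∑ j ∈ Ioc (r+m) (n+m), mur m lam lamb r j
      = ∑ j ∈ Ioc (r+m+1) (n+m+1), lam j := by
    rw [sum_shift1]
    refine Finset.sum_congr rfl fun j hj => ?_
    rw [Finset.mem_Ioc] at hj
    exact mu_tail hl hbl (by omega) (by omega) (by omega)
  have hGG : GG m lamb lam (r+1) - GG m lamb lam r
      = lam (r+1) + (∑ s ∈ Ioc 0 m, min (lam (r+s+1)) (lamb s)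
        - ∑ s ∈ Ioc 0 m, min (lam (r+s)) (lamb s)) := by
    unfold GG W
    rw [S_succ]
    have e : ∑ s ∈ Ioc 0 m, min (lam (r+1+s)) (lamb s)
        = ∑ s ∈ Ioc 0 m, min (lam (r+s+1)) (lamb s) := by
      refine Finset.sum_congr rfl fun s hs => ?_
      rw [show r + 1 + s = r + s + 1 by omega]
    rw [e]
    ring
  have hlamid : S lam r + ∑ s ∈ Ioc 0 m, lam (r+s+1) + ∑ j ∈ Ioc (r+m+1) (n+m+1), lam j
      = S lam (n+1+m) - lam (r+1) := by
    have e1 : ∑ s ∈ Ioc 0 m, lam (r+s+1) = ∑ j ∈ Ioc (r+1) (r+1+m), lam j := by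
      rw [show Ioc (r+1) (r+1+m) = Ioc ((r+1)+0) ((r+1)+m) by norm_num, sum_shift]
      refine Finset.sum_congr rfl fun s hs => ?_
      rw [show r + 1 + s = r + s + 1 by omega]
    have e2 : S lam (n+1+m) = S lam r + lam (r+1) + ∑ j ∈ Ioc (r+1) (r+1+m), lam j
        + ∑ j ∈ Ioc (r+1+m) (n+1+m), lam j := by
      unfold S
      rw [← Finset.sum_Ioc_consecutive lam (by omega : (0:ℕ) ≤ r+1+m)
            (by omega : r+1+m ≤ n+1+m),
          ← Finset.sum_Ioc_consecutive lam (by omega : (0:ℕ) ≤ r+1)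
            (by omega : r+1 ≤ r+1+m),
          ← Finset.sum_Ioc_consecutive lam (by omega : (0:ℕ) ≤ r)
            (by omega : r ≤ r+1)]
      have h1 : Ioc r (r+1) = {r+1} := by
        rw [← Finset.Icc_add_one_left_eq_Ioc, Finset.Icc_self]
      rw [h1, Finset.sum_singleton]
    have e3 : Ioc (r+m+1) (n+m+1) = Ioc (r+1+m) (n+1+m) := by
      congr 1 <;> omega
    rw [e1, e2, e3]
    ring
  rw [hsplit, s1, s2, s3, hGG]
  linarith [hlamid]

include hl hlb hbl in
lemma K1a {r k : ℕ} (hr : r ≤ n) (hk : k ≤ r) :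
    GG m lamb lam k ≤ GG m lamb (mur m lam lamb r) k := by
  unfold GG
  have hpre : S (mur m lam lamb r) k = S lam k := by
    unfold S
    refine Finset.sum_congr rfl fun j hj => ?_
    rw [Finset.mem_Ioc] at hj
    exact mu_prefix hl hbl hj.1 (by omega) hr
  have hwin : W m lamb lam k ≤ W m lamb (mur m lam lamb r) k := by
    unfold W
    refine Finset.sum_le_sum fun s hs => ?_
    rw [Finset.mem_Ioc] at hs
    have hmu : min (lam (k+s)) (lamb s) ≤ mur m lam lamb r (k+s) := by
      by_cases hjr : k + s ≤ r
      · rw [mu_prefix hl hbl (by omega) hjr hr]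
        exact min_le_left _ _
      · have hcap : capr m lam lamb r (k+s) = lamb (k+s-r) := by
          unfold capr
          rw [if_neg hjr, if_pos (by omega)]
        have h1 : min (lam (k+s)) (lamb s) ≤ min (lam (k+s)) (lamb (k+s-r)) := by
          refine min_le_min le_rfl ?_
          exact anti_of_step hlb (k+s-r) s (by omega) (by omega) hs.2
        calc min (lam (k+s)) (lamb s) ≤ min (lam (k+s)) (capr m lam lamb r (k+s)) := by
              rw [hcap]; exact h1
          _ ≤ mur m lam lamb r (k+s) := le_max_right _ _
    exact le_min hmu (min_le_right _ _)
  rw [hpre]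
  linarith

include hl hlb hbl in
lemma K1b {r k : ℕ} (hrk : r < k) (hk : k ≤ n) :
    GG m lamb lam (k+1) - (GG m lamb lam (r+1) - GG m lamb lam r)
      ≤ GG m lamb (mur m lam lamb r) k := by
  set w := min (k - r) m with hw
  have hww : w ≤ k - r ∧ w ≤ m := ⟨min_le_left _ _, min_le_right _ _⟩
  have hpre : S (mur m lam lamb r) k
      = S lam r + (∑ u ∈ Ioc 0 w, lam (r+u+1)
          + ∑ u ∈ Ioc 0 w, min (lam (r+u)) (lamb u)
          - ∑ u ∈ Ioc 0 w, min (lam (r+u+1)) (lamb u))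
        + ∑ j ∈ Ioc (r+w+1) (k+1), lam j := by
    have hsplit : S (mur m lam lamb r) k
        = ∑ j ∈ Ioc 0 r, mur m lam lamb r j + ∑ j ∈ Ioc r (r+w), mur m lam lamb r j
          + ∑ j ∈ Ioc (r+w) k, mur m lam lamb r j := by
      unfold S
      rw [Finset.sum_Ioc_consecutive _ (by omega : (0:ℕ) ≤ r) (by omega : r ≤ r+w),
          Finset.sum_Ioc_consecutive _ (by omega : (0:ℕ) ≤ r+w) (by omega : r+w ≤ k)]
    have s1 : ∑ j ∈ Ioc 0 r, mur m lam lamb r j = S lam r := by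
      refine Finset.sum_congr rfl fun j hj => ?_
      rw [Finset.mem_Ioc] at hj
      exact mu_prefix hl hbl hj.1 hj.2 (by omega)
    have s2 : ∑ j ∈ Ioc r (r+w), mur m lam lamb r j
        = ∑ u ∈ Ioc 0 w, lam (r+u+1)
          + ∑ u ∈ Ioc 0 w, min (lam (r+u)) (lamb u)
          - ∑ u ∈ Ioc 0 w, min (lam (r+u+1)) (lamb u) := by
      rw [show Ioc r (r+w) = Ioc (r+0) (r+w) by norm_num, sum_shift, ← sum_add_sub]
      refine Finset.sum_congr rfl fun u hu => ?_
      rw [Finset.mem_Ioc] at hu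
      rw [mu_window hl hlb hbl (by omega) (by omega) (by omega)]
      rw [show r + u - r = u by omega]
    have s3 : ∑ j ∈ Ioc (r+w) k, mur m lam lamb r j
        = ∑ j ∈ Ioc (r+w+1) (k+1), lam j := by
      rw [sum_shift1]
      refine Finset.sum_congr rfl fun j hj => ?_
      rw [Finset.mem_Ioc] at hj
      refine mu_tail hl hbl (by omega) (by omega) (by omega)
    rw [hsplit, s1, s2, s3]
  have hwin : ∑ s ∈ Ioc 0 m, min (lam (k+1+s)) (lamb s)
      + (∑ u ∈ Ioc w m, min (lam (r+u)) (lamb u)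
         - ∑ u ∈ Ioc w m, min (lam (r+u+1)) (lamb u))
      ≤ W m lamb (mur m lam lamb r) k := by
    have hq : ∀ s, 1 ≤ s → s + (k - r) ≤ m →
        min (lam (k+1+s)) (lamb s)
          + (min (lam (r+((k-r)+s))) (lamb ((k-r)+s))
            - min (lam (r+((k-r)+s)+1)) (lamb ((k-r)+s)))
          ≤ min (mur m lam lamb r (k+s)) (lamb s) := by
      intro s hs1 hsm
      have hkr : r + ((k-r)+s) = k + s := by omega
      have hkr1 : r + ((k-r)+s) + 1 = k + 1 + s := by omega
      rw [hkr1, hkr]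
      have hdc : lamb ((k-r)+s) ≤ lamb s :=
        anti_of_step hlb s ((k-r)+s) hs1 (by omega) (by omega)
      have h1 : min (lam (k+s)) (lamb ((k-r)+s)) ≤ mur m lam lamb r (k+s) := by
        have hcap : capr m lam lamb r (k+s) = lamb (k+s-r) := by
          unfold capr
          rw [if_neg (by omega), if_pos (by omega)]
        have h2 : min (lam (k+s)) (lamb ((k-r)+s))
            ≤ min (lam (k+s)) (capr m lam lamb r (k+s)) := by
          rw [hcap, show k + s - r = (k-r)+s by omega]
        exact le_trans h2 (le_max_right _ _)
      have h2 : lam ((k+s)+1) ≤ mur m lam lamb r (k+s) := lam_le_mu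
      rw [show (k+s)+1 = k+1+s by omega] at h2
      have := lemM hdc h1 h2
      linarith
    unfold W
    by_cases hkm : k - r ≤ m
    · have hmw : w = k - r := by omega
      have esplit : ∑ s ∈ Ioc 0 m, min (lam (k+1+s)) (lamb s)
          = ∑ s ∈ Ioc 0 (m - (k-r)), min (lam (k+1+s)) (lamb s)
            + ∑ s ∈ Ioc (m - (k-r)) m, min (lam (k+1+s)) (lamb s) := by
        rw [Finset.sum_Ioc_consecutive _ (by omega) (by omega : m - (k-r) ≤ m)]
      have eu : ∑ u ∈ Ioc w m, (min (lam (r+u)) (lamb u) - min (lam (r+u+1)) (lamb u))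
          = ∑ s ∈ Ioc 0 (m - (k-r)), (min (lam (r+((k-r)+s))) (lamb ((k-r)+s))
              - min (lam (r+((k-r)+s)+1)) (lamb ((k-r)+s))) := by
        rw [hmw, show Ioc (k-r) m = Ioc ((k-r)+0) ((k-r)+(m-(k-r))) by congr 1; omega,
            sum_shift]
      have ewin : ∑ s ∈ Ioc 0 m, min (mur m lam lamb r (k+s)) (lamb s)
          = ∑ s ∈ Ioc 0 (m - (k-r)), min (mur m lam lamb r (k+s)) (lamb s)
            + ∑ s ∈ Ioc (m - (k-r)) m, min (mur m lam lamb r (k+s)) (lamb s) := by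
        rw [Finset.sum_Ioc_consecutive _ (by omega) (by omega : m - (k-r) ≤ m)]
      rw [esplit, ← sum_sub_sub, eu, ewin]
      have hmatched : ∑ s ∈ Ioc 0 (m - (k-r)), min (lam (k+1+s)) (lamb s)
          + ∑ s ∈ Ioc 0 (m - (k-r)), (min (lam (r+((k-r)+s))) (lamb ((k-r)+s))
              - min (lam (r+((k-r)+s)+1)) (lamb ((k-r)+s)))
          ≤ ∑ s ∈ Ioc 0 (m - (k-r)), min (mur m lam lamb r (k+s)) (lamb s) := by
        rw [← Finset.sum_add_distrib]
        refine Finset.sum_le_sum fun s hs => ?_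
        rw [Finset.mem_Ioc] at hs
        exact hq s hs.1 (by omega)
      have hun : ∑ s ∈ Ioc (m - (k-r)) m, min (lam (k+1+s)) (lamb s)
          ≤ ∑ s ∈ Ioc (m - (k-r)) m, min (mur m lam lamb r (k+s)) (lamb s) := by
        refine Finset.sum_le_sum fun s hs => ?_
        rw [Finset.mem_Ioc] at hs
        refine le_min (le_trans (min_le_left _ _) ?_) (min_le_right _ _)
        rw [show k+1+s = (k+s)+1 by omega]
        exact lam_le_mu
      linarith
    · have hmw : w = m := by omega
      have h0 : Ioc w m = (∅ : Finset ℕ) := by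
        rw [hmw]; simp
      rw [h0]
      simp only [Finset.sum_empty]
      have hper : ∑ s ∈ Ioc 0 m, min (lam (k+1+s)) (lamb s)
          ≤ ∑ s ∈ Ioc 0 m, min (mur m lam lamb r (k+s)) (lamb s) := by
        refine Finset.sum_le_sum fun s hs => ?_
        rw [Finset.mem_Ioc] at hs
        refine le_min (le_trans (min_le_left _ _) ?_) (min_le_right _ _)
        rw [show k+1+s = (k+s)+1 by omega]
        exact lam_le_mu
      linarith
  have hGGd : GG m lamb lam (r+1) - GG m lamb lam r
      = lam (r+1) - (∑ u ∈ Ioc 0 m, min (lam (r+u)) (lamb u)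
          - ∑ u ∈ Ioc 0 m, min (lam (r+u+1)) (lamb u)) := by
    unfold GG W
    rw [S_succ]
    have e : ∑ s ∈ Ioc 0 m, min (lam (r+1+s)) (lamb s)
        = ∑ s ∈ Ioc 0 m, min (lam (r+s+1)) (lamb s) := by
      refine Finset.sum_congr rfl fun s hs => ?_
      rw [show r + 1 + s = r + s + 1 by omega]
    rw [e]
    ring
  have ha1 : ∑ u ∈ Ioc 0 m, min (lam (r+u)) (lamb u)
      = ∑ u ∈ Ioc 0 w, min (lam (r+u)) (lamb u)
        + ∑ u ∈ Ioc w m, min (lam (r+u)) (lamb u) := by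
    rw [Finset.sum_Ioc_consecutive _ (by omega) (by omega : w ≤ m)]
  have ha2 : ∑ u ∈ Ioc 0 m, min (lam (r+u+1)) (lamb u)
      = ∑ u ∈ Ioc 0 w, min (lam (r+u+1)) (lamb u)
        + ∑ u ∈ Ioc w m, min (lam (r+u+1)) (lamb u) := by
    rw [Finset.sum_Ioc_consecutive _ (by omega) (by omega : w ≤ m)]
  have hlamid : S lam r + ∑ u ∈ Ioc 0 w, lam (r+u+1) + ∑ j ∈ Ioc (r+w+1) (k+1), lam j
      = S lam (k+1) - lam (r+1) := by
    have e1 : ∑ u ∈ Ioc 0 w, lam (r+u+1) = ∑ j ∈ Ioc (r+1) (r+1+w), lam j := by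
      rw [show Ioc (r+1) (r+1+w) = Ioc ((r+1)+0) ((r+1)+w) by norm_num, sum_shift]
      refine Finset.sum_congr rfl fun u hu => ?_
      rw [show r + 1 + u = r + u + 1 by omega]
    have e2 : S lam (k+1) = S lam r + lam (r+1) + ∑ j ∈ Ioc (r+1) (r+1+w), lam j
        + ∑ j ∈ Ioc (r+1+w) (k+1), lam j := by
      unfold S
      rw [← Finset.sum_Ioc_consecutive lam (by omega : (0:ℕ) ≤ r+1+w) (by omega : r+1+w ≤ k+1),
          ← Finset.sum_Ioc_consecutive lam (by omega : (0:ℕ) ≤ r+1) (by omega : r+1 ≤ r+1+w),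
          ← Finset.sum_Ioc_consecutive lam (by omega : (0:ℕ) ≤ r) (by omega : r ≤ r+1)]
      have h1 : Ioc r (r+1) = {r+1} := by
        rw [← Finset.Icc_add_one_left_eq_Ioc, Finset.Icc_self]
      rw [h1, Finset.sum_singleton]
    have e3 : Ioc (r+w+1) (k+1) = Ioc (r+1+w) (k+1) := by
      congr 1; omega
    rw [e1, e3, e2]
    ring
  have hGGmu : GG m lamb (mur m lam lamb r) k
      = S (mur m lam lamb r) k + W m lamb (mur m lam lamb r) k := rfl
  have hGGk1 : GG m lamb lam (k+1)
      = S lam (k+1) + ∑ s ∈ Ioc 0 m, min (lam (k+1+s)) (lamb s) := rfl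
  rw [hGGmu, hGGk1, hpre, hGGd]
  linarith [hwin, hlamid, ha1, ha2]

end Converse2

end Trap4

namespace Trap4

section Converse3

variable {m n : ℕ} {lam lamb nu : ℕ → ℝ}

lemma minc {x y c c' : ℝ} (hxy : y ≤ x) (hcc : c ≤ c') :
    min x c - min y c ≤ min x c' - min y c' := by
  simp only [min_def]
  split_ifs <;> linarith

lemma minc2 {x y c : ℝ} (hxy : y ≤ x) : min x c - min y c ≤ x - y := by
  simp only [min_def]
  split_ifs <;> linarith

variable (hl : ∀ j, 1 ≤ j → j < n+1+m → lam (j+1) ≤ lam j)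
variable (hlb : ∀ j, 1 ≤ j → j < m → lamb (j+1) ≤ lamb j)

include hl in
lemma lam_anti : ∀ a b, 1 ≤ a → a ≤ b → b ≤ n+1+m → lam b ≤ lam a :=
  anti_of_step hl

/-- expansion of consecutive `GG` difference -/
lemma GGdiff (t : ℕ) : GG m lamb lam (t+1) - GG m lamb lam t
    = lam (t+1) - (∑ s ∈ Ioc 0 m, min (lam (t+s)) (lamb s)
        - ∑ s ∈ Ioc 0 m, min (lam (t+s+1)) (lamb s)) := by
  unfold GG W
  rw [S_succ]
  have e : ∑ s ∈ Ioc 0 m, min (lam (t+1+s)) (lamb s)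
      = ∑ s ∈ Ioc 0 m, min (lam (t+s+1)) (lamb s) := by
    refine Finset.sum_congr rfl fun s hs => ?_
    rw [show t + 1 + s = t + s + 1 by omega]
  rw [e]
  ring

include hl hlb in
lemma Dmono {r : ℕ} (hr : r + 1 ≤ n) :
    GG m lamb lam (r+2) - GG m lamb lam (r+1)
      ≤ GG m lamb lam (r+1) - GG m lamb lam r := by
  rw [GGdiff, GGdiff]
  -- a_s := min(lam (r+s)) c − min(lam(r+s+1)) c ; b_s same at r+1
  set a : ℕ → ℝ := fun s => min (lam (r+s)) (lamb s) - min (lam (r+s+1)) (lamb s) with ha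
  set b : ℕ → ℝ := fun s => min (lam (r+1+s)) (lamb s) - min (lam (r+1+s+1)) (lamb s) with hb
  have key : ∑ s ∈ Ioc 0 m, a s ≤ lam (r+1) - lam (r+2) + ∑ s ∈ Ioc 0 m, b s := by
    rcases Nat.eq_zero_or_pos m with hm | hm
    · subst hm
      simp only [show Ioc 0 0 = (∅ : Finset ℕ) by simp, Finset.sum_empty]
      have := hl (r+1) (by omega) (by omega)
      linarith
    · have e1 : ∑ s ∈ Ioc 0 m, a s = a 1 + ∑ s ∈ Ioc 1 m, a s := by
        rw [← Finset.sum_Ioc_consecutive _ (by omega : (0:ℕ) ≤ 1) (by omega : 1 ≤ m)]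
        have : Ioc (0:ℕ) 1 = {1} := by
          rw [← Finset.Icc_add_one_left_eq_Ioc, zero_add, Finset.Icc_self]
        rw [this, Finset.sum_singleton]
      have e2 : ∑ s ∈ Ioc 1 m, a s = ∑ t ∈ Ioc 0 (m-1), a (1+t) := by
        rw [show Ioc 1 m = Ioc (1+0) (1+(m-1)) by congr 1; omega, sum_shift]
      have e3 : ∑ s ∈ Ioc 0 m, b s = ∑ s ∈ Ioc 0 (m-1), b s + b m := by
        rw [← Finset.sum_Ioc_consecutive _ (by omega : (0:ℕ) ≤ m-1) (by omega : m-1 ≤ m)]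
        have : Ioc (m-1) m = {m} := by
          ext j
          simp only [Finset.mem_Ioc, Finset.mem_singleton]
          omega
        rw [this, Finset.sum_singleton]
      have hab : ∀ t ∈ Ioc 0 (m-1), a (1+t) ≤ b t := by
        intro t ht
        rw [Finset.mem_Ioc] at ht
        simp only [ha, hb]
        have h1 : lam (r+(1+t)+1) ≤ lam (r+(1+t)) := hl _ (by omega) (by omega)
        have h2 : lamb (t+1) ≤ lamb t := hlb t (by omega) (by omega)
        have := minc (x := lam (r+(1+t))) (y := lam (r+(1+t)+1))
          (c := lamb (t+1)) (c' := lamb t) h1 h2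
        rw [show r+1+t = r+(1+t) by omega]
        rw [show lamb (1+t) = lamb (t+1) by rw [Nat.add_comm]]
        linarith
      have ha1 : a 1 ≤ lam (r+1) - lam (r+2) := by
        simp only [ha]
        have h1 : lam (r+1+1) ≤ lam (r+1) := hl _ (by omega) (by omega)
        have := minc2 (x := lam (r+1)) (y := lam (r+1+1)) (c := lamb 1) h1
        rw [show r+1+1 = r+2 by omega] at this ⊢
        linarith
      have hbm : 0 ≤ b m := by
        simp only [hb]
        have h1 : lam (r+1+m+1) ≤ lam (r+1+m) := hl _ (by omega) (by omega)
        have := min_le_min h1 (le_refl (lamb m))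
        linarith
      have hsum2 : ∑ t ∈ Ioc 0 (m-1), a (1+t) ≤ ∑ t ∈ Ioc 0 (m-1), b t :=
        Finset.sum_le_sum hab
      rw [e1, e2, e3]
      linarith
  simp only [ha, hb] at key
  rw [sum_sub_sub, sum_sub_sub] at key
  rw [show r+1+1 = r+2 by omega] at key ⊢
  linarith

omit hl in
lemma cond_empty (hc : Cond n m lam lamb nu) :
    ∀ s, 1 ≤ s → s ≤ m → lamb s ≤ lam s := by
  intro s hs1 hs2
  have h := hc ∅ (Finset.empty_subset _)
  simp only [Finset.sum_empty, Finset.card_empty] at h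
  have hS : S lam 0 = 0 := by unfold S; simp
  rw [hS] at h
  have hDE : DE m lamb lam 0 ≤ 0 := by linarith
  have hterm : max 0 (lamb s - lam (0 + s)) ≤ DE m lamb lam 0 := by
    unfold DE
    refine Finset.single_le_sum (f := fun i => max 0 (lamb i - lam (0 + i)))
      (fun i _ => le_max_left _ _) ?_
    rw [Finset.mem_Ioc]
    omega
  rw [zero_add] at hterm
  have := le_max_right 0 (lamb s - lam s)
  linarith

end Converse3

end Trap4

namespace Trap4

section Converse4

variable {m n : ℕ} {lam lamb nu : ℕ → ℝ}

/-- discrete intermediate value for antitone sequences -/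
lemma ivt (f : ℕ → ℝ) : ∀ n, 1 ≤ n → (∀ r, r + 1 ≤ n → f (r+1) ≤ f r) →
    ∀ v, f n ≤ v → v ≤ f 0 → ∃ r, r + 1 ≤ n ∧ f (r+1) ≤ v ∧ v ≤ f r := by
  intro n
  induction n with
  | zero => omega
  | succ n ih =>
    intro _ hmono v h1 h2
    rcases Nat.eq_zero_or_pos n with hn0 | hn0
    · subst hn0
      exact ⟨0, le_rfl, h1, h2⟩
    · rcases le_total (f n) v with hc | hc
      · obtain ⟨r, hr1, hr2, hr3⟩ := ih hn0 (fun r hr => hmono r (by omega)) v hc h2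
        exact ⟨r, by omega, hr2, hr3⟩
      · exact ⟨n, le_rfl, h1, hc⟩

lemma theta_exists {aa bb v : ℝ} (h1 : aa ≤ v) (h2 : v ≤ bb) :
    ∃ θ : ℝ, 0 ≤ θ ∧ θ ≤ 1 ∧ v = θ * bb + (1 - θ) * aa := by
  rcases eq_or_lt_of_le (le_trans h1 h2) with he | hlt
  · exact ⟨1, zero_le_one, le_rfl, by rw [← he] at h2 ⊢; nlinarith [le_antisymm h2 h1]⟩
  · refine ⟨(v - aa) / (bb - aa), div_nonneg (by linarith) (by linarith), ?_, ?_⟩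
    · rw [div_le_one (by linarith)]; linarith
    · have hne : bb - aa ≠ 0 := by linarith
      have hmul : (v - aa) / (bb - aa) * (bb - aa) = v - aa := div_mul_cancel₀ _ hne
      nlinarith [hmul]

lemma convex_mem {θ a b x y : ℝ} (h0 : 0 ≤ θ) (h1 : θ ≤ 1)
    (hx1 : a ≤ x) (hx2 : x ≤ b) (hy1 : a ≤ y) (hy2 : y ≤ b) :
    a ≤ θ * x + (1 - θ) * y ∧ θ * x + (1 - θ) * y ≤ b := by
  constructor <;> nlinarith

lemma min_concave {θ a b c : ℝ} (h0 : 0 ≤ θ) (h1 : θ ≤ 1) :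
    θ * min a c + (1 - θ) * min b c ≤ min (θ * a + (1 - θ) * b) c := by
  refine le_min ?_ ?_
  · nlinarith [min_le_left a c, min_le_left b c]
  · nlinarith [min_le_right a c, min_le_right b c]

/-- Base case: `n = 1`. -/
lemma conv_base (hl : ∀ j, 1 ≤ j → j < 1+m → lam (j+1) ≤ lam j)
    (hlb : ∀ j, 1 ≤ j → j < m → lamb (j+1) ≤ lamb j)
    (hsum : S lam (1+m) - S lamb m - S nu 1 = 0)
    (hc : Cond 1 m lam lamb nu) : Ex 1 m lam lamb nu := by
  have hbl : ∀ s, 1 ≤ s → s ≤ m → lamb s ≤ lam s := by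
    exact cond_empty hc
  have hS1 : S nu 1 = nu 1 := by
    unfold S
    rw [show Ioc (0:ℕ) 1 = {1} by rfl, Finset.sum_singleton]
  -- interlacing below: lamb s ≥ lam (1+s)
  have hfull : ∀ s, 1 ≤ s → s ≤ m → lam (1+s) ≤ lamb s := by
    intro s hs1 hs2
    have h1 := hc {1} (by intro t ht; simp at ht; subst ht; simp)
    simp only [Finset.sum_singleton, Finset.card_singleton] at h1
    have hSlam : S lam (1+m) = lam 1 + ∑ s ∈ Ioc 0 m, lam (1+s) := by
      unfold S
      rw [← Finset.sum_Ioc_consecutive lam (by omega : (0:ℕ) ≤ 1) (by omega : 1 ≤ 1+m)]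
      rw [show Ioc (0:ℕ) 1 = {1} by rfl, Finset.sum_singleton,
          show Ioc 1 (1+m) = Ioc (1+0) (1+m) by norm_num, sum_shift]
    have hS1' : S lam 1 = lam 1 := by
      unfold S
      rw [show Ioc (0:ℕ) 1 = {1} by rfl, Finset.sum_singleton]
    rw [hS1'] at h1
    -- sum of nonneg terms ≤ 0
    have hkey : ∑ s ∈ Ioc 0 m, (max 0 (lamb s - lam (1+s)) - (lamb s - lam (1+s))) ≤ 0 := by
      have hDE : DE m lamb lam 1 = ∑ s ∈ Ioc 0 m, max 0 (lamb s - lam (1+s)) := rfl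
      have hlb2 : S lamb m = ∑ s ∈ Ioc 0 m, lamb s := rfl
      rw [hDE] at h1
      rw [hSlam, hlb2, hS1] at hsum
      rw [sum_sub_sub, sum_sub_sub]
      linarith [h1, hsum]
    have hterm : max 0 (lamb s - lam (1+s)) - (lamb s - lam (1+s)) ≤ 0 := by
      calc max 0 (lamb s - lam (1+s)) - (lamb s - lam (1+s))
          ≤ ∑ s ∈ Ioc 0 m, (max 0 (lamb s - lam (1+s)) - (lamb s - lam (1+s))) := by
            refine Finset.single_le_sum
              (f := fun s => max 0 (lamb s - lam (1+s)) - (lamb s - lam (1+s)))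
              (fun i _ => by simp [le_max_right]) ?_
            rw [Finset.mem_Ioc]; omega
        _ ≤ 0 := hkey
    have := le_max_left 0 (lamb s - lam (1+s))
    linarith
  -- build the array
  refine ⟨fun i j => if i = 0 then S lamb j else S lam j, ?_, ?_, ?_, ?_, ?_⟩
  · intro i j hi1 hi2 hj1 hj2
    have hieq : i = 1 := by omega
    subst hieq
    have hpd1 : pd (fun i j => if i = 0 then S lamb j else S lam j) 1 j = lam j := by
      unfold pd
      simp only [one_ne_zero, if_false]
      obtain ⟨j', rfl⟩ : ∃ j', j = j' + 1 := ⟨j - 1, by omega⟩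
      rw [S_succ]
      simp
    have hpd0 : ∀ jj, 1 ≤ jj →
        pd (fun i j => if i = 0 then S lamb j else S lam j) 0 jj = lamb jj := by
      intro jj hjj
      unfold pd
      simp only [if_true]
      obtain ⟨j', rfl⟩ : ∃ j', jj = j' + 1 := ⟨jj - 1, by omega⟩
      rw [S_succ]
      simp
    constructor
    · intro hjm
      simp only [show (1:ℕ) - 1 = 0 by rfl] at *
      rw [hpd1, hpd0 j hj1]
      exact hbl j hj1 (by omega)
    · intro hjm
      simp only [show (1:ℕ) - 1 = 0 by rfl] at *
      have hpd1' : pd (fun i j => if i = 0 then S lamb j else S lam j) 1 (j+1) = lam (j+1) := by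
        unfold pd
        simp only [one_ne_zero, if_false]
        rw [S_succ]
        simp
      rw [hpd1', hpd0 j hj1]
      have := hfull j hj1 (by omega)
      rw [show 1+j = j+1 by omega] at this
      exact this
  · intro i _
    rcases Nat.eq_zero_or_pos i with h | h
    · subst h; simp [S]
    · show (if i = 0 then S lamb 0 else S lam 0) = 0
      rw [if_neg (by omega : ¬ i = 0)]
      simp [S]
  · intro j hj1 hj2
    unfold pd
    show (if (1:ℕ) = 0 then S lamb j else S lam j) - (if (1:ℕ) = 0 then S lamb (j-1) else S lam (j-1)) = lam j
    rw [if_neg one_ne_zero, if_neg one_ne_zero]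
    obtain ⟨j', rfl⟩ : ∃ j', j = j' + 1 := ⟨j - 1, by omega⟩
    rw [S_succ]
    simp
  · intro j hj1 hj2
    unfold pd
    show (if (0:ℕ) = 0 then S lamb j else S lam j) - (if (0:ℕ) = 0 then S lamb (j-1) else S lam (j-1)) = lamb j
    rw [if_pos rfl, if_pos rfl]
    obtain ⟨j', rfl⟩ : ∃ j', j = j' + 1 := ⟨j - 1, by omega⟩
    rw [S_succ]
    simp
  · intro i hi1 hi2
    have hieq : i = 1 := by omega
    subst hieq
    show (if (1:ℕ) = 0 then S lamb (1+m) else S lam (1+m))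
      - (if (1:ℕ) - 1 = 0 then S lamb (1-1+m) else S lam (1-1+m)) = nu 1
    rw [if_neg one_ne_zero, if_pos (by norm_num)]
    rw [hS1] at hsum
    have : (1:ℕ) - 1 + m = m := by omega
    rw [this]
    linarith [hsum]

end Converse4

end Trap4

namespace Trap4

theorem conv_main (m : ℕ) (lamb : ℕ → ℝ)
    (hlb : ∀ j, 1 ≤ j → j < m → lamb (j+1) ≤ lamb j) :
    ∀ n, 1 ≤ n → ∀ lam nu : ℕ → ℝ,
      (∀ j, 1 ≤ j → j < n+m → lam (j+1) ≤ lam j) →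
      (S lam (n+m) - S lamb m - S nu n = 0) →
      Cond n m lam lamb nu → Ex n m lam lamb nu := by
  intro n
  induction n with
  | zero => omega
  | succ n ih =>
    intro _ lam nu hl hsum hc
    rcases Nat.eq_zero_or_pos n with hn0 | hn0
    · subst hn0
      exact conv_base (by simpa using hl) hlb (by simpa using hsum) hc
    -- the inductive step, n ≥ 1, constructing for n+1 rows
    have hl' : ∀ j, 1 ≤ j → j < n+1+m → lam (j+1) ≤ lam j := by
      intro j h1 h2; exact hl j h1 (by omega)
    have hbl : ∀ s, 1 ≤ s → s ≤ m → lamb s ≤ lam s := cond_empty hc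
    set Dr : ℕ → ℝ := fun r => GG m lamb lam (r+1) - GG m lamb lam r with hDr
    have hmono : ∀ r, r + 1 ≤ n → Dr (r+1) ≤ Dr r := by
      intro r hr
      simp only [hDr]
      have := Dmono (n := n) hl' hlb (r := r) hr
      rw [show r+1+1 = r+2 by omega]
      exact this
    -- upper bound  nu (n+1) ≤ Dr 0
    have hup : nu (n+1) ≤ Dr 0 := by
      have h1 := hc {n+1} (by
        intro t ht
        simp only [Finset.mem_singleton] at ht
        subst ht
        rw [Finset.mem_Icc]
        omega)
      simp only [Finset.sum_singleton, Finset.card_singleton] at h1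
      have hS1 : S lam 1 = lam 1 := by
        unfold S
        rw [show Ioc (0:ℕ) 1 = {1} by rfl, Finset.sum_singleton]
      have hD0 : Dr 0 = S lam 1 - DE m lamb lam 1 := by
        simp only [hDr]
        rw [GGdiff, hS1]
        have e1 : ∑ s ∈ Ioc 0 m, min (lam (0+s)) (lamb s) = ∑ s ∈ Ioc 0 m, lamb s := by
          refine Finset.sum_congr rfl fun s hs => ?_
          rw [Finset.mem_Ioc] at hs
          rw [zero_add]
          exact min_eq_right (hbl s hs.1 hs.2)
        have e2 : ∑ s ∈ Ioc 0 m, min (lam (0+s+1)) (lamb s)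
            = ∑ s ∈ Ioc 0 m, (lamb s - max 0 (lamb s - lam (1+s))) := by
          refine Finset.sum_congr rfl fun s hs => ?_
          rw [show 0+s+1 = 1+s by omega]
          exact min_as_max0 _ _
        rw [e1, e2, sum_sub_sub]
        have hDE : DE m lamb lam 1 = ∑ s ∈ Ioc 0 m, max 0 (lamb s - lam (1+s)) := rfl
        rw [hDE]
        ring
      rw [hD0]
      exact h1
    -- lower bound  Dr n ≤ nu (n+1)
    have hlow : Dr n ≤ nu (n+1) := by
      have h1 := hc (Icc 1 n) (by
        intro t ht
        rw [Finset.mem_Icc] at ht ⊢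
        omega)
      have hcard : (Icc 1 n).card = n := by
        rw [Nat.card_Icc]
        omega
      have hIccIoc : (Icc 1 n) = Ioc 0 n := Finset.Icc_add_one_left_eq_Ioc 0 n
      rw [hcard, hIccIoc] at h1
      have h1' : S nu n ≤ S lam n - DE m lamb lam n := h1
      have hSnu : S nu (n+1) = S nu n + nu (n+1) := S_succ _ _
      have hsplit : S lam (n+1+m) = S lam n + lam (n+1) + ∑ s ∈ Ioc 0 m, lam (n+1+s) := by
        unfold S
        rw [← Finset.sum_Ioc_consecutive lam (by omega : (0:ℕ) ≤ n+1)
              (by omega : n+1 ≤ n+1+m),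
            ← Finset.sum_Ioc_consecutive lam (by omega : (0:ℕ) ≤ n) (by omega : n ≤ n+1)]
        have e1 : Ioc n (n+1) = {n+1} := by
          ext j
          simp only [Finset.mem_Ioc, Finset.mem_singleton]
          omega
        rw [e1, Finset.sum_singleton,
            show Ioc (n+1) (n+1+m) = Ioc ((n+1)+0) ((n+1)+m) by norm_num, sum_shift]
      have hminle : ∑ s ∈ Ioc 0 m, min (lam (n+s+1)) (lamb s)
          ≤ ∑ s ∈ Ioc 0 m, lam (n+1+s) := by
        refine Finset.sum_le_sum fun s hs => ?_
        rw [show n+1+s = n+s+1 by omega]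
        exact min_le_left _ _
      have hminmax : ∑ s ∈ Ioc 0 m, min (lam (n+s)) (lamb s)
          = S lamb m - DE m lamb lam n := by
        have : ∑ s ∈ Ioc 0 m, min (lam (n+s)) (lamb s)
            = ∑ s ∈ Ioc 0 m, (lamb s - max 0 (lamb s - lam (n+s))) :=
          Finset.sum_congr rfl fun s _ => min_as_max0 _ _
        rw [this, sum_sub_sub]
        rfl
      have hGGn := GGdiff (m := m) (lamb := lamb) (lam := lam) n
      simp only [hDr]
      rw [hGGn]
      rw [hSnu] at hsum
      linarith [h1', hsplit, hminle, hminmax, hsum]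
    -- find the bracketing r
    obtain ⟨r, hrn, hrlo, hrhi⟩ := ivt Dr n hn0 hmono (nu (n+1)) hlow hup
    obtain ⟨θ, hθ0, hθ1, hθv⟩ := theta_exists hrlo hrhi
    set nmu : ℕ → ℝ := fun j => θ * mur m lam lamb r j + (1 - θ) * mur m lam lamb (r+1) j
      with hnmu
    have hbounds : ∀ j, 1 ≤ j → j ≤ n+m → lam (j+1) ≤ nmu j ∧ nmu j ≤ lam j := by
      intro j h1 h2
      simp only [hnmu]
      exact convex_mem hθ0 hθ1
        (lam_le_mu) (mu_le_lam (n := n) hl' hbl h1 h2)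
        (lam_le_mu) (mu_le_lam (n := n) hl' hbl h1 h2)
    have hsum_nmu : ∑ j ∈ Ioc 0 (n+m), nmu j = S lam (n+1+m) - nu (n+1) := by
      simp only [hnmu]
      rw [Finset.sum_add_distrib, ← Finset.mul_sum, ← Finset.mul_sum]
      rw [musum (n := n) hl' hlb hbl (by omega : r ≤ n),
          musum (n := n) hl' hlb hbl (by omega : r+1 ≤ n)]
      have e1 : GG m lamb lam (r+1) - GG m lamb lam r = Dr r := rfl
      have e2 : GG m lamb lam (r+1+1) - GG m lamb lam (r+1) = Dr (r+1) := rfl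
      rw [e1, e2, hθv]
      ring
    -- convexity of GG
    have hGGconv : ∀ k, θ * GG m lamb (mur m lam lamb r) k
        + (1-θ) * GG m lamb (mur m lam lamb (r+1)) k ≤ GG m lamb nmu k := by
      intro k
      unfold GG W
      have hS : S nmu k = θ * S (mur m lam lamb r) k + (1-θ) * S (mur m lam lamb (r+1)) k := by
        unfold S
        rw [Finset.sum_add_distrib, ← Finset.mul_sum, ← Finset.mul_sum]
      have hW : θ * (∑ s ∈ Ioc 0 m, min (mur m lam lamb r (k+s)) (lamb s))
          + (1-θ) * (∑ s ∈ Ioc 0 m, min (mur m lam lamb (r+1) (k+s)) (lamb s))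
          ≤ ∑ s ∈ Ioc 0 m, min (nmu (k+s)) (lamb s) := by
        rw [Finset.mul_sum, Finset.mul_sum, ← Finset.sum_add_distrib]
        refine Finset.sum_le_sum fun s hs => ?_
        exact min_concave hθ0 hθ1
      rw [hS]
      linarith
    -- the condition for the subsystem
    have hcond' : Cond n m nmu lamb nu := by
      intro I hI
      have hk : I.card ≤ n := by
        have := Finset.card_le_card hI
        simpa using this
      have hgoal : S nmu I.card - DE m lamb nmu I.card
          = GG m lamb nmu I.card - S lamb m := by
        rw [GG_eq]
        have : S lamb m = ∑ s ∈ Ioc 0 m, lamb s := rfl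
        rw [this]
        ring
      rw [hgoal]
      by_cases hkr : I.card ≤ r
      · have h1 := hc I (by
          intro t ht
          have := hI ht
          rw [Finset.mem_Icc] at this ⊢
          omega)
        have h2 : S lam I.card - DE m lamb lam I.card = GG m lamb lam I.card - S lamb m := by
          rw [GG_eq]
          have : S lamb m = ∑ s ∈ Ioc 0 m, lamb s := rfl
          rw [this]
          ring
        rw [h2] at h1
        have k1 := K1a (n := n) hl' hlb hbl (by omega : r ≤ n) hkr
        have k2 := K1a (n := n) hl' hlb hbl (by omega : r+1 ≤ n) (by omega : I.card ≤ r+1)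
        have := hGGconv I.card
        nlinarith [k1, k2, this, hθ0, hθ1]
      · -- I.card > r : use I ∪ {n+1}
        push_neg at hkr
        have hnotmem : n+1 ∉ I := by
          intro hmem
          have := hI hmem
          rw [Finset.mem_Icc] at this
          omega
        have hins := hc (insert (n+1) I) (by
          intro t ht
          rw [Finset.mem_insert] at ht
          rcases ht with h | h
          · subst h; rw [Finset.mem_Icc]; omega
          · have := hI h
            rw [Finset.mem_Icc] at this ⊢
            omega)
        rw [Finset.sum_insert hnotmem, Finset.card_insert_of_notMem hnotmem] at hins
        have h2 : S lam (I.card+1) - DE m lamb lam (I.card+1)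
            = GG m lamb lam (I.card+1) - S lamb m := by
          rw [GG_eq]
          have : S lamb m = ∑ s ∈ Ioc 0 m, lamb s := rfl
          rw [this]
          ring
        rw [h2] at hins
        -- bounds for the two rows
        have k1 : GG m lamb lam (I.card+1) - Dr r ≤ GG m lamb (mur m lam lamb r) I.card := by
          have := K1b (n := n) hl' hlb hbl (r := r) (k := I.card) hkr hk
          simpa only [hDr] using this
        have k2 : GG m lamb lam (I.card+1) - Dr (r+1)
            ≤ GG m lamb (mur m lam lamb (r+1)) I.card := by
          rcases Nat.eq_or_lt_of_le (by omega : r + 1 ≤ I.card) with he | hlt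
          · -- I.card = r+1 : equality case via K1a
            have k2a := K1a (n := n) hl' hlb hbl (by omega : r+1 ≤ n)
              (le_of_eq he.symm)
            have : Dr (r+1) = GG m lamb lam (I.card+1) - GG m lamb lam I.card := by
              simp only [hDr]
              rw [← he]
            rw [this]
            linarith
          · have := K1b (n := n) hl' hlb hbl (r := r+1) (k := I.card) hlt hk
            have e : Dr (r+1) = GG m lamb lam (r+1+1) - GG m lamb lam (r+1) := by
              simp only [hDr]
            rw [e]
            exact this
        have hconv := hGGconv I.card
        have hv : θ * Dr r + (1-θ) * Dr (r+1) = nu (n+1) := hθv.symm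
        nlinarith [k1, k2, hconv, hθ0, hθ1]
    -- apply the induction hypothesis
    have hlnmu : ∀ j, 1 ≤ j → j < n+m → nmu (j+1) ≤ nmu j := by
      intro j h1 h2
      have ha := (hbounds (j+1) (by omega) (by omega)).2
      have hb := (hbounds j h1 (by omega)).1
      linarith
    have hsum' : S nmu (n+m) - S lamb m - S nu n = 0 := by
      have : S nmu (n+m) = ∑ j ∈ Ioc 0 (n+m), nmu j := rfl
      rw [this, hsum_nmu]
      rw [S_succ] at hsum
      linarith
    obtain ⟨x', hsc', hx0', hbot', htop', hnu'⟩ := ih hn0 nmu nu hlnmu hsum' hcond'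
    -- extend with the bottom row
    refine ⟨fun i j => if i ≤ n then x' i j else S lam j, ?_, ?_, ?_, ?_, ?_⟩
    · intro i j hi1 hin hj1 hj2
      by_cases hile : i ≤ n
      · have hpdi : pd (fun i j => if i ≤ n then x' i j else S lam j) i = pd x' i := by
          funext jj
          unfold pd
          simp only [if_pos hile]
        have hpdi1 : pd (fun i j => if i ≤ n then x' i j else S lam j) (i-1) = pd x' (i-1) := by
          funext jj
          unfold pd
          simp only [if_pos (by omega : i - 1 ≤ n)]
        rw [hpdi, hpdi1]
        exact hsc' i j hi1 hile hj1 hj2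
      · have hieq : i = n+1 := by omega
        subst hieq
        have hpdtop : ∀ jj, 1 ≤ jj →
            pd (fun i j => if i ≤ n then x' i j else S lam j) (n+1) jj = lam jj := by
          intro jj hjj
          unfold pd
          simp only [if_neg (by omega : ¬ n+1 ≤ n)]
          obtain ⟨j', rfl⟩ : ∃ j', jj = j' + 1 := ⟨jj - 1, by omega⟩
          rw [S_succ]
          simp
        have hpdn : ∀ jj, 1 ≤ jj → jj ≤ n+m →
            pd (fun i j => if i ≤ n then x' i j else S lam j) ((n+1)-1) jj = nmu jj := by
          intro jj h1 h2
          unfold pd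
          simp only [show (n+1)-1 = n by omega, if_pos (le_refl n)]
          exact hbot' jj h1 h2
        constructor
        · intro hjm
          rw [hpdtop j hj1, hpdn j hj1 (by omega)]
          exact (hbounds j hj1 (by omega)).2
        · intro hjm
          rw [hpdtop (j+1) (by omega), hpdn j hj1 (by omega)]
          exact (hbounds j hj1 (by omega)).1
    · intro i _
      by_cases hile : i ≤ n
      · simp only [if_pos hile]
        exact hx0' i hile
      · simp only [if_neg hile]
        simp [S]
    · intro j hj1 hj2
      unfold pd
      simp only [if_neg (by omega : ¬ n+1 ≤ n)]
      obtain ⟨j', rfl⟩ : ∃ j', j = j' + 1 := ⟨j - 1, by omega⟩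
      rw [S_succ]
      simp
    · intro j hj1 hj2
      unfold pd
      simp only [if_pos (by omega : 0 ≤ n)]
      exact htop' j hj1 hj2
    · intro i hi1 hi2
      by_cases hile : i ≤ n
      · simp only [if_pos hile, if_pos (by omega : i - 1 ≤ n)]
        exact hnu' i hi1 hile
      · have hieq : i = n+1 := by omega
        subst hieq
        simp only [if_neg (by omega : ¬ n+1 ≤ n), show (n+1)-1 = n by omega,
          if_pos (le_refl n)]
        have hx'n : x' n (n+m) = ∑ j ∈ Ioc 0 (n+m), nmu j := by
          rw [row_telescope hx0' n (n+m) le_rfl]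
          refine Finset.sum_congr rfl fun j hj => ?_
          rw [Finset.mem_Ioc] at hj
          exact hbot' j hj.1 hj.2
        rw [hx'n, hsum_nmu]
        ring
  
end Trap4

namespace Trap4

lemma Icc_sum_eq_S (X : ℕ) (f : ℕ → ℝ) : ∑ j ∈ Icc 1 X, f j = S f X := by
  unfold S
  rw [show Icc 1 X = Ioc 0 X from Finset.Icc_add_one_left_eq_Ioc 0 X]

lemma DEconv {n m k : ℕ} (lam lamb : ℕ → ℝ) (hk : k ≤ n) :
    ∑ j ∈ Icc 1 (n+m), (if k < j ∧ j ≤ m + k then max 0 (lamb (j-k) - lam j) else 0)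
      = DE m lamb lam k := by
  rw [show Icc 1 (n+m) = Ioc 0 (n+m) from Finset.Icc_add_one_left_eq_Ioc 0 (n+m)]
  have h1 : ∀ j ∈ Ioc 0 (n+m), (if k < j ∧ j ≤ m+k then max 0 (lamb (j-k) - lam j) else 0)
      = if j ∈ Ioc k (k+m) then max 0 (lamb (j-k) - lam j) else 0 := by
    intro j hj
    by_cases h : k < j ∧ j ≤ m + k
    · rw [if_pos h, if_pos (by rw [Finset.mem_Ioc]; omega)]
    · rw [if_neg h, if_neg (by rw [Finset.mem_Ioc]; omega)]
  rw [Finset.sum_congr rfl h1, Finset.sum_ite_mem]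
  have h2 : Ioc 0 (n+m) ∩ Ioc k (k+m) = Ioc k (k+m) := by
    rw [Finset.inter_eq_right]
    intro j hj
    rw [Finset.mem_Ioc] at hj ⊢
    omega
  rw [h2, show Ioc k (k+m) = Ioc (k+0) (k+m) by norm_num, sum_shift]
  unfold DE
  refine Finset.sum_congr rfl fun s hs => ?_
  rw [Finset.mem_Ioc] at hs
  rw [show k+s-k = s by omega]

end Trap4

open Trap4 in
/-- Trapezoidal existence theorem: a strip-concave trapezoidal array with boundary data
`λ, λ̄, ν` (and `μ = 0`) exists iff all deficit inequalities
`λ[1,|I|] − ν(I) − Δ_{|I|} ≥ 0` hold. -/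
theorem stmt4 (n m : ℕ) (hn : 1 ≤ n) (lam lamb nu : ℕ → ℝ)
    (hld : ∀ j, 1 ≤ j → j < n + m → lam (j + 1) ≤ lam j)
    (hlbd : ∀ j, 1 ≤ j → j < m → lamb (j + 1) ≤ lamb j)
    (hsum : (∑ j ∈ Icc 1 (n + m), lam j) - (∑ j ∈ Icc 1 m, lamb j)
              - (∑ i ∈ Icc 1 n, nu i) = 0) :
    (∃ x : ℕ → ℕ → ℝ, TrapSC n m x ∧ (∀ i ≤ n, x i 0 = 0) ∧
      (∀ j, 1 ≤ j → j ≤ n + m → pd x n j = lam j) ∧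
      (∀ j, 1 ≤ j → j ≤ m → pd x 0 j = lamb j) ∧
      (∀ i, 1 ≤ i → i ≤ n → x i (i + m) - x (i - 1) (i - 1 + m) = nu i)) ↔
    (∀ I : Finset ℕ, I ⊆ Icc 1 n →
      (∑ j ∈ Icc 1 I.card, lam j) - (∑ i ∈ I, nu i)
        - (∑ j ∈ Icc 1 (n + m), if I.card < j ∧ j ≤ m + I.card
            then max 0 (lamb (j - I.card) - lam j) else 0) ≥ 0) := by
  constructor
  · rintro ⟨x, hsc, hx0, hbot, htop, hnu⟩ I hI
    have hcond := forward_main hsc hx0 hbot htop hnu I hI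
    have hk : I.card ≤ n := by
      have := Finset.card_le_card hI
      simpa using this
    rw [Icc_sum_eq_S, DEconv lam lamb hk]
    linarith
  · intro hineq
    have hcond : Cond n m lam lamb nu := by
      intro I hI
      have h := hineq I hI
      have hk : I.card ≤ n := by
        have := Finset.card_le_card hI
        simpa using this
      rw [Icc_sum_eq_S, DEconv lam lamb hk] at h
      linarith
    have hsum' : S lam (n+m) - S lamb m - S nu n = 0 := by
      rw [← Icc_sum_eq_S, ← Icc_sum_eq_S, ← Icc_sum_eq_S]
      exact hsum
    exact conv_main m lamb hlbd n hn lam nu hld hsum' hcond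
end

section
/- If λ ∈ Z^{n+m} and λ̄ ∈ Z^m are weakly decreasing integer tuples and μ ∈ Z^n, then the polytope SC(λ∖λ̄, μ) of strip-concave trapezoidal arrays X of size (n,m) with λ^X = λ, λ̄^X = λ̄ and μ^X = μ is an integral polytope: every vertex of SC(λ∖λ̄, μ) has all entries integer. -/
open Finset

open scoped Classical in
/-- Indicator of non-integrality. -/
noncomputable def ind (t : ℝ) : ℝ := if ∃ z : ℤ, t = (z : ℝ) then 0 else 1

lemma ind_nonneg (t : ℝ) : 0 ≤ ind t := by unfold ind; split <;> norm_num

lemma ind_le_one (t : ℝ) : ind t ≤ 1 := by unfold ind; split <;> norm_num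

lemma ind_eq_zero {t : ℝ} (h : ∃ z : ℤ, t = (z : ℝ)) : ind t = 0 := by
  unfold ind; simp [h]

lemma ind_int {t : ℝ} (h : ind t = 0) : ∃ z : ℤ, t = (z : ℝ) := by
  unfold ind at h
  split at h
  · assumption
  · norm_num at h

lemma ind_congr {s t : ℝ} (h : s = t) : ind s = ind t := by rw [h]

/-- Cumulative indicator of fractional row derivatives, restricted to the trapezoid. -/
noncomputable def ee (n m : ℕ) (x : ℕ → ℕ → ℝ) (i j : ℕ) : ℝ :=
  if i ≤ n ∧ j ≤ i + m then ∑ k ∈ Finset.Icc 1 j, ind (pd x i k) else 0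

lemma ee_col0 (n m : ℕ) (x : ℕ → ℕ → ℝ) (i : ℕ) : ee n m x i 0 = 0 := by
  unfold ee
  split
  · rw [Finset.Icc_eq_empty (by omega : ¬ (1:ℕ) ≤ 0), Finset.sum_empty]
  · rfl

lemma pd_ee (n m : ℕ) (x : ℕ → ℕ → ℝ) {i j : ℕ} (hi : i ≤ n) (hj1 : 1 ≤ j)
    (hj2 : j ≤ i + m) : pd (ee n m x) i j = ind (pd x i j) := by
  obtain ⟨b, rfl⟩ : ∃ b, j = b + 1 := ⟨j - 1, by omega⟩
  show ee n m x i (b + 1) - ee n m x i (b + 1 - 1) = ind (pd x i (b + 1))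
  simp only [Nat.add_sub_cancel]
  unfold ee
  rw [if_pos ⟨hi, hj2⟩, if_pos ⟨hi, by omega⟩,
    Finset.sum_Icc_succ_top (by omega : 1 ≤ b + 1)]
  ring

/-- For integer weakly decreasing `λ, λ̄` and integer `μ`, the polytope `SC(λ∖λ̄, μ)` of
strip-concave trapezoidal arrays with these boundary data is integral: every vertex
(extreme point) has all its entries integer. -/
theorem stmt12 (n m : ℕ) (hn : 1 ≤ n) (lam lamb mu : ℕ → ℤ)
    (hld : ∀ j, 1 ≤ j → j < n + m → lam (j + 1) ≤ lam j)
    (hlbd : ∀ j, 1 ≤ j → j < m → lamb (j + 1) ≤ lamb j) :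
    ∀ x ∈ Set.extremePoints ℝ {y : ℕ → ℕ → ℝ | TrapSC n m y ∧ y 0 0 = 0 ∧
      (∀ j, 1 ≤ j → j ≤ n + m → pd y n j = (lam j : ℝ)) ∧
      (∀ j, 1 ≤ j → j ≤ m → pd y 0 j = (lamb j : ℝ)) ∧
      (∀ i, 1 ≤ i → i ≤ n → y i 0 - y (i - 1) 0 = (mu i : ℝ)) ∧
      (∀ i j, n < i ∨ i + m < j → y i j = 0)},
      ∀ i ≤ n, ∀ j ≤ i + m, ∃ z : ℤ, x i j = z := by
  classical
  intro x hx
  obtain ⟨hxs, hext⟩ := hx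
  obtain ⟨hsc, h00, hlam, hlamb, hmu, hz⟩ := hxs
  -- the perturbation direction
  set E : ℕ → ℕ → ℝ := ee n m x with hE
  -- choose ε smaller than all positive slacks
  set S : Finset (ℕ × ℕ) := Finset.Icc 1 n ×ˢ Finset.Icc 1 (n + m) with hS
  have hSne : S.Nonempty := ⟨(1, 1), by simp [hS]; omega⟩
  set f : ℕ × ℕ → ℝ := fun p =>
    min (if 0 < pd x p.1 p.2 - pd x (p.1 - 1) p.2 then
            pd x p.1 p.2 - pd x (p.1 - 1) p.2 else 1)
        (if 0 < pd x (p.1 - 1) p.2 - pd x p.1 (p.2 + 1) then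
            pd x (p.1 - 1) p.2 - pd x p.1 (p.2 + 1) else 1) with hf
  set ε : ℝ := S.inf' hSne f with hε
  have hεpos : 0 < ε := by
    rw [hε, Finset.lt_inf'_iff]
    intro p hp
    rw [hf]
    dsimp only
    rw [lt_min_iff]
    constructor <;> (split <;> first | linarith | norm_num)
  have hεle : ∀ p ∈ S, ε ≤ f p := fun p hp => Finset.inf'_le f hp
  -- linearity of pd
  have pdlin : ∀ (c : ℝ) (a b : ℕ),
      pd (fun i j => x i j + c * E i j) a b = pd x a b + c * pd E a b := by
    intro c a b
    unfold pd
    ring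
  -- membership of the perturbed points
  have hmem : ∀ c : ℝ, |c| ≤ ε → (fun i j => x i j + c * E i j) ∈
      {y : ℕ → ℕ → ℝ | TrapSC n m y ∧ y 0 0 = 0 ∧
      (∀ j, 1 ≤ j → j ≤ n + m → pd y n j = (lam j : ℝ)) ∧
      (∀ j, 1 ≤ j → j ≤ m → pd y 0 j = (lamb j : ℝ)) ∧
      (∀ i, 1 ≤ i → i ≤ n → y i 0 - y (i - 1) 0 = (mu i : ℝ)) ∧
      (∀ i j, n < i ∨ i + m < j → y i j = 0)} := by
    intro c hc
    have hc' : -ε ≤ c ∧ c ≤ ε := abs_le.mp hc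
    refine ⟨?_, ?_, ?_, ?_, ?_, ?_⟩
    · -- strip concavity
      intro i j h1 h2 h3 h4
      have hmemS : (i, j) ∈ S := by
        rw [hS]
        simp only [Finset.mem_product, Finset.mem_Icc]
        omega
      constructor
      · intro hA
        rw [pdlin, pdlin, hE, pd_ee n m x h2 h3 h4,
          pd_ee n m x (by omega : i - 1 ≤ n) h3 hA]
        have hs0 : pd x i j ≥ pd x (i - 1) j := (hsc i j h1 h2 h3 h4).1 hA
        by_cases heq : pd x i j = pd x (i - 1) j
        · rw [heq]
        · have hspos : 0 < pd x i j - pd x (i - 1) j := by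
            rcases lt_or_eq_of_le hs0.le with h | h
            · exact sub_pos.mpr h
            · exact absurd h.symm heq
          have hles : ε ≤ pd x i j - pd x (i - 1) j := by
            have := hεle (i, j) hmemS
            rw [hf] at this
            dsimp only at this
            rw [if_pos hspos] at this
            exact le_trans this (min_le_left _ _)
          have ha1 := ind_nonneg (pd x i j)
          have ha2 := ind_le_one (pd x i j)
          have hb1 := ind_nonneg (pd x (i - 1) j)
          have hb2 := ind_le_one (pd x (i - 1) j)
          nlinarith [hc'.1, hc'.2]
      · intro hB
        rw [pdlin, pdlin, hE, pd_ee n m x (by omega : i - 1 ≤ n) h3 (by omega),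
          pd_ee n m x h2 (by omega) (by omega)]
        have hs0 : pd x (i - 1) j ≥ pd x i (j + 1) := (hsc i j h1 h2 h3 h4).2 hB
        by_cases heq : pd x (i - 1) j = pd x i (j + 1)
        · rw [heq]
        · have hspos : 0 < pd x (i - 1) j - pd x i (j + 1) := by
            rcases lt_or_eq_of_le hs0.le with h | h
            · exact sub_pos.mpr h
            · exact absurd h.symm heq
          have hles : ε ≤ pd x (i - 1) j - pd x i (j + 1) := by
            have := hεle (i, j) hmemS
            rw [hf] at this
            dsimp only at this
            rw [if_pos hspos] at this
            exact le_trans this (min_le_right _ _)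
          have ha1 := ind_nonneg (pd x (i - 1) j)
          have ha2 := ind_le_one (pd x (i - 1) j)
          have hb1 := ind_nonneg (pd x i (j + 1))
          have hb2 := ind_le_one (pd x i (j + 1))
          nlinarith [hc'.1, hc'.2]
    · -- corner
      show x 0 0 + c * E 0 0 = 0
      rw [hE, ee_col0, h00]
      ring
    · -- top row
      intro j h1 h2
      rw [pdlin, hE, pd_ee n m x le_rfl h1 h2,
        ind_eq_zero ⟨lam j, hlam j h1 h2⟩, hlam j h1 h2]
      ring
    · -- bottom row
      intro j h1 h2
      rw [pdlin, hE, pd_ee n m x (Nat.zero_le n) h1 (by omega),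
        ind_eq_zero ⟨lamb j, hlamb j h1 h2⟩, hlamb j h1 h2]
      ring
    · -- first column
      intro i h1 h2
      show x i 0 + c * E i 0 - (x (i - 1) 0 + c * E (i - 1) 0) = (mu i : ℝ)
      rw [hE, ee_col0, ee_col0]
      have := hmu i h1 h2
      linarith
    · -- outside the trapezoid
      intro i j hout
      show x i j + c * E i j = 0
      rw [hz i j hout, hE]
      unfold ee
      rw [if_neg (by omega)]
      ring
  -- apply extremeness
  have hy1 := hmem (-ε) (by rw [abs_neg, abs_of_pos hεpos])
  have hy2 := hmem ε (by rw [abs_of_pos hεpos])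
  have hseg : x ∈ openSegment ℝ (fun i j => x i j + (-ε) * E i j)
      (fun i j => x i j + ε * E i j) := by
    refine ⟨1/2, 1/2, by norm_num, by norm_num, by norm_num, ?_⟩
    funext i j
    simp only [Pi.add_apply, Pi.smul_apply, smul_eq_mul]
    ring
  have hfix := hext hy1 hy2 hseg
  have hE0 : ∀ i j, E i j = 0 := by
    intro i j
    have h : x i j + ε * E i j = x i j := congrFun (congrFun (hext hy2 hy1 (by rw [openSegment_symm]; exact hseg)) i) j
    have : ε * E i j = 0 := by linarith
    rcases mul_eq_zero.mp this with h' | h'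
    · exact absurd h' (ne_of_gt hεpos)
    · exact h'
  -- all row derivatives are integral
  have key : ∀ i, i ≤ n → ∀ j, 1 ≤ j → j ≤ i + m → ∃ z : ℤ, pd x i j = (z : ℝ) := by
    intro i hi j hj1 hj2
    have h0 := hE0 i j
    rw [hE] at h0
    unfold ee at h0
    rw [if_pos ⟨hi, hj2⟩] at h0
    have := (Finset.sum_eq_zero_iff_of_nonneg (fun k _ => ind_nonneg _)).mp h0 j
      (Finset.mem_Icc.mpr ⟨hj1, le_refl j⟩)
    exact ind_int this
  -- first column is integral
  have col : ∀ i, i ≤ n → ∃ z : ℤ, x i 0 = (z : ℝ) := by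
    intro i
    induction i with
    | zero => exact fun _ => ⟨0, by simpa using h00⟩
    | succ i ih =>
      intro h
      obtain ⟨z, hzz⟩ := ih (by omega)
      have h2 := hmu (i + 1) (by omega) h
      simp only [Nat.add_sub_cancel] at h2
      exact ⟨z + mu (i + 1), by push_cast; linarith⟩
  -- conclude by induction along rows
  intro i hi j
  induction j with
  | zero => exact fun _ => col i hi
  | succ j ih =>
    intro hj
    obtain ⟨z, hzz⟩ := ih (by omega)
    obtain ⟨w, hw⟩ := key i hi (j + 1) (by omega) hj
    unfold pd at hw
    simp only [Nat.add_sub_cancel] at hw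
    exact ⟨z + w, by push_cast; linarith⟩
end

section
/- Fix i ∈ {1,…,n−1}. The zigzag swapping operation at layer i, which for every j replaces the flow values on the zigzag pair Z_j = (e^0_{i−1,j}, e^1_{ij}) and Z'_j = (e^1_{i−1,j}, e^0_{i,j+1}) by g'(e) := g(e) − min(g on Z_j) + min(g on Z'_j) for edges e of Z_j and g'(e) := g(e) − min(g on Z'_j) + min(g on Z_j) for edges e of Z'_j (unchanged elsewhere), maps (λ,λ̄)-admissible flows to (λ,λ̄)-admissible flows, and the corresponding array X' = γ^{-1}(g') has right-boundary tuple ν' obtained from ν = ν^X by transposing entries ν_i and ν_{i+1}. -/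
open Finset

/-- `λ` extended by the conventions `λ₀ := λ₁`, `λ_{n+m+1} := 0`. -/
noncomputable def lamE (n m : ℕ) (lam : ℕ → ℝ) (j : ℕ) : ℝ :=
  if j = 0 then lam 1 else if j ≤ n + m then lam j else 0

/-- `λ̄` extended by the conventions `λ̄₀ := λ₁`, `λ̄_{m+1} := 0`. -/
noncomputable def lbE (m : ℕ) (lam lamb : ℕ → ℝ) (j : ℕ) : ℝ :=
  if j = 0 then lam 1 else if j ≤ m then lamb j else 0

/-- Divergence of an edge function at the node `(i,j)` of `H_{n,m}`. -/
noncomputable def fdiv (n m : ℕ) (h0 h1 : ℕ → ℕ → ℝ) (i j : ℕ) : ℝ :=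
  (if 1 ≤ i ∧ j ≤ i - 1 + m then h0 (i - 1) j else 0) +
  (if 1 ≤ i ∧ 1 ≤ j then h1 (i - 1) (j - 1) else 0) -
  (if i < n then h0 i j + h1 i j else 0)

/-- `(λ,λ̄)`-admissible flows in `H_{n,m}` (vanishing outside the edge set). -/
def Adm (n m : ℕ) (lam lamb : ℕ → ℝ) (g : (ℕ → ℕ → ℝ) × (ℕ → ℕ → ℝ)) : Prop :=
  (∀ i j, i < n → j ≤ i + m → 0 ≤ g.1 i j ∧ 0 ≤ g.2 i j) ∧
  (∀ i j, ¬(i < n ∧ j ≤ i + m) → g.1 i j = 0 ∧ g.2 i j = 0) ∧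
  (∀ i j, 1 ≤ i → i ≤ n - 1 → j ≤ i + m → fdiv n m g.1 g.2 i j = 0) ∧
  (∀ j ≤ n + m, fdiv n m g.1 g.2 n j = lamE n m lam j - lamE n m lam (j + 1)) ∧
  (∀ j ≤ m, fdiv n m g.1 g.2 0 j = lbE m lam lamb (j + 1) - lbE m lam lamb j)

/-- The zigzag swapping operation at layer `i`: for each `j`, the zigzag
`Z_j = (e⁰_{i−1,j}, e¹_{ij})` and `Z'_j = (e¹_{i−1,j}, e⁰_{i,j+1})` exchange their
capacities `min`-wise. -/
noncomputable def zswap (m : ℕ) (g : (ℕ → ℕ → ℝ) × (ℕ → ℕ → ℝ)) (i : ℕ) :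
    (ℕ → ℕ → ℝ) × (ℕ → ℕ → ℝ) :=
  (fun i' j' =>
     if i' = i - 1 ∧ j' ≤ i - 1 + m then
       g.1 (i - 1) j' - min (g.1 (i - 1) j') (g.2 i j')
         + min (g.2 (i - 1) j') (g.1 i (j' + 1))
     else if i' = i ∧ 1 ≤ j' ∧ j' ≤ i + m then
       g.1 i j' - min (g.2 (i - 1) (j' - 1)) (g.1 i j')
         + min (g.1 (i - 1) (j' - 1)) (g.2 i (j' - 1))
     else g.1 i' j',
   fun i' j' =>
     if i' = i - 1 ∧ j' ≤ i - 1 + m then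
       g.2 (i - 1) j' - min (g.2 (i - 1) j') (g.1 i (j' + 1))
         + min (g.1 (i - 1) j') (g.2 i j')
     else if i' = i ∧ j' ≤ i - 1 + m then
       g.2 i j' - min (g.1 (i - 1) j') (g.2 i j')
         + min (g.2 (i - 1) j') (g.1 i (j' + 1))
     else g.2 i' j')

/-- The right-boundary value `ν_k` of the array corresponding to a flow, computed from the
flow: `ν_k = ∑_j g(e¹_{k−1,j})`. -/
noncomputable def nuOf (m : ℕ) (g : (ℕ → ℕ → ℝ) × (ℕ → ℕ → ℝ)) (k : ℕ) : ℝ :=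
  ∑ j ∈ Finset.range (k + m), g.2 (k - 1) j

lemma min_sub_min {p q r s : ℝ} (hc : p + q = r + s) :
    min p s - min q r = p - r := by
  rcases le_total p s with h | h
  · rw [min_eq_left h, min_eq_right (by linarith : r ≤ q)]
  · rw [min_eq_right h, min_eq_left (by linarith : q ≤ r)]
    linarith

set_option maxHeartbeats 2000000 in
lemma fdiv_zswap (n m k : ℕ) (g : (ℕ → ℕ → ℝ) × (ℕ → ℕ → ℝ)) (hn : k + 1 < n)
    (i' j' : ℕ) :
    fdiv n m (zswap m g (k + 1)).1 (zswap m g (k + 1)).2 i' j' =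
      fdiv n m g.1 g.2 i' j' := by
  have e1 : (1:ℕ) ≤ k + 1 := by omega
  have e2 : ¬ (k + 1 = k) := by omega
  have e3 : ¬ (k + 2 = k) := by omega
  have e4 : ¬ (k + 2 = k + 1) := by omega
  by_cases h0 : i' = k
  · subst h0
    simp only [fdiv, zswap, Nat.add_sub_cancel, e1, e2, eq_self_iff_true, true_and,
      false_and, if_true, if_false, and_true]
    split_ifs <;> first | ring1 | (exfalso; omega)
  · by_cases hI : i' = k + 1
    · subst hI
      rcases j' with _ | t <;>
        simp only [fdiv, zswap, Nat.add_sub_cancel, hn, e1, e2, eq_self_iff_true,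
          true_and, false_and, if_true, if_false, and_true] <;>
        split_ifs <;> first | ring1 | (exfalso; omega)
    · by_cases hII : i' = k + 2
      · subst hII
        rcases j' with _ | t <;>
          simp only [fdiv, zswap, Nat.add_sub_cancel, hn, e1, e2, e3, e4,
            show k + 2 - 1 = k + 1 from rfl, eq_self_iff_true,
            true_and, false_and, if_true, if_false, and_true] <;>
          split_ifs <;> first | ring1 | (exfalso; omega)
      · have f1 : ¬ (i' - 1 = k) := by omega
        have f2 : ¬ (i' - 1 = k + 1) := by omega
        have f3 : ¬ (i' = k + 1) := hI
        have f4 : ¬ (i' = k) := h0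
        simp only [fdiv, zswap, Nat.add_sub_cancel, f1, f2, f3, f4, false_and, if_false]

set_option maxHeartbeats 1000000 in
/-- The zigzag swapping operation at layer `i` maps `(λ,λ̄)`-admissible flows to
`(λ,λ̄)`-admissible flows, and transposes the entries `ν_i` and `ν_{i+1}` of the
right-boundary tuple of the corresponding array. -/
theorem stmt14 (n m : ℕ) (lam lamb : ℕ → ℝ)
    (g : (ℕ → ℕ → ℝ) × (ℕ → ℕ → ℝ)) (hg : Adm n m lam lamb g)
    (i : ℕ) (h1 : 1 ≤ i) (h2 : i ≤ n - 1) :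
    Adm n m lam lamb (zswap m g i) ∧
    nuOf m (zswap m g i) i = nuOf m g (i + 1) ∧
    nuOf m (zswap m g i) (i + 1) = nuOf m g i ∧
    (∀ k, 1 ≤ k → k ≤ n → k ≠ i → k ≠ i + 1 → nuOf m (zswap m g i) k = nuOf m g k) := by
  obtain ⟨k, rfl⟩ : ∃ k, i = k + 1 := ⟨i - 1, by omega⟩
  have hn : k + 1 < n := by omega
  have hkn : k < n := by omega
  obtain ⟨hpos, hzero, hint, htop, hbot⟩ := hg
  -- pointwise conservation at the nodes of row k+1
  have hA' : ∀ j, j ≤ k + 1 + m →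
      g.1 k j + (if 1 ≤ j then g.2 k (j - 1) else 0) = g.1 (k+1) j + g.2 (k+1) j := by
    intro j hj
    have h := hint (k+1) j (by omega) h2 hj
    simp only [fdiv, Nat.add_sub_cancel] at h
    rw [if_pos hn] at h
    have hz : ¬ j ≤ k + m → g.1 k j = 0 := fun hh => (hzero k j (fun hc => hh hc.2)).1
    split_ifs at h with hc1 hc2 <;> split_ifs with hd <;>
      first
        | linarith
        | (exfalso; omega)
        | (rw [hz (by omega)]; linarith)
  have key : ∀ t, t + 1 ≤ k + 1 + m →
      min (g.1 k (t+1)) (g.2 (k+1) (t+1)) - min (g.2 k t) (g.1 (k+1) (t+1)) =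
        g.1 k (t+1) - g.1 (k+1) (t+1) := by
    intro t ht
    have h := hA' (t+1) ht
    rw [if_pos (by omega : 1 ≤ t + 1)] at h
    simp only [Nat.add_sub_cancel] at h
    exact min_sub_min h
  have key0 : min (g.1 k 0) (g.2 (k+1) 0) = g.1 k 0 - g.1 (k+1) 0 := by
    have h := hA' 0 (by omega)
    rw [if_neg (by omega : ¬ (1:ℕ) ≤ 0)] at h
    have hr := (hpos (k+1) 0 hn (by omega)).1
    rw [min_eq_right (by linarith)]
    linarith
  have keyN : min (g.1 k (k+1+m)) (g.2 (k+1) (k+1+m)) = 0 := by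
    rw [(hzero k (k+1+m) (fun hc => by omega)).1]
    exact min_eq_left (hpos (k+1) (k+1+m) hn (by omega)).2
  -- summed conservation
  have hsum : (∑ j ∈ Finset.range (k+1+m+1), g.1 k j) + ∑ j ∈ Finset.range (k+1+m), g.2 k j
      = (∑ j ∈ Finset.range (k+1+m+1), g.1 (k+1) j) + ∑ j ∈ Finset.range (k+1+m+1), g.2 (k+1) j := by
    have h1s : ∑ j ∈ Finset.range (k+1+m+1), (g.1 k j + (if 1 ≤ j then g.2 k (j-1) else 0))
        = ∑ j ∈ Finset.range (k+1+m+1), (g.1 (k+1) j + g.2 (k+1) j) :=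
      Finset.sum_congr rfl fun j hj => hA' j (by have := Finset.mem_range.mp hj; omega)
    rw [Finset.sum_add_distrib, Finset.sum_add_distrib] at h1s
    have h2s : ∑ j ∈ Finset.range (k+1+m+1), (if 1 ≤ j then g.2 k (j-1) else 0)
        = ∑ j ∈ Finset.range (k+1+m), g.2 k j := by
      rw [Finset.sum_range_succ']
      simp
    rw [h2s] at h1s
    exact h1s
  -- the telescoped sum of min differences
  have hS : ∑ j ∈ Finset.range (k+1+m),
        (min (g.1 k j) (g.2 (k+1) j) - min (g.2 k j) (g.1 (k+1) (j+1)))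
      = (∑ j ∈ Finset.range (k+1+m+1), g.2 (k+1) j) - ∑ j ∈ Finset.range (k+1+m), g.2 k j := by
    have t1 := Finset.sum_range_succ (fun j => min (g.1 k j) (g.2 (k+1) j)) (k+1+m)
    have t2 := Finset.sum_range_succ' (fun j => min (g.1 k j) (g.2 (k+1) j)) (k+1+m)
    have e1 : ∑ j ∈ Finset.range (k+1+m),
          (min (g.1 k j) (g.2 (k+1) j) - min (g.2 k j) (g.1 (k+1) (j+1)))
        = (∑ j ∈ Finset.range (k+1+m), min (g.1 k j) (g.2 (k+1) j))
          - ∑ j ∈ Finset.range (k+1+m), min (g.2 k j) (g.1 (k+1) (j+1)) :=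
      Finset.sum_sub_distrib _ _
    have e2 : ∑ j ∈ Finset.range (k+1+m),
          (min (g.1 k (j+1)) (g.2 (k+1) (j+1)) - min (g.2 k j) (g.1 (k+1) (j+1)))
        = ∑ j ∈ Finset.range (k+1+m), (g.1 k (j+1) - g.1 (k+1) (j+1)) :=
      Finset.sum_congr rfl fun j hj => key j (by have := Finset.mem_range.mp hj; omega)
    rw [Finset.sum_sub_distrib, Finset.sum_sub_distrib] at e2
    have e3 := Finset.sum_range_succ' (fun j => g.1 k j) (k+1+m)
    have e4 := Finset.sum_range_succ' (fun j => g.1 (k+1) j) (k+1+m)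
    rw [e1]
    beta_reduce at t1 t2 e2 e3 e4
    linarith [hsum, key0, keyN, t1, t2, e2, e3, e4]
  refine ⟨⟨?_, ?_, ?_, ?_, ?_⟩, ?_, ?_, ?_⟩
  · -- nonnegativity
    intro i' j' hi hj
    constructor
    · simp only [zswap, Nat.add_sub_cancel]
      split_ifs with hc1 hc2
      · have A := hpos k j' hkn (by omega)
        have B := hpos (k+1) (j'+1) hn (by omega)
        have C := hpos k j' hkn (by omega)
        have h4 := min_le_left (g.1 k j') (g.2 (k+1) j')
        have h5 := le_min A.2 B.1
        linarith
      · have B := hpos k (j'-1) hkn (by omega)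
        have C := hpos (k+1) (j'-1) hn (by omega)
        have h4 := min_le_right (g.2 k (j'-1)) (g.1 (k+1) j')
        have h5 := le_min B.1 C.2
        linarith
      · exact (hpos i' j' hi hj).1
    · simp only [zswap, Nat.add_sub_cancel]
      split_ifs with hc1 hc2
      · have A := hpos k j' hkn (by omega)
        have B := hpos (k+1) j' hn (by omega)
        have h4 := min_le_left (g.2 k j') (g.1 (k+1) (j'+1))
        have h5 := le_min A.1 B.2
        linarith
      · have B := hpos k j' hkn (by omega)
        have C := hpos (k+1) (j'+1) hn (by omega)
        have h4 := min_le_right (g.1 k j') (g.2 (k+1) j')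
        have h5 := le_min B.2 C.1
        linarith
      · exact (hpos i' j' hi hj).2
  · -- vanishing outside the edge set
    intro i' j' hnot
    constructor <;> simp only [zswap, Nat.add_sub_cancel] <;> split_ifs <;>
      first
        | (exfalso; omega)
        | exact (hzero i' j' hnot).1
        | exact (hzero i' j' hnot).2
  · intro i' j' ha hb hc
    rw [fdiv_zswap n m k g hn]
    exact hint i' j' ha hb hc
  · intro j hj
    rw [fdiv_zswap n m k g hn]
    exact htop j hj
  · intro j hj
    rw [fdiv_zswap n m k g hn]
    exact hbot j hj
  · -- ν'_{k+1} = ν_{k+2}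
    have L : nuOf m (zswap m g (k+1)) (k+1)
        = ∑ j ∈ Finset.range (k+1+m),
            (g.2 k j + (min (g.1 k j) (g.2 (k+1) j) - min (g.2 k j) (g.1 (k+1) (j+1)))) := by
      simp only [nuOf, Nat.add_sub_cancel]
      refine Finset.sum_congr rfl fun j hj => ?_
      have hjm : j ≤ k + m := by have := Finset.mem_range.mp hj; omega
      simp only [zswap, Nat.add_sub_cancel]
      rw [if_pos ⟨trivial, hjm⟩]
      ring
    have R : nuOf m g (k+1+1)
        = ∑ j ∈ Finset.range (k+1+m+1), g.2 (k+1) j := by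
      simp only [nuOf, show k+1+1-1 = k+1 from rfl, show k+1+1+m = k+1+m+1 from by omega]
    rw [L, Finset.sum_add_distrib, hS, R]
    ring
  · -- ν'_{k+2} = ν_{k+1}
    have L2 : nuOf m (zswap m g (k+1)) (k+1+1)
        = (∑ j ∈ Finset.range (k+1+m),
            (g.2 (k+1) j - (min (g.1 k j) (g.2 (k+1) j) - min (g.2 k j) (g.1 (k+1) (j+1)))))
          + g.2 (k+1) (k+1+m) := by
      simp only [nuOf, show k+1+1-1 = k+1 from rfl, show k+1+1+m = k+1+m+1 from by omega]
      rw [Finset.sum_range_succ]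
      congr 1
      · refine Finset.sum_congr rfl fun j hj => ?_
        have hjm : j ≤ k + m := by have := Finset.mem_range.mp hj; omega
        simp only [zswap, Nat.add_sub_cancel]
        rw [if_neg (by rintro ⟨h, -⟩; omega), if_pos ⟨trivial, hjm⟩]
        ring
      · simp only [zswap, Nat.add_sub_cancel]
        rw [if_neg (by rintro ⟨h, -⟩; omega), if_neg (by rintro ⟨-, h⟩; omega)]
    have R : nuOf m g (k+1) = ∑ j ∈ Finset.range (k+1+m), g.2 k j := by
      simp only [nuOf, Nat.add_sub_cancel]
    rw [L2, Finset.sum_sub_distrib, hS, R, Finset.sum_range_succ]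
    ring
  · -- other rows are unchanged
    intro k' hk1 hk2 hne1 hne2
    simp only [nuOf]
    refine Finset.sum_congr rfl fun j hj => ?_
    simp only [zswap, Nat.add_sub_cancel]
    rw [if_neg (by rintro ⟨h, -⟩; omega), if_neg (by rintro ⟨h, -⟩; omega)]
end

section
/- For integer weakly decreasing λ ∈ Z^{n+m}, λ̄ ∈ Z^m and integer ν ∈ Z^n, and any permutation ν' of ν, the number of integer strip-concave trapezoidal arrays X of size (n,m) with x_{i0} = 0, λ^X = λ, λ̄^X = λ̄, ν^X = ν equals the number of such arrays with ν^X = ν'. (Equivalently, the skew Kostka number K(λ∖λ̄, ν) is invariant under permutations of ν.) -/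
open Finset

/-- Integer row derivative. -/
def pdZ (x : ℕ → ℕ → ℤ) (i j : ℕ) : ℤ := x i j - x i (j - 1)

/-- Strip-concavity for an integer trapezoidal array of size `(n,m)`. -/
def TrapSCZ (n m : ℕ) (x : ℕ → ℕ → ℤ) : Prop :=
  ∀ i j, 1 ≤ i → i ≤ n → 1 ≤ j → j ≤ i + m →
    (j ≤ i - 1 + m → pdZ x i j ≥ pdZ x (i - 1) j) ∧
    (j < i + m → pdZ x (i - 1) j ≥ pdZ x i (j + 1))

/-- Integer strip-concave trapezoidal arrays with boundary data `λ, λ̄, ν` (and `μ = 0`),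
normalized to vanish outside the trapezoid. -/
def SCset (n m : ℕ) (lam lamb nu : ℕ → ℤ) : Set (ℕ → ℕ → ℤ) :=
  {x | TrapSCZ n m x ∧ (∀ i ≤ n, x i 0 = 0) ∧
    (∀ j, 1 ≤ j → j ≤ n + m → pdZ x n j = lam j) ∧
    (∀ j, 1 ≤ j → j ≤ m → pdZ x 0 j = lamb j) ∧
    (∀ i, 1 ≤ i → i ≤ n → x i (i + m) - x (i - 1) (i - 1 + m) = nu i) ∧
    (∀ i j, n < i ∨ i + m < j → x i j = 0)}


/-- upper bound for entry j of row k from neighboring rows -/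
def upr (m k : ℕ) (x : ℕ → ℕ → ℤ) (j : ℕ) : ℤ :=
  if j = 1 then pdZ x (k+1) 1 else min (pdZ x (k+1) j) (pdZ x (k-1) (j-1))

def lwr (m k : ℕ) (x : ℕ → ℕ → ℤ) (j : ℕ) : ℤ :=
  if j = k + m then pdZ x (k+1) (k+m+1) else max (pdZ x (k+1) (j+1)) (pdZ x (k-1) j)

def tnew (m k : ℕ) (x : ℕ → ℕ → ℤ) (j : ℕ) : ℤ := upr m k x j + lwr m k x j - pdZ x k j

def toggle (m k : ℕ) (x : ℕ → ℕ → ℤ) : ℕ → ℕ → ℤ :=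
  fun i j => if i = k ∧ j ≤ k + m then ∑ l ∈ Finset.range j, tnew m k x (l+1) else x i j

lemma telescope (x : ℕ → ℕ → ℤ) (i : ℕ) (h0 : x i 0 = 0) (j : ℕ) :
    x i j = ∑ l ∈ Finset.range j, pdZ x i (l+1) := by
  induction j with
  | zero => simpa using h0
  | succ j ih =>
    rw [Finset.sum_range_succ, ← ih]
    simp [pdZ]

lemma toggle_ne (m k : ℕ) (x : ℕ → ℕ → ℤ) (i j : ℕ) (h : i ≠ k) :
    toggle m k x i j = x i j := by simp [toggle, h]

lemma pdZ_toggle_ne (m k : ℕ) (x : ℕ → ℕ → ℤ) (i j : ℕ) (h : i ≠ k) :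
    pdZ (toggle m k x) i j = pdZ x i j := by simp [pdZ, toggle, h]

lemma pdZ_toggle (m k : ℕ) (x : ℕ → ℕ → ℤ) (j : ℕ) (h1 : 1 ≤ j) (h2 : j ≤ k + m) :
    pdZ (toggle m k x) k j = tnew m k x j := by
  have hj : j - 1 ≤ k + m := by omega
  have hjj : j = (j-1) + 1 := by omega
  have key : ∑ l ∈ Finset.range j, tnew m k x (l+1)
      = ∑ l ∈ Finset.range (j-1), tnew m k x (l+1) + tnew m k x j := by
    conv_lhs => rw [hjj]
    rw [Finset.sum_range_succ, ← hjj]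
  simp only [pdZ, toggle, if_pos (And.intro rfl h2), if_pos (And.intro rfl hj), key,
    true_and, if_pos h2, if_pos hj]
  ring

section
variable {n m k : ℕ} {x : ℕ → ℕ → ℤ}

lemma upr_ge (hSC : TrapSCZ n m x) (hk1 : 1 ≤ k) (hkn : k + 1 ≤ n)
    {j : ℕ} (h1 : 1 ≤ j) (h2 : j ≤ k + m) : pdZ x k j ≤ upr m k x j := by
  have e1 : k + 1 - 1 = k := by omega
  have A := (hSC (k+1) j (by omega) hkn h1 (by omega)).1 (by omega)
  rw [e1] at A
  by_cases hj : j = 1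
  · simpa [upr, hj] using (hj ▸ A)
  · have B := (hSC k (j-1) hk1 (by omega) (by omega) (by omega)).2 (by omega)
    have e2 : j - 1 + 1 = j := by omega
    rw [e2] at B
    simp only [upr, if_neg hj, le_min_iff]
    exact ⟨A, B⟩

lemma lwr_le (hSC : TrapSCZ n m x) (hk1 : 1 ≤ k) (hkn : k + 1 ≤ n)
    {j : ℕ} (h1 : 1 ≤ j) (h2 : j ≤ k + m) : lwr m k x j ≤ pdZ x k j := by
  have e1 : k + 1 - 1 = k := by omega
  by_cases hj : j = k + m
  · have A := (hSC (k+1) (k+m) (by omega) hkn (by omega) (by omega)).2 (by omega)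
    rw [e1] at A
    simpa [lwr, hj] using (hj ▸ A)
  · have A := (hSC (k+1) j (by omega) hkn h1 (by omega)).2 (by omega)
    rw [e1] at A
    have B := (hSC k j hk1 (by omega) h1 (by omega)).1 (by omega)
    simp only [lwr, if_neg hj, max_le_iff]
    exact ⟨A, B⟩

lemma tnew_le (hSC : TrapSCZ n m x) (hk1 : 1 ≤ k) (hkn : k + 1 ≤ n)
    {j : ℕ} (h1 : 1 ≤ j) (h2 : j ≤ k + m) : tnew m k x j ≤ upr m k x j := by
  have := lwr_le hSC hk1 hkn h1 h2; unfold tnew; omega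

lemma tnew_ge (hSC : TrapSCZ n m x) (hk1 : 1 ≤ k) (hkn : k + 1 ≤ n)
    {j : ℕ} (h1 : 1 ≤ j) (h2 : j ≤ k + m) : lwr m k x j ≤ tnew m k x j := by
  have := upr_ge hSC hk1 hkn h1 h2; unfold tnew; omega

end

lemma pair_sum (m k' : ℕ) (x : ℕ → ℕ → ℤ) :
    ∑ l ∈ Finset.range (k'+1+m), (upr m (k'+1) x (l+1) + lwr m (k'+1) x (l+1))
      = ∑ l ∈ Finset.range (k'+1+m+1), pdZ x (k'+2) (l+1)
        + ∑ l ∈ Finset.range (k'+m), pdZ x k' (l+1) := by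
  have mid : ∑ l ∈ Finset.range (k'+m), (upr m (k'+1) x (l+1+1) + lwr m (k'+1) x (l+1))
      = ∑ l ∈ Finset.range (k'+m), (pdZ x (k'+2) (l+1+1) + pdZ x k' (l+1)) := by
    apply Finset.sum_congr rfl
    intro l hl
    have hl' : l < k'+m := Finset.mem_range.mp hl
    have e1 : l+1+1 ≠ 1 := by omega
    have e2 : ¬ (l+1 = k'+1+m) := by omega
    have e3 : l+1+1-1 = l+1 := by omega
    have e4 : k'+1-1 = k' := by omega
    have e5 : k'+1+1 = k'+2 := by omega
    simp only [upr, lwr, if_neg e1, if_neg e2, e3, e4, e5]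
    rw [min_add_max]
  have l1 : ∑ l ∈ Finset.range (k'+1+m), upr m (k'+1) x (l+1)
      = ∑ l ∈ Finset.range (k'+m), upr m (k'+1) x (l+1+1) + pdZ x (k'+2) 1 := by
    rw [show k'+1+m = (k'+m)+1 from by omega,
        Finset.sum_range_succ' (fun l => upr m (k'+1) x (l+1)) (k'+m)]
    simp [upr, show k'+1+1 = k'+2 from by omega]
  have l2 : ∑ l ∈ Finset.range (k'+1+m), lwr m (k'+1) x (l+1)
      = ∑ l ∈ Finset.range (k'+m), lwr m (k'+1) x (l+1) + pdZ x (k'+2) (k'+1+m+1) := by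
    rw [show k'+1+m = (k'+m)+1 from by omega,
        Finset.sum_range_succ (fun l => lwr m (k'+1) x (l+1)) (k'+m)]
    simp [lwr, show k'+m+1 = k'+1+m from by omega, show k'+1+1 = k'+2 from by omega,
      show k'+1+m+1 = k'+1+m+1 from rfl]
  have r1 : ∑ l ∈ Finset.range (k'+1+m+1), pdZ x (k'+2) (l+1)
      = ∑ l ∈ Finset.range (k'+m), pdZ x (k'+2) (l+1+1) + pdZ x (k'+2) 1
        + pdZ x (k'+2) (k'+1+m+1) := by
    rw [show k'+1+m+1 = ((k'+m)+1)+1 from by omega,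
        Finset.sum_range_succ' (fun l => pdZ x (k'+2) (l+1)) ((k'+m)+1),
        Finset.sum_range_succ (fun l => pdZ x (k'+2) (l+1+1)) (k'+m)]
    have : k'+m+1+1 = k'+1+m+1 := by omega
    rw [this]
    ring
  rw [Finset.sum_add_distrib, l1, l2, r1, Finset.sum_add_distrib] at *
  linarith [mid]

lemma toggle_top (n m k : ℕ) (x : ℕ → ℕ → ℤ) (hk1 : 1 ≤ k) (hkn : k+1 ≤ n)
    (h0 : ∀ i ≤ n, x i 0 = 0) :
    toggle m k x k (k+m) = x (k+1) (k+1+m) + x (k-1) (k-1+m) - x k (k+m) := by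
  obtain ⟨k', rfl⟩ : ∃ k', k = k'+1 := ⟨k-1, by omega⟩
  have e1 : k'+1-1 = k' := by omega
  rw [e1]
  simp only [toggle, true_and, le_refl, if_true]
  calc ∑ l ∈ Finset.range (k'+1+m), tnew m (k'+1) x (l+1)
      = ∑ l ∈ Finset.range (k'+1+m),
          ((upr m (k'+1) x (l+1) + lwr m (k'+1) x (l+1)) - pdZ x (k'+1) (l+1)) := by
        apply Finset.sum_congr rfl; intros; unfold tnew; ring
    _ = ∑ l ∈ Finset.range (k'+1+m), (upr m (k'+1) x (l+1) + lwr m (k'+1) x (l+1))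
          - ∑ l ∈ Finset.range (k'+1+m), pdZ x (k'+1) (l+1) := Finset.sum_sub_distrib _ _
    _ = x (k'+1+1) (k'+1+1+m) + x k' (k'+m) - x (k'+1) (k'+1+m) := by
        rw [pair_sum]
        rw [← telescope x (k'+2) (h0 (k'+2) (by omega)) (k'+1+m+1),
            ← telescope x k' (h0 k' (by omega)) (k'+m),
            ← telescope x (k'+1) (h0 (k'+1) (by omega)) (k'+1+m)]
        rw [show k'+1+m+1 = k'+2+m from by omega, show k'+1+1 = k'+2 from by omega]

lemma toggle_mem (n m k : ℕ) (lam lamb nu : ℕ → ℤ) (hk1 : 1 ≤ k) (hkn : k+1 ≤ n)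
    (x : ℕ → ℕ → ℤ) (hx : x ∈ SCset n m lam lamb nu) :
    toggle m k x ∈ SCset n m lam lamb (fun i => nu (Equiv.swap k (k+1) i)) := by
  obtain ⟨hSC, h0, hlam, hlamb, hnu, hsupp⟩ := hx
  refine ⟨?_, ?_, ?_, ?_, ?_, ?_⟩
  · -- strip concavity
    intro i j hi1 hin hj1 hjim
    by_cases hik : i = k
    · subst hik
      constructor
      · intro hjle
        rw [pdZ_toggle m i x j hj1 (by omega), pdZ_toggle_ne m i x (i-1) j (by omega)]
        have h1 := tnew_ge hSC hk1 hkn hj1 (by omega)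
        have hb : pdZ x (i-1) j ≤ lwr m i x j := by
          have hne : ¬(j = i+m) := by omega
          simp only [lwr, if_neg hne]
          exact le_max_right _ _
        linarith
      · intro hjlt
        rw [pdZ_toggle_ne m i x (i-1) j (by omega),
            pdZ_toggle m i x (j+1) (by omega) (by omega)]
        have h1 := tnew_le hSC hk1 hkn (show 1 ≤ j+1 by omega) (show j+1 ≤ i+m by omega)
        have hb : upr m i x (j+1) ≤ pdZ x (i-1) j := by
          have hne : ¬(j+1 = 1) := by omega
          simp only [upr, if_neg hne]
          have e : j+1-1 = j := by omega
          rw [e]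
          exact min_le_right _ _
        linarith
    · by_cases hik1 : i = k+1
      · subst hik1
        have e : k+1-1 = k := by omega
        rw [e]
        constructor
        · intro hjle
          rw [pdZ_toggle_ne m k x (k+1) j (by omega),
              pdZ_toggle m k x j hj1 (by omega)]
          have h1 := tnew_le hSC hk1 hkn hj1 (by omega)
          have hb : upr m k x j ≤ pdZ x (k+1) j := by
            by_cases hj : j = 1
            · subst hj; simp [upr]
            · simp only [upr, if_neg hj]
              exact min_le_left _ _
          linarith
        · intro hjlt
          rw [pdZ_toggle m k x j hj1 (by omega),
              pdZ_toggle_ne m k x (k+1) (j+1) (by omega)]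
          have h1 := tnew_ge hSC hk1 hkn hj1 (by omega)
          have hb : pdZ x (k+1) (j+1) ≤ lwr m k x j := by
            by_cases hj : j = k+m
            · subst hj; simp [lwr]
            · simp only [lwr, if_neg hj]
              exact le_max_left _ _
          linarith
      · rw [pdZ_toggle_ne m k x i j hik, pdZ_toggle_ne m k x (i-1) j (by omega),
            pdZ_toggle_ne m k x i (j+1) hik]
        exact hSC i j hi1 hin hj1 hjim
  · intro i hi
    by_cases hik : i = k
    · subst hik; simp [toggle]
    · rw [toggle_ne m k x i 0 hik]
      exact h0 i hi
  · intro j hj1 hj2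
    rw [pdZ_toggle_ne m k x n j (by omega)]
    exact hlam j hj1 hj2
  · intro j hj1 hj2
    rw [pdZ_toggle_ne m k x 0 j (by omega)]
    exact hlamb j hj1 hj2
  · intro i hi1 hin
    by_cases hik : i = k
    · subst hik
      rw [toggle_top n m i x hk1 hkn h0, toggle_ne m i x (i-1) (i-1+m) (by omega)]
      have := hnu (i+1) (by omega) (by omega)
      have e : i+1-1 = i := by omega
      rw [e] at this
      simp only [Equiv.swap_apply_left]
      linarith
    · by_cases hik1 : i = k+1
      · subst hik1
        have e : k+1-1 = k := by omega
        rw [e, toggle_ne m k x (k+1) (k+1+m) (by omega), toggle_top n m k x hk1 hkn h0]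
        have h1 := hnu k hk1 (by omega)
        have h2 := hnu (k+1) (by omega) (by omega)
        rw [e] at h2
        simp only [Equiv.swap_apply_right]
        linarith
      · rw [toggle_ne m k x i (i+m) hik, toggle_ne m k x (i-1) (i-1+m) (by omega)]
        simp only [Equiv.swap_apply_of_ne_of_ne hik hik1]
        exact hnu i hi1 hin
  · intro i j hij
    have h : ¬(i = k ∧ j ≤ k + m) := by omega
    simp only [toggle, if_neg h]
    exact hsupp i j hij

lemma toggle_invol (n m k : ℕ) (lam lamb nu : ℕ → ℤ) (hk1 : 1 ≤ k) (hkn : k+1 ≤ n)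
    (x : ℕ → ℕ → ℤ) (hx : x ∈ SCset n m lam lamb nu) :
    toggle m k (toggle m k x) = x := by
  obtain ⟨hSC, h0, hlam, hlamb, hnu, hsupp⟩ := hx
  have a : ∀ j', pdZ (toggle m k x) (k+1) j' = pdZ x (k+1) j' :=
    fun j' => pdZ_toggle_ne m k x (k+1) j' (by omega)
  have b : ∀ j', pdZ (toggle m k x) (k-1) j' = pdZ x (k-1) j' :=
    fun j' => pdZ_toggle_ne m k x (k-1) j' (by omega)
  have hu : ∀ j', upr m k (toggle m k x) j' = upr m k x j' := by
    intro j'; simp [upr, a, b]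
  have hl : ∀ j', lwr m k (toggle m k x) j' = lwr m k x j' := by
    intro j'; simp [lwr, a, b]
  have ht : ∀ j', 1 ≤ j' → j' ≤ k + m →
      tnew m k (toggle m k x) j' = pdZ x k j' := by
    intro j' h1 h2
    unfold tnew
    rw [hu, hl, pdZ_toggle m k x j' h1 h2]
    unfold tnew
    ring
  funext i j
  by_cases h : i = k ∧ j ≤ k + m
  · obtain ⟨hik, hjk⟩ := h
    subst hik
    have : toggle m i (toggle m i x) i j = ∑ l ∈ Finset.range j, tnew m i (toggle m i x) (l+1) := by
      simp only [toggle, true_and, if_pos hjk]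
    rw [this, Finset.sum_congr rfl (fun l hl => ht (l+1) (by omega)
      (by have := Finset.mem_range.mp hl; omega)), ← telescope x i (h0 i (by omega)) j]
  · have h2 : toggle m k (toggle m k x) i j = toggle m k x i j := by
      simp only [toggle, if_neg h]
    rw [h2]
    simp only [toggle, if_neg h]

lemma SCset_congr (n m : ℕ) (lam lamb nu nu' : ℕ → ℤ)
    (h : ∀ i, 1 ≤ i → i ≤ n → nu i = nu' i) :
    SCset n m lam lamb nu = SCset n m lam lamb nu' := by
  ext x
  simp only [SCset, Set.mem_setOf_eq]
  constructor <;> rintro ⟨h1,h2,h3,h4,h5,h6⟩ <;>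
    refine ⟨h1,h2,h3,h4, fun i a b => ?_, h6⟩
  · rw [← h i a b]; exact h5 i a b
  · rw [h i a b]; exact h5 i a b

lemma adj_swap (n m k : ℕ) (lam lamb nu : ℕ → ℤ) (hk1 : 1 ≤ k) (hkn : k+1 ≤ n) :
    (SCset n m lam lamb nu).ncard
      = (SCset n m lam lamb (fun i => nu (Equiv.swap k (k+1) i))).ncard := by
  set s := SCset n m lam lamb nu with hs
  set t := SCset n m lam lamb (fun i => nu (Equiv.swap k (k+1) i)) with htdef
  have hst : ∀ x ∈ s, toggle m k x ∈ t :=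
    fun x hx => toggle_mem n m k lam lamb nu hk1 hkn x hx
  have hts : ∀ y ∈ t, toggle m k y ∈ s := by
    intro y hy
    have h2 := toggle_mem n m k lam lamb _ hk1 hkn y hy
    have e : SCset n m lam lamb nu
        = SCset n m lam lamb (fun i => nu (Equiv.swap k (k+1) (Equiv.swap k (k+1) i))) := by
      apply SCset_congr
      intro i _ _
      rw [Equiv.swap_apply_self]
    rw [hs, e]
    exact h2
  have himg : toggle m k '' s = t := by
    apply Set.Subset.antisymm
    · rintro _ ⟨x, hx, rfl⟩
      exact hst x hx
    · intro y hy
      exact ⟨toggle m k y, hts y hy, toggle_invol n m k lam lamb _ hk1 hkn y hy⟩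
  have hinj : Set.InjOn (toggle m k) s := by
    intro x hx y hy hxy
    have h3 := congrArg (toggle m k) hxy
    rwa [toggle_invol n m k lam lamb nu hk1 hkn x hx,
         toggle_invol n m k lam lamb nu hk1 hkn y hy] at h3
  rw [← himg, Set.ncard_image_of_injOn hinj]

lemma transp (n m : ℕ) (lam lamb : ℕ → ℤ) :
    ∀ d a b : ℕ, ∀ nu : ℕ → ℤ, 1 ≤ a → a < b → b ≤ n → b - a ≤ d →
    (SCset n m lam lamb nu).ncard
      = (SCset n m lam lamb (fun i => nu (Equiv.swap a b i))).ncard := by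
  intro d
  induction d with
  | zero => intro a b nu h1 h2 h3 h4; omega
  | succ d ih =>
    intro a b nu h1 h2 h3 h4
    by_cases hb : b = a + 1
    · subst hb
      exact adj_swap n m a lam lamb nu h1 h3
    · have key : ∀ i, Equiv.swap a b i
          = Equiv.swap (a+1) b (Equiv.swap a (a+1) (Equiv.swap (a+1) b i)) := by
        intro i
        simp only [Equiv.swap_apply_def]
        split_ifs <;> omega
      have step1 := ih (a+1) b nu (by omega) (by omega) h3 (by omega)
      have step2 := adj_swap n m a lam lamb (fun i => nu (Equiv.swap (a+1) b i)) h1 (by omega)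
      have step3 := ih (a+1) b
        (fun i => nu (Equiv.swap (a+1) b (Equiv.swap a (a+1) i))) (by omega) (by omega) h3 (by omega)
      rw [step1, step2, step3]
      congr 1
      apply SCset_congr
      intro i _ _
      rw [key i]

def embed (n : ℕ) (e : Equiv.Perm (Fin n)) : ℕ → ℕ :=
  fun i => if h : 1 ≤ i ∧ i ≤ n then ((e ⟨i-1, by omega⟩ : Fin n) : ℕ) + 1 else i

lemma embed_one (n : ℕ) (i : ℕ) : embed n 1 i = i := by
  unfold embed
  split_ifs with h
  · simp; omega
  · rfl

lemma embed_mul (n : ℕ) (g f : Equiv.Perm (Fin n)) (i : ℕ) :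
    embed n (g * f) i = embed n g (embed n f i) := by
  unfold embed
  by_cases h : 1 ≤ i ∧ i ≤ n
  · rw [dif_pos h]
    have hlt := (f ⟨i-1, by omega⟩).isLt
    have h2 : 1 ≤ ((f ⟨i-1, by omega⟩ : Fin n) : ℕ) + 1 ∧ ((f ⟨i-1, by omega⟩ : Fin n) : ℕ) + 1 ≤ n := by omega
    rw [dif_pos h, dif_pos h2]
    simp only [Equiv.Perm.mul_apply]
    congr 2
  · rw [dif_neg h, dif_neg h, dif_neg h]

lemma perm_inv (n m : ℕ) (lam lamb : ℕ → ℤ) (e : Equiv.Perm (Fin n)) :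
    ∀ nu : ℕ → ℤ, (SCset n m lam lamb nu).ncard
      = (SCset n m lam lamb (fun i => nu (embed n e i))).ncard := by
  have swap_ncard : ∀ (p q : ℕ) (nu : ℕ → ℤ), 1 ≤ p → p ≤ n → 1 ≤ q → q ≤ n → p ≠ q →
      (SCset n m lam lamb nu).ncard
        = (SCset n m lam lamb (fun i => nu (Equiv.swap p q i))).ncard := by
    intro p q nu hp1 hpn hq1 hqn hpq
    rcases lt_or_gt_of_ne hpq with h | h
    · exact transp n m lam lamb n p q nu hp1 h hqn (by omega)
    · rw [show (fun i => nu (Equiv.swap p q i)) = (fun i => nu (Equiv.swap q p i)) from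
        by funext i; rw [Equiv.swap_comm]]
      exact transp n m lam lamb n q p nu hq1 h hpn (by omega)
  refine Equiv.Perm.swap_induction_on e ?_ ?_
  · intro nu
    congr 1
    apply SCset_congr
    intro i _ _
    rw [embed_one]
  · intro f x y hxy ih nu
    have hswap : ∀ i, embed n (Equiv.swap x y) i = Equiv.swap ((x:ℕ)+1) ((y:ℕ)+1) i := by
      intro i
      unfold embed
      by_cases h : 1 ≤ i ∧ i ≤ n
      · rw [dif_pos h]
        obtain ⟨hi1, hin⟩ := h
        have hx := x.isLt
        have hy := y.isLt
        set j : Fin n := ⟨i-1, by omega⟩ with hjdef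
        have hj : (j : ℕ) = i - 1 := rfl
        rw [Equiv.swap_apply_def, Equiv.swap_apply_def]
        simp only [Fin.ext_iff, apply_ite (Fin.val)]
        split_ifs <;> omega
      · rw [dif_neg h]
        have hx := x.isLt
        have hy := y.isLt
        rw [Equiv.swap_apply_of_ne_of_ne (by omega) (by omega)]
    calc (SCset n m lam lamb nu).ncard
        = (SCset n m lam lamb (fun i => nu (Equiv.swap ((x:ℕ)+1) ((y:ℕ)+1) i))).ncard := by
          apply swap_ncard _ _ _ (by omega) (by have := x.isLt; omega) (by omega)
            (by have := y.isLt; omega) (by intro hc; apply hxy; apply Fin.ext; omega)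
      _ = (SCset n m lam lamb
            (fun i => nu (Equiv.swap ((x:ℕ)+1) ((y:ℕ)+1) (embed n f i)))).ncard :=
          ih (fun j => nu (Equiv.swap ((x:ℕ)+1) ((y:ℕ)+1) j))
      _ = (SCset n m lam lamb (fun i => nu (embed n (Equiv.swap x y * f) i))).ncard := by
          congr 1
          apply congrArg
          funext i
          rw [embed_mul, hswap]

/-- The skew Kostka number `K(λ∖λ̄, ν)` is invariant under permutations of `ν`. -/
theorem stmt15 (n m : ℕ) (lam lamb nu nu' : ℕ → ℤ)
    (hld : ∀ j, 1 ≤ j → j < n + m → lam (j + 1) ≤ lam j)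
    (hlbd : ∀ j, 1 ≤ j → j < m → lamb (j + 1) ≤ lamb j)
    (σ : Equiv.Perm ℕ)
    (hσ : ∀ i, 1 ≤ i → i ≤ n → 1 ≤ σ i ∧ σ i ≤ n)
    (hperm : ∀ i, 1 ≤ i → i ≤ n → nu' i = nu (σ i)) :
    Set.ncard (SCset n m lam lamb nu) = Set.ncard (SCset n m lam lamb nu') := by
  have hφ : ∀ j : Fin n, σ ((j : ℕ) + 1) - 1 < n := by
    intro j
    have := hσ ((j : ℕ)+1) (by omega) (by have := j.isLt; omega)
    omega
  set φ : Fin n → Fin n := fun j => ⟨σ ((j : ℕ) + 1) - 1, hφ j⟩ with hφdef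
  have hinj : Function.Injective φ := by
    intro a b hab
    have h1 := hσ ((a : ℕ)+1) (by omega) (by have := a.isLt; omega)
    have h2 := hσ ((b : ℕ)+1) (by omega) (by have := b.isLt; omega)
    have h3 : σ ((a : ℕ)+1) - 1 = σ ((b : ℕ)+1) - 1 := congrArg Fin.val hab
    have h4 : σ ((a : ℕ)+1) = σ ((b : ℕ)+1) := by omega
    have h5 := σ.injective h4
    exact Fin.ext (by omega)
  set e : Equiv.Perm (Fin n) := Equiv.ofBijective φ (Finite.injective_iff_bijective.mp hinj)
    with hedef
  have key := perm_inv n m lam lamb e nu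
  rw [key]
  congr 1
  apply SCset_congr
  intro i hi1 hin
  have hei : embed n e i = σ i := by
    unfold embed
    rw [dif_pos ⟨hi1, hin⟩]
    have : e ⟨i-1, by omega⟩ = φ ⟨i-1, by omega⟩ := rfl
    rw [this, hφdef]
    have := hσ ((i-1)+1) (by omega) (by omega)
    simp only []
    have e1 : i - 1 + 1 = i := by omega
    rw [e1] at this ⊢
    omega
  rw [hei]
  exact (hperm i hi1 hin).symm
end

section
/- Let n ≥ 1, and let λ, λ̄ ∈ R^m be weakly decreasing, μ, ν ∈ R^n with |λ| − |λ̄| + |μ| − |ν| = 0. A strip-concave parallelogram-wise array X of size (n,m) with λ^X = λ, λ̄^X = λ̄, μ^X = μ, ν^X = ν exists if and only if for every I ⊆ {1,…,n}: λ[1,|I|] − λ̄[m−|I|+1, m] + μ(I) − ν(I) − Δ_{|I|} ≥ 0 when |I| ≤ m, and |λ| − |λ̄| + μ(I) − ν(I) ≥ 0 when |I| > m; here Δ_k := Σ_{j=1}^{m} max{0, λ̄_{j−k} − λ_j} (terms with j−k ≤ 0 taken as 0) and λ̄[p,q] := λ̄_p + … + λ̄_q. -/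
open Finset

/-- Strip-concavity for a parallelogram-wise array of size `(n,m)` (entries `x i j`,
`i ≤ n`, `j ≤ m`). -/
def ParSC (n m : ℕ) (x : ℕ → ℕ → ℝ) : Prop :=
  ∀ i j, 1 ≤ i → i ≤ n → 1 ≤ j → j ≤ m →
    (pd x i j ≥ pd x (i - 1) j) ∧
    (j < m → pd x (i - 1) j ≥ pd x i (j + 1))



/-! ### Real helper lemmas -/

lemma max0_nonneg (x : ℝ) : 0 ≤ max 0 x := le_max_left 0 x

lemma max0_lip {a b : ℝ} (h : a ≤ b) : max 0 b - max 0 a ≤ b - a := by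
  rcases le_total a 0 with ha | ha <;> rcases le_total b 0 with hb | hb <;>
    simp [max_eq_left, max_eq_right, *] <;> linarith

lemma min_max0_eq (a b x : ℝ) (h : b ≤ a) :
    min (a - b) (max 0 (x - b)) = max 0 (x - b) - max 0 (x - a) := by
  rcases le_total x b with h1 | h1
  · rw [max_eq_left (by linarith), max_eq_left (by linarith), min_eq_right (by linarith)]; ring
  · rcases le_total x a with h2 | h2
    · rw [max_eq_right (by linarith), max_eq_left (by linarith), min_eq_right (by linarith)]; ring
    · rw [max_eq_right (by linarith), max_eq_right (by linarith), min_eq_left (by linarith)]; ring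

/-! ### Sum helper lemmas -/

lemma sum_Icc_shift (f : ℕ → ℝ) (k m : ℕ) :
    ∑ j ∈ Icc (k+1) m, f j = ∑ p ∈ Icc 1 (m - k), f (p + k) := by
  rcases le_or_gt k m with hkm | hkm
  · rw [show m = k + (m - k) by omega, show k + (m-k) - k = m - k by omega,
      ← Finset.map_add_left_Icc, Finset.sum_map]
    exact Finset.sum_congr rfl (fun p _ => by simp [addLeftEmbedding]; rw [add_comm])
  · rw [Icc_eq_empty (by omega), show m - k = 0 by omega, Icc_eq_empty (by omega)]
    simp

lemma sum_Icc_top (f : ℕ → ℝ) (i : ℕ) (hi : 1 ≤ i) :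
    ∑ j ∈ Icc 1 i, f j = f i + ∑ j ∈ Icc 1 (i-1), f j := by
  rw [show Icc 1 i = insert i (Icc 1 (i-1)) by ext x; simp [mem_Icc]; omega,
    Finset.sum_insert (by simp [mem_Icc]; omega)]

lemma sum_Icc_bot (f : ℕ → ℝ) (a m : ℕ) (ha : a ≤ m) :
    ∑ j ∈ Icc a m, f j = f a + ∑ j ∈ Icc (a+1) m, f j := by
  rw [show Icc a m = insert a (Icc (a+1) m) by ext x; simp [mem_Icc]; omega,
    Finset.sum_insert (by simp [mem_Icc])]

lemma telescope_sum (f : ℕ → ℝ) (m : ℕ) :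
    ∑ j ∈ Icc 1 m, (f j - f (j-1)) = f m - f 0 := by
  induction m with
  | zero => simp
  | succ m ih => rw [sum_Icc_top _ _ (by omega)]; simp at ih ⊢; rw [ih]; ring

lemma mono_of_step {f : ℕ → ℝ} {m : ℕ} (h : ∀ j, 1 ≤ j → j < m → f (j+1) ≤ f j) :
    ∀ a b, 1 ≤ a → a ≤ b → b ≤ m → f b ≤ f a := by
  intro a b ha hab hbm
  induction b, hab using Nat.le_induction with
  | base => exact le_refl _
  | succ b hb ih =>
      exact (h b (ha.trans hb) (by omega)).trans (ih (by omega))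

/-! ### The deficit function -/

noncomputable def Pm (m : ℕ) (l lb : ℕ → ℝ) (k p : ℕ) : ℝ :=
  if p + k ≤ m then max 0 (l (p+k) - lb p) else 0

noncomputable def gP (m : ℕ) (l lb : ℕ → ℝ) (k : ℕ) : ℝ :=
  ∑ p ∈ Icc 1 m, Pm m l lb k p

lemma Pm_nonneg (m : ℕ) (l lb : ℕ → ℝ) (k p : ℕ) : 0 ≤ Pm m l lb k p := by
  unfold Pm; split_ifs <;> simp [max0_nonneg]

lemma gP_nonneg (m : ℕ) (l lb : ℕ → ℝ) (k : ℕ) : 0 ≤ gP m l lb k :=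
  Finset.sum_nonneg fun p _ => Pm_nonneg m l lb k p

lemma gP_shifted (m : ℕ) (l lb : ℕ → ℝ) (k : ℕ) :
    gP m l lb k = ∑ p ∈ Icc 1 (m - k), max 0 (l (p+k) - lb p) := by
  unfold gP Pm
  rw [Finset.sum_ite, Finset.sum_const_zero, add_zero]
  apply Finset.sum_congr _ (fun _ _ => rfl)
  ext p; simp [mem_Icc, Finset.mem_filter]; omega

lemma gP_window (m : ℕ) (l lb : ℕ → ℝ) (k : ℕ) :
    gP m l lb k = ∑ j ∈ Icc (k+1) m, max 0 (l j - lb (j - k)) := by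
  rw [gP_shifted, sum_Icc_shift (fun j => max 0 (l j - lb (j - k))) k m]
  refine Finset.sum_congr rfl (fun p hp => ?_)
  simp only [mem_Icc] at hp
  rw [show p + k - k = p by omega]

lemma gP_eq_zero (m : ℕ) (l lb : ℕ → ℝ) (k : ℕ) (h : m ≤ k) : gP m l lb k = 0 := by
  rw [gP_shifted, show m - k = 0 by omega]
  simp

lemma Pm_mono_k {m : ℕ} {l : ℕ → ℝ} (hl : ∀ j, 1 ≤ j → j < m → l (j+1) ≤ l j)
    (lb : ℕ → ℝ) {k k' p : ℕ} (hp : 1 ≤ p) (hkk : k ≤ k') :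
    Pm m l lb k' p ≤ Pm m l lb k p := by
  unfold Pm
  split_ifs with h1 h2 h2
  · exact max_le_max le_rfl
      (sub_le_sub_right (mono_of_step hl (p+k) (p+k') (by omega) (by omega) h1) _)
  · exact absurd (le_trans (by omega : p + k ≤ p + k') h1) h2
  · exact max0_nonneg _
  · exact le_refl 0

/-! ### Chains of interlacing rows -/

def Chain (m n : ℕ) (lb l : ℕ → ℝ) (s : ℕ → ℝ) : Prop :=
  ∃ r : ℕ → ℕ → ℝ,
    (∀ j ∈ Icc 1 m, r 0 j = lb j) ∧
    (∀ j ∈ Icc 1 m, r n j = l j) ∧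
    (∀ i ∈ Icc 1 n, ∀ j ∈ Icc 1 m, r (i-1) j ≤ r i j) ∧
    (∀ i ∈ Icc 1 n, ∀ j ∈ Icc 1 (m-1), r i (j+1) ≤ r (i-1) j) ∧
    (∀ i ∈ Icc 1 n, (∑ j ∈ Icc 1 m, r i j) - (∑ j ∈ Icc 1 m, r (i-1) j) = s i)

/-! ### Necessity -/

lemma chain_nec (m n : ℕ) (lb l : ℕ → ℝ) (s : ℕ → ℝ) (hch : Chain m n lb l s) :
    ∀ I ⊆ Icc 1 n, ∑ i ∈ I, s i ≤ (∑ i ∈ Icc 1 n, s i) - gP m l lb I.card := by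
  obtain ⟨r, hr0, hrn, hmono, hshift, hsum⟩ := hch
  intro I hI
  set k := I.card with hk
  -- potential function
  set c : ℕ → ℕ := fun i => (I ∩ Icc 1 i).card with hc
  set Φ : ℕ → ℝ := fun i => ∑ p ∈ Icc 1 (m - c i), max 0 (r i (p + c i) - lb p) with hΦ
  have key : ∀ i ≤ n, Φ i ≤ ∑ i' ∈ (Icc 1 i \ I), s i' := by
    intro i hi
    induction i with
    | zero =>
        have hc0 : c 0 = 0 := by simp [hc]
        have : Φ 0 = 0 := by
          simp only [hΦ, hc0, Nat.sub_zero, Nat.add_zero]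
          refine Finset.sum_eq_zero (fun p hp => ?_)
          rw [hr0 p hp, sub_self, max_self]
        rw [this]
        simp
    | succ i ih =>
        have hii : i ≤ n := by omega
        have IH := ih hii
        by_cases hmem : (i+1) ∈ I
        · -- card goes up, potential decreases
          have hcs : c (i+1) = c i + 1 := by
            have : I ∩ Icc 1 (i+1) = insert (i+1) (I ∩ Icc 1 i) := by
              ext x
              simp only [Finset.mem_inter, mem_Icc, Finset.mem_insert]
              constructor
              · rintro ⟨hxI, h1, h2⟩
                rcases eq_or_lt_of_le h2 with h | h
                · exact Or.inl h
                · exact Or.inr ⟨hxI, h1, by omega⟩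
              · rintro (rfl | ⟨hxI, h1, h2⟩)
                · exact ⟨hmem, by omega, le_refl _⟩
                · exact ⟨hxI, h1, by omega⟩
            rw [hc]; simp only []
            rw [this, Finset.card_insert_of_notMem (by simp [mem_Icc])]
          have hsets : Icc 1 (i+1) \ I = Icc 1 i \ I := by
            ext x
            simp only [Finset.mem_sdiff, mem_Icc]
            constructor
            · rintro ⟨⟨h1, h2⟩, hxI⟩
              refine ⟨⟨h1, ?_⟩, hxI⟩
              rcases eq_or_lt_of_le h2 with h | h
              · exact absurd (h ▸ hmem) (h ▸ hxI)
              · omega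
            · rintro ⟨⟨h1, h2⟩, hxI⟩
              exact ⟨⟨h1, by omega⟩, hxI⟩
          rw [hsets]
          refine le_trans ?_ IH
          -- Φ (i+1) ≤ Φ i
          rw [hΦ]
          simp only [hcs]
          calc ∑ p ∈ Icc 1 (m - (c i + 1)), max 0 (r (i+1) (p + (c i + 1)) - lb p)
              ≤ ∑ p ∈ Icc 1 (m - (c i + 1)), max 0 (r i (p + c i) - lb p) := by
                refine Finset.sum_le_sum (fun p hp => ?_)
                simp only [mem_Icc] at hp
                refine max_le_max le_rfl (sub_le_sub_right ?_ _)
                have := hshift (i+1) (by simp [mem_Icc]; omega) (p + c i)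
                  (by simp [mem_Icc]; omega)
                simpa [show i + 1 - 1 = i by omega, show p + c i + 1 = p + (c i + 1) by ring]
                  using this
            _ ≤ ∑ p ∈ Icc 1 (m - c i), max 0 (r i (p + c i) - lb p) := by
                refine Finset.sum_le_sum_of_subset_of_nonneg ?_ (fun p _ _ => max0_nonneg _)
                intro x hx
                simp only [mem_Icc] at hx ⊢
                omega
        · -- card stays, potential grows at most s (i+1)
          have hcs : c (i+1) = c i := by
            have : I ∩ Icc 1 (i+1) = I ∩ Icc 1 i := by
              ext x
              simp only [Finset.mem_inter, mem_Icc]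
              constructor
              · rintro ⟨hxI, h1, h2⟩
                rcases eq_or_lt_of_le h2 with h | h
                · exact absurd (h ▸ hxI) (h ▸ hmem)
                · exact ⟨hxI, h1, by omega⟩
              · rintro ⟨hxI, h1, h2⟩
                exact ⟨hxI, h1, by omega⟩
            rw [hc]; simp only []; rw [this]
          have hsets : Icc 1 (i+1) \ I = insert (i+1) (Icc 1 i \ I) := by
            ext x
            simp only [Finset.mem_sdiff, mem_Icc, Finset.mem_insert]
            constructor
            · rintro ⟨⟨h1, h2⟩, hxI⟩
              rcases eq_or_lt_of_le h2 with h | h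
              · exact Or.inl h
              · exact Or.inr ⟨⟨h1, by omega⟩, hxI⟩
            · rintro (rfl | ⟨⟨h1, h2⟩, hxI⟩)
              · exact ⟨⟨by omega, le_refl _⟩, hmem⟩
              · exact ⟨⟨h1, by omega⟩, hxI⟩
          rw [hsets, Finset.sum_insert (by simp [mem_Icc])]
          -- Φ (i+1) - Φ i ≤ s (i+1)
          have hstep : Φ (i+1) - Φ i ≤ s (i+1) := by
            rw [hΦ]
            simp only [hcs]
            rw [← Finset.sum_sub_distrib]
            have h1 : ∑ p ∈ Icc 1 (m - c i),
                (max 0 (r (i+1) (p + c i) - lb p) - max 0 (r i (p + c i) - lb p))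
                ≤ ∑ p ∈ Icc 1 (m - c i), (r (i+1) (p + c i) - r i (p + c i)) := by
              refine Finset.sum_le_sum (fun p hp => ?_)
              simp only [mem_Icc] at hp
              have hm : r i (p + c i) ≤ r (i+1) (p + c i) := by
                have := hmono (i+1) (by simp [mem_Icc]; omega) (p + c i)
                  (by simp [mem_Icc]; omega)
                simpa [show i + 1 - 1 = i by omega] using this
              have := max0_lip (sub_le_sub_right hm (lb p))
              linarith
            have h2 : ∑ p ∈ Icc 1 (m - c i), (r (i+1) (p + c i) - r i (p + c i))
                ≤ ∑ j ∈ Icc 1 m, (r (i+1) j - r i j) := by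
              rw [show (∑ p ∈ Icc 1 (m - c i), (r (i+1) (p + c i) - r i (p + c i)))
                  = ∑ j ∈ Icc (c i + 1) m, (r (i+1) j - r i j) from
                (sum_Icc_shift (fun j => r (i+1) j - r i j) (c i) m).symm]
              refine Finset.sum_le_sum_of_subset_of_nonneg ?_ (fun j hj _ => ?_)
              · intro x hx; simp only [mem_Icc] at hx ⊢; omega
              · simp only [mem_Icc] at hj
                have := hmono (i+1) (by simp [mem_Icc]; omega) j (by simp [mem_Icc]; omega)
                simp only [show i + 1 - 1 = i by omega] at this
                linarith
            have h3 : ∑ j ∈ Icc 1 m, (r (i+1) j - r i j) = s (i+1) := by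
              rw [Finset.sum_sub_distrib]
              have := hsum (i+1) (by simp [mem_Icc]; omega)
              simpa [show i + 1 - 1 = i by omega] using this
            linarith
          linarith
  -- conclude
  have hfin := key n le_rfl
  have hcn : c n = k := by
    rw [hc]; simp only []
    rw [Finset.inter_eq_left.mpr hI]
  have hΦn : Φ n = gP m l lb k := by
    rw [hΦ, gP_shifted]
    simp only [hcn]
    refine Finset.sum_congr rfl (fun p hp => ?_)
    simp only [mem_Icc] at hp
    rw [hrn (p + k) (by simp [mem_Icc]; omega)]
  have hsd : ∑ i' ∈ (Icc 1 n \ I), s i' = (∑ i ∈ Icc 1 n, s i) - ∑ i ∈ I, s i := by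
    have := Finset.sum_sdiff hI (f := s)
    linarith
  rw [hΦn, hsd] at hfin
  linarith

/-! ### Existence of the first-row raise vector δ -/

lemma max0_pos_arg {x : ℝ} (h : 0 < max 0 x) : 0 < x := by
  by_contra hc
  push_neg at hc
  rw [max_eq_left hc] at h
  exact lt_irrefl 0 h

lemma delta_ex (m : ℕ) (hm : 1 ≤ m) (l lb : ℕ → ℝ)
    (hl : ∀ j, 1 ≤ j → j < m → l (j+1) ≤ l j)
    (hlb : ∀ j, 1 ≤ j → j < m → lb (j+1) ≤ lb j)
    (N : ℕ) (s1 : ℝ) (hs1 : gP m l lb N ≤ s1) :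
    ∃ δ : ℕ → ℝ,
      (∀ p, 1 ≤ p → p ≤ m → 0 ≤ δ p) ∧
      (∀ p, 2 ≤ p → p ≤ m → δ p ≤ lb (p-1) - lb p) ∧
      (∑ p ∈ Icc 1 m, δ p = s1) ∧
      (∀ k, gP m l (fun p => lb p + δ p) k ≤ max (gP m l lb k - s1) (gP m l lb (k+1))) := by
  classical
  set u : ℕ → ℝ := fun p => lb (p-1) - lb p with hu_def
  have hu : ∀ p, 2 ≤ p → p ≤ m → 0 ≤ u p := by
    intro p h2 hpm
    have := hlb (p-1) (by omega) (by omega)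
    rw [show p - 1 + 1 = p by omega] at this
    simp only [hu_def]
    linarith
  set prof : ℕ → ℕ → ℝ := fun k p => if p = 1 then Pm m l lb k 1 else min (u p) (Pm m l lb k p)
    with hprof_def
  have prof1 : ∀ k, prof k 1 = Pm m l lb k 1 := by intro k; simp [hprof_def]
  have prof2 : ∀ k p, 2 ≤ p → prof k p = min (u p) (Pm m l lb k p) := by
    intro k p h2; simp only [hprof_def]; rw [if_neg (by omega)]
  have prof_nonneg : ∀ k p, 1 ≤ p → p ≤ m → 0 ≤ prof k p := by
    intro k p h1 hpm
    rcases eq_or_ne p 1 with rfl | hne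
    · rw [prof1]; exact Pm_nonneg m l lb k 1
    · rw [prof2 k p (by omega)]; exact le_min (hu p (by omega) hpm) (Pm_nonneg m l lb k p)
  have prof_le_u : ∀ k p, 2 ≤ p → prof k p ≤ u p := by
    intro k p h2; rw [prof2 k p h2]; exact min_le_left _ _
  have prof_le_Pm : ∀ k p, 1 ≤ p → prof k p ≤ Pm m l lb k p := by
    intro k p h1
    rcases eq_or_ne p 1 with rfl | hne
    · rw [prof1]
    · rw [prof2 k p (by omega)]; exact min_le_right _ _
  have prof_mono : ∀ k k' p, k ≤ k' → 1 ≤ p → prof k' p ≤ prof k p := by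
    intro k k' p hkk h1
    rcases eq_or_ne p 1 with rfl | hne
    · rw [prof1, prof1]; exact Pm_mono_k (k := k) (k' := k') hl lb (by omega) hkk
    · rw [prof2 k' p (by omega), prof2 k p (by omega)]
      exact min_le_min le_rfl (Pm_mono_k (k := k) (k' := k') hl lb h1 hkk)
  set L : ℕ → ℝ := fun k => ∑ p ∈ Icc 1 m, prof k p with hL_def
  -- rewriting lemmas for Pm
  have Pm_pred : ∀ k p, 2 ≤ p →
      Pm m l lb (k+1) (p-1) = if p + k ≤ m then max 0 (l (p+k) - lb (p-1)) else 0 := by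
    intro k p h2
    unfold Pm
    rw [show p - 1 + (k+1) = p + k by omega]
  have Pm_delta : ∀ (δf : ℕ → ℝ) k p,
      Pm m l (fun q => lb q + δf q) k p
        = if p + k ≤ m then max 0 (l (p+k) - lb p - δf p) else 0 := by
    intro δf k p
    unfold Pm
    rw [sub_add_eq_sub_sub]
  -- gP (k+1) as a shifted sum
  have egP1 : ∀ k, gP m l lb (k+1) = ∑ p ∈ Icc 2 m, Pm m l lb (k+1) (p-1) := by
    intro k
    have e2 : ∑ p ∈ Icc 2 m, Pm m l lb (k+1) (p-1)
        = ∑ p ∈ Icc 1 (m-1), Pm m l lb (k+1) p := by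
      rw [show (Icc 2 m) = Icc (1+1) m by norm_num,
        sum_Icc_shift (fun j => Pm m l lb (k+1) (j-1)) 1 m]
      exact Finset.sum_congr rfl (fun p _ => by rw [show p + 1 - 1 = p by omega])
    rw [e2]
    unfold gP
    rw [sum_Icc_top _ m hm, show Pm m l lb (k+1) m = 0 by unfold Pm; rw [if_neg (by omega)]]
    ring
  -- L k = gP k - gP (k+1)
  have L_eq : ∀ k, L k = gP m l lb k - gP m l lb (k+1) := by
    intro k
    have hterm : ∀ p, 2 ≤ p → p ≤ m →
        prof k p = Pm m l lb k p - Pm m l lb (k+1) (p-1) := by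
      intro p h2 hpm
      rw [prof2 k p h2, Pm_pred k p h2]
      by_cases hin : p + k ≤ m
      · rw [if_pos hin]
        unfold Pm
        rw [if_pos hin]
        exact min_max0_eq (lb (p-1)) (lb p) (l (p+k))
          (by have := hu p h2 hpm; simp only [hu_def] at this; linarith)
      · rw [if_neg hin]
        unfold Pm
        rw [if_neg hin, min_eq_right (hu p h2 hpm), sub_zero]
    have e0 : L k = prof k 1 + ∑ p ∈ Icc 2 m, prof k p := by
      rw [hL_def]; exact sum_Icc_bot _ 1 m hm
    have e1 : gP m l lb k = Pm m l lb k 1 + ∑ p ∈ Icc 2 m, Pm m l lb k p := by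
      unfold gP; exact sum_Icc_bot _ 1 m hm
    rw [e0, e1, egP1 k, prof1]
    rw [Finset.sum_congr rfl (fun p hp => hterm p (by simp only [mem_Icc] at hp; omega)
      (by simp only [mem_Icc] at hp; omega)), Finset.sum_sub_distrib]
    ring
  -- mode B estimate
  have modeB : ∀ k (δf : ℕ → ℝ), (∀ p, 1 ≤ p → p ≤ m → 0 ≤ δf p) →
      (Pm m l lb k 1 ≤ δf 1) →
      (∀ p, 2 ≤ p → p ≤ m → min (u p) (Pm m l lb k p) ≤ δf p) →
      gP m l (fun p => lb p + δf p) k ≤ gP m l lb (k+1) := by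
    intro k δf hδ0 hδ1 hδp
    have e1 : gP m l (fun p => lb p + δf p) k
        = Pm m l (fun p => lb p + δf p) k 1 + ∑ p ∈ Icc 2 m, Pm m l (fun p => lb p + δf p) k p := by
      unfold gP; exact sum_Icc_bot _ 1 m hm
    rw [e1, egP1 k]
    have h1 : Pm m l (fun p => lb p + δf p) k 1 = 0 := by
      rw [Pm_delta]
      by_cases hin : 1 + k ≤ m
      · rw [if_pos hin]
        have hP : l (1+k) - lb 1 ≤ Pm m l lb k 1 := by
          unfold Pm; rw [if_pos hin]; exact le_max_right _ _
        rw [max_eq_left (by linarith)]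
      · rw [if_neg hin]
    rw [h1, zero_add]
    refine Finset.sum_le_sum (fun p hp => ?_)
    simp only [mem_Icc] at hp
    rw [Pm_delta, Pm_pred k p hp.1]
    by_cases hin : p + k ≤ m
    · rw [if_pos hin, if_pos hin]
      rcases min_cases (u p) (Pm m l lb k p) with ⟨hmin, hcmp⟩ | ⟨hmin, hcmp⟩
      · -- δf p ≥ u p
        have hup : u p ≤ δf p := hmin ▸ hδp p hp.1 hp.2
        refine max_le_max le_rfl ?_
        simp only [hu_def] at hup
        linarith
      · -- δf p ≥ Pm k p
        have hPp : Pm m l lb k p ≤ δf p := hmin ▸ hδp p hp.1 hp.2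
        have : l (p+k) - lb p ≤ Pm m l lb k p := by
          unfold Pm; rw [if_pos hin]; exact le_max_right _ _
        rw [max_eq_left (by linarith)]
        exact max0_nonneg _
    · rw [if_neg hin, if_neg hin]
  -- mode A estimate
  have modeA : ∀ k kH (δf : ℕ → ℝ), k ≤ kH → (∀ p, 1 ≤ p → p ≤ m → 0 ≤ δf p) →
      (∀ p, 1 ≤ p → p ≤ m → δf p ≤ prof kH p) →
      gP m l (fun p => lb p + δf p) k ≤ gP m l lb k - ∑ p ∈ Icc 1 m, δf p := by
    intro k kH δf hkk hδ0 hδH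
    unfold gP
    rw [← Finset.sum_sub_distrib]
    refine Finset.sum_le_sum (fun p hp => ?_)
    simp only [mem_Icc] at hp
    rcases eq_or_lt_of_le (hδ0 p hp.1 hp.2) with h0 | h0
    · rw [Pm_delta, ← h0, sub_zero]
      unfold Pm
      rw [sub_zero]
    · have hPH : 0 < Pm m l lb kH p :=
        lt_of_lt_of_le h0 ((hδH p hp.1 hp.2).trans (prof_le_Pm kH p hp.1))
      have hinH : p + kH ≤ m := by
        by_contra hc
        unfold Pm at hPH; rw [if_neg hc] at hPH; exact lt_irrefl 0 hPH
      have hargH : 0 < l (p + kH) - lb p := by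
        unfold Pm at hPH; rw [if_pos hinH] at hPH; exact max0_pos_arg hPH
      have hδle : δf p ≤ l (p + kH) - lb p := by
        have h1 := (hδH p hp.1 hp.2).trans (prof_le_Pm kH p hp.1)
        unfold Pm at h1; rw [if_pos hinH, max_eq_right (le_of_lt hargH)] at h1
        exact h1
      have hlmono : l (p + kH) ≤ l (p + k) :=
        mono_of_step hl (p+k) (p+kH) (by omega) (by omega) hinH
      have hin : p + k ≤ m := by omega
      rw [Pm_delta, if_pos hin]
      unfold Pm
      rw [if_pos hin, max_eq_right (by linarith), max_eq_right (by linarith)]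
  -- find the threshold
  have hex : ∃ k, L k ≤ s1 := by
    refine ⟨N, ?_⟩
    rw [L_eq]
    have := gP_nonneg m l lb (N+1)
    linarith
  obtain ⟨K, hKs, hKmin⟩ : ∃ K, L K ≤ s1 ∧ ∀ k, k < K → s1 < L k :=
    ⟨Nat.find hex, Nat.find_spec hex, fun k hk => lt_of_not_ge (Nat.find_min hex hk)⟩
  rcases K with _ | K'
  · -- K = 0 : surplus goes to coordinate 1
    set δ : ℕ → ℝ := fun p => prof 0 p + (if p = 1 then s1 - L 0 else 0) with hδ_def
    have hδ : ∀ p, δ p = prof 0 p + (if p = 1 then s1 - L 0 else 0) := fun p => rfl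
    have hδ1 : δ 1 = prof 0 1 + (s1 - L 0) := by rw [hδ]; norm_num
    have hδ2 : ∀ p, 2 ≤ p → δ p = prof 0 p := by
      intro p h2; rw [hδ, if_neg (by omega), add_zero]
    refine ⟨δ, ?_, ?_, ?_, ?_⟩
    · intro p hp1 hpm
      rcases eq_or_ne p 1 with rfl | hne
      · rw [hδ1]
        have := prof_nonneg 0 1 le_rfl hm
        linarith
      · rw [hδ2 p (by omega)]
        exact prof_nonneg 0 p hp1 hpm
    · intro p h2 hpm
      rw [hδ2 p h2]
      exact prof_le_u 0 p h2
    · rw [show (∑ p ∈ Icc 1 m, δ p) = ∑ p ∈ Icc 1 m, (prof 0 p + (if p = 1 then s1 - L 0 else 0))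
        from Finset.sum_congr rfl (fun p _ => hδ p)]
      rw [Finset.sum_add_distrib, Finset.sum_ite_eq' (Icc 1 m) 1 (fun _ => s1 - L 0),
        if_pos (by simp only [mem_Icc]; omega)]
      rw [show (∑ p ∈ Icc 1 m, prof 0 p) = L 0 from rfl]
      ring
    · intro k
      refine le_trans (modeB k δ ?_ ?_ ?_) (le_max_right _ _)
      · intro p hp1 hpm
        rcases eq_or_ne p 1 with rfl | hne
        · rw [hδ1]; have := prof_nonneg 0 1 le_rfl hm; linarith
        · rw [hδ2 p (by omega)]; exact prof_nonneg 0 p hp1 hpm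
      · rw [hδ1, prof1]
        have h1 : Pm m l lb k 1 ≤ Pm m l lb 0 1 :=
          Pm_mono_k (k := 0) (k' := k) hl lb le_rfl (Nat.zero_le k)
        linarith
      · intro p h2 hpm
        rw [hδ2 p h2, prof2 0 p h2]
        exact min_le_min le_rfl (Pm_mono_k (k := 0) (k' := k) hl lb (by omega) (Nat.zero_le k))
  · -- K = K' + 1 : interpolate between the two profiles
    have hKs' : L (K'+1) ≤ s1 := hKs
    have hlt : s1 < L K' := hKmin K' (by omega)
    have hden : 0 < L K' - L (K'+1) := by linarith
    set t : ℝ := (s1 - L (K'+1))/(L K' - L (K'+1)) with ht_def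
    have ht0 : 0 ≤ t := div_nonneg (by linarith) (by linarith)
    have ht1 : t ≤ 1 := by
      rw [ht_def, div_le_one hden]; linarith
    have hprofmono : ∀ p, 1 ≤ p → prof (K'+1) p ≤ prof K' p :=
      fun p hp => prof_mono K' (K'+1) p (by omega) hp
    set δ : ℕ → ℝ := fun p => prof (K'+1) p + t * (prof K' p - prof (K'+1) p) with hδ_def
    have hδ : ∀ p, δ p = prof (K'+1) p + t * (prof K' p - prof (K'+1) p) := fun p => rfl
    have hδ0 : ∀ p, 1 ≤ p → p ≤ m → 0 ≤ δ p := by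
      intro p hp1 hpm
      rw [hδ]
      have h1 := prof_nonneg (K'+1) p hp1 hpm
      have h2 := hprofmono p hp1
      nlinarith
    have hδsum : (∑ p ∈ Icc 1 m, δ p) = s1 := by
      rw [show (∑ p ∈ Icc 1 m, δ p)
          = ∑ p ∈ Icc 1 m, (prof (K'+1) p + t * (prof K' p - prof (K'+1) p))
        from Finset.sum_congr rfl (fun p _ => hδ p)]
      rw [Finset.sum_add_distrib, ← Finset.mul_sum, Finset.sum_sub_distrib]
      rw [show (∑ p ∈ Icc 1 m, prof (K'+1) p) = L (K'+1) from rfl,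
        show (∑ p ∈ Icc 1 m, prof K' p) = L K' from rfl, ht_def]
      field_simp
      ring
    refine ⟨δ, hδ0, ?_, hδsum, ?_⟩
    · intro p h2 hpm
      have hu1 := prof_le_u (K'+1) p h2
      have hu2 := prof_le_u K' p h2
      rw [hδ]
      simp only [hu_def] at hu1 hu2 ⊢
      nlinarith
    · intro k
      rcases le_or_gt (K'+1) k with hk | hk
      · -- mode B
        refine le_trans (modeB k δ hδ0 ?_ ?_) (le_max_right _ _)
        · rw [hδ 1, prof1, prof1]
          have h1 : Pm m l lb k 1 ≤ Pm m l lb (K'+1) 1 :=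
            Pm_mono_k (k := K'+1) (k' := k) hl lb le_rfl hk
          have h2 : Pm m l lb (K'+1) 1 ≤ Pm m l lb K' 1 :=
            Pm_mono_k (k := K') (k' := K'+1) hl lb le_rfl (by omega)
          nlinarith
        · intro p h2 hpm
          rw [hδ p]
          have e1 : min (u p) (Pm m l lb k p) ≤ prof (K'+1) p := by
            rw [prof2 (K'+1) p h2]
            exact min_le_min le_rfl (Pm_mono_k (k := K'+1) (k' := k) hl lb (by omega) hk)
          have e2 := hprofmono p (by omega)
          nlinarith
      · -- mode A with kH = K'
        have := modeA k K' δ (by omega) hδ0 ?_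
        · rw [hδsum] at this
          exact le_trans this (le_max_left _ _)
        · intro p hp1 hpm
          rw [hδ]
          have h2 := hprofmono p hp1
          nlinarith

/-! ### Sufficiency -/

lemma chain_suff (m : ℕ) (l : ℕ → ℝ) (hl : ∀ j, 1 ≤ j → j < m → l (j+1) ≤ l j) :
    ∀ n (lb : ℕ → ℝ) (s : ℕ → ℝ),
      (∀ j, 1 ≤ j → j < m → lb (j+1) ≤ lb j) →
      ((∑ i ∈ Icc 1 n, s i) = (∑ j ∈ Icc 1 m, l j) - ∑ j ∈ Icc 1 m, lb j) →
      (∀ I ⊆ Icc 1 n, ∑ i ∈ I, s i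
        ≤ ((∑ j ∈ Icc 1 m, l j) - ∑ j ∈ Icc 1 m, lb j) - gP m l lb I.card) →
      Chain m n lb l s := by
  by_cases hm0 : m = 0
  · -- m = 0 : all rows are empty
    subst hm0
    intro n lb s _ hT hC
    have hemp : Icc 1 0 = (∅ : Finset ℕ) := Icc_eq_empty_of_lt (by omega)
    have hT0 : (∑ j ∈ Icc 1 0, l j) - (∑ j ∈ Icc 1 0, lb j) = 0 := by rw [hemp]; simp
    have hs0 : ∀ i ∈ Icc 1 n, s i = 0 := by
      intro i hi
      have h1 : s i ≤ 0 := by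
        have := hC {i} (by simpa using hi)
        rw [gP_eq_zero 0 l lb _ (by omega), hT0] at this
        simpa using this
      have h2 : 0 ≤ s i := by
        have hsub : {i} ⊆ Icc 1 n := by simpa using hi
        have h3 := hC (Icc 1 n \ {i}) (Finset.sdiff_subset)
        rw [gP_eq_zero 0 l lb _ (by omega), hT0] at h3
        have hsd : ∑ x ∈ Icc 1 n \ {i}, s x = (∑ x ∈ Icc 1 n, s x) - s i := by
          have := Finset.sum_sdiff (f := s) hsub
          simp only [Finset.sum_singleton] at this
          linarith
        rw [hT0] at hT
        rw [hsd, hT] at h3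
        linarith
      linarith
    refine ⟨fun _ _ => 0, ?_, ?_, ?_, ?_, ?_⟩
    · intro j hj; simp only [mem_Icc] at hj; omega
    · intro j hj; simp only [mem_Icc] at hj; omega
    · intro i _ j hj; simp only [mem_Icc] at hj; omega
    · intro i _ j hj; simp only [mem_Icc] at hj; omega
    · intro i hi
      rw [hemp]
      simpa using (hs0 i hi).symm
  · have hm : 1 ≤ m := by omega
    intro n
    induction n with
    | zero =>
        intro lb s hlb hT hC
        have hemp : Icc 1 0 = (∅ : Finset ℕ) := Icc_eq_empty_of_lt (by omega)
        have hT0 : (∑ j ∈ Icc 1 m, l j) - (∑ j ∈ Icc 1 m, lb j) = 0 := by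
          rw [hemp] at hT; simpa using hT.symm
        have hg0 : gP m l lb 0 ≤ 0 := by
          have := hC ∅ (by simp)
          simpa [hT0] using this
        have hpt : ∀ j ∈ Icc 1 m, l j = lb j := by
          have hzero : ∑ p ∈ Icc 1 m, Pm m l lb 0 p = 0 :=
            le_antisymm hg0 (gP_nonneg m l lb 0)
          have hterm := (Finset.sum_eq_zero_iff_of_nonneg
            (fun p _ => Pm_nonneg m l lb 0 p)).mp hzero
          have hle : ∀ p ∈ Icc 1 m, l p ≤ lb p := by
            intro p hp
            have hPp := hterm p hp
            simp only [mem_Icc] at hp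
            unfold Pm at hPp
            rw [if_pos (by omega), show p + 0 = p from rfl] at hPp
            by_contra hc
            push_neg at hc
            rw [max_eq_right (by linarith)] at hPp
            linarith
          have hsum0 : ∑ p ∈ Icc 1 m, (lb p - l p) = 0 := by
            rw [Finset.sum_sub_distrib]
            linarith
          have heach := (Finset.sum_eq_zero_iff_of_nonneg
            (fun p hp => by have := hle p hp; linarith)).mp hsum0
          intro j hj
          have := heach j hj
          linarith
        exact ⟨fun _ => lb, fun j _ => rfl, fun j hj => (hpt j hj).symm,
          fun i hi => by simp only [mem_Icc] at hi; omega,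
          fun i hi => by simp only [mem_Icc] at hi; omega,
          fun i hi => by simp only [mem_Icc] at hi; omega⟩
    | succ n IH =>
        intro lb s hlb hT hC
        set T : ℝ := (∑ j ∈ Icc 1 m, l j) - ∑ j ∈ Icc 1 m, lb j with hT_def
        have hIcc2 : Icc 2 (n+1) ⊆ Icc 1 (n+1) := by
          intro x hx; simp only [mem_Icc] at hx ⊢; omega
        have hcard2 : (Icc 2 (n+1)).card = n := by
          rw [Nat.card_Icc]; omega
        have hsum2 : ∑ i ∈ Icc 2 (n+1), s i = T - s 1 := by
          have := sum_Icc_bot s 1 (n+1) (by omega)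
          rw [hT] at this
          linarith
        have hs1 : gP m l lb n ≤ s 1 := by
          have := hC (Icc 2 (n+1)) hIcc2
          rw [hsum2, hcard2] at this
          linarith
        obtain ⟨δ, hδ0, hδu, hδsum, hδmax⟩ := delta_ex m hm l lb hl hlb n (s 1) hs1
        set lb' : ℕ → ℝ := fun p => lb p + δ p with hlb'_def
        have hlb'j : ∀ p, lb' p = lb p + δ p := fun _ => rfl
        have hlb' : ∀ j, 1 ≤ j → j < m → lb' (j+1) ≤ lb' j := by
          intro j h1 hjm
          have h2 := hδu (j+1) (by omega) (by omega)
          rw [show j + 1 - 1 = j by omega] at h2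
          have h3 := hδ0 j h1 (by omega)
          rw [hlb'j, hlb'j]
          linarith
        have hlb'sum : (∑ j ∈ Icc 1 m, lb' j) = (∑ j ∈ Icc 1 m, lb j) + s 1 := by
          rw [show (∑ j ∈ Icc 1 m, lb' j) = ∑ j ∈ Icc 1 m, (lb j + δ j)
            from Finset.sum_congr rfl (fun p _ => hlb'j p)]
          rw [Finset.sum_add_distrib, hδsum]
        set s' : ℕ → ℝ := fun i => s (i+1) with hs'_def
        have hs'j : ∀ i, s' i = s (i+1) := fun _ => rfl
        have hT' : (∑ i ∈ Icc 1 n, s' i)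
            = (∑ j ∈ Icc 1 m, l j) - ∑ j ∈ Icc 1 m, lb' j := by
          have e1 : ∑ i ∈ Icc 1 n, s' i = ∑ i ∈ Icc 2 (n+1), s i := by
            rw [show (Icc 2 (n+1)) = Icc (1+1) (n+1) by norm_num,
              sum_Icc_shift s 1 (n+1), show n + 1 - 1 = n by omega]
          rw [e1, hsum2, hlb'sum, hT_def]
          ring
        have hC' : ∀ I ⊆ Icc 1 n, ∑ i ∈ I, s' i
            ≤ ((∑ j ∈ Icc 1 m, l j) - ∑ j ∈ Icc 1 m, lb' j) - gP m l lb' I.card := by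
          intro I hI
          have hTT : (∑ j ∈ Icc 1 m, l j) - (∑ j ∈ Icc 1 m, lb' j) = T - s 1 := by
            rw [hlb'sum, hT_def]; ring
          rw [hTT]
          have hinj : Set.InjOn (fun x => x + 1) I := fun a _ b _ h => by
            simpa using h
          set I' : Finset ℕ := I.image (fun x => x + 1) with hI'_def
          have hcardI' : I'.card = I.card := Finset.card_image_of_injOn hinj
          have hsumI' : ∑ i ∈ I', s i = ∑ i ∈ I, s' i := by
            rw [hI'_def, Finset.sum_image hinj]
          have hI'sub : I' ⊆ Icc 1 (n+1) := by
            intro x hx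
            rw [hI'_def] at hx
            simp only [Finset.mem_image] at hx
            obtain ⟨a, ha, hax⟩ := hx
            have h6 := hI ha
            have hax' : a + 1 = x := hax
            simp only [mem_Icc] at h6 ⊢
            omega
          have h1notin : 1 ∉ I' := by
            rw [hI'_def]
            simp only [Finset.mem_image]
            rintro ⟨a, haI, ha⟩
            have h7 := hI haI
            simp only [mem_Icc] at h7
            have ha' : a + 1 = 1 := ha
            omega
          have hbound := hδmax I.card
          rcases le_max_iff.mp hbound with hA | hB
          · have h5 := hC I' hI'sub
            rw [hcardI', hsumI'] at h5
            linarith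
          · have hins : insert 1 I' ⊆ Icc 1 (n+1) := by
              intro x hx
              rcases Finset.mem_insert.mp hx with rfl | hx'
              · exact Finset.mem_Icc.mpr ⟨le_refl 1, by omega⟩
              · exact hI'sub hx'
            have h5 := hC (insert 1 I') hins
            rw [Finset.card_insert_of_notMem h1notin, hcardI',
              Finset.sum_insert h1notin, hsumI'] at h5
            linarith
        obtain ⟨r', hr'0, hr'n, hr'mono, hr'shift, hr'sum⟩ := IH lb' s' hlb' hT' hC'
        set r : ℕ → ℕ → ℝ := fun i j => if i = 0 then lb j else r' (i-1) j with hr_def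
        have hr0 : ∀ j, r 0 j = lb j := fun j => rfl
        have hrpos : ∀ i j, i ≠ 0 → r i j = r' (i-1) j := by
          intro i j hi
          rw [hr_def]
          simp only [if_neg hi]
        refine ⟨r, fun j _ => hr0 j, ?_, ?_, ?_, ?_⟩
        · intro j hj
          rw [hrpos (n+1) j (by omega), show n + 1 - 1 = n by omega]
          exact hr'n j hj
        · intro i hi j hj
          simp only [mem_Icc] at hi
          rcases eq_or_lt_of_le hi.1 with h1 | h1
          · rw [← h1, hrpos 1 j (by omega), show (1:ℕ) - 1 = 0 from rfl, hr0,
              hr'0 j hj, hlb'j]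
            simp only [mem_Icc] at hj
            have := hδ0 j (by omega) (by omega)
            linarith
          · rw [hrpos i j (by omega), hrpos (i-1) j (by omega)]
            have := hr'mono (i-1) (Finset.mem_Icc.mpr ⟨by omega, by omega⟩) j hj
            rwa [show i - 1 - 1 = i - 1 - 1 from rfl] at this
        · intro i hi j hj
          simp only [mem_Icc] at hi
          rcases eq_or_lt_of_le hi.1 with h1 | h1
          · simp only [mem_Icc] at hj
            rw [← h1, hrpos 1 (j+1) (by omega), show (1:ℕ) - 1 = 0 from rfl, hr0,
              hr'0 (j+1) (Finset.mem_Icc.mpr ⟨by omega, by omega⟩), hlb'j]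
            have h2 := hδu (j+1) (by omega) (by omega)
            rw [show j + 1 - 1 = j by omega] at h2
            linarith
          · rw [hrpos i (j+1) (by omega), hrpos (i-1) j (by omega)]
            exact hr'shift (i-1) (Finset.mem_Icc.mpr ⟨by omega, by omega⟩) j hj
        · intro i hi
          simp only [mem_Icc] at hi
          rcases eq_or_lt_of_le hi.1 with h1 | h1
          · rw [← h1]
            have e0 : ∑ j ∈ Icc 1 m, r 1 j = ∑ j ∈ Icc 1 m, lb' j := by
              refine Finset.sum_congr rfl (fun j hj => ?_)
              rw [hrpos 1 j (by omega), show (1:ℕ) - 1 = 0 from rfl]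
              exact hr'0 j hj
            have e1 : ∑ j ∈ Icc 1 m, r (1-1) j = ∑ j ∈ Icc 1 m, lb j := by
              refine Finset.sum_congr rfl (fun j hj => ?_)
              rw [show (1:ℕ) - 1 = 0 from rfl, hr0]
            rw [e0, e1, hlb'sum]
            ring
          · have e0 : ∑ j ∈ Icc 1 m, r i j = ∑ j ∈ Icc 1 m, r' (i-1) j :=
              Finset.sum_congr rfl (fun j hj => by rw [hrpos i j (by omega)])
            have e1 : ∑ j ∈ Icc 1 m, r (i-1) j = ∑ j ∈ Icc 1 m, r' (i-1-1) j :=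
              Finset.sum_congr rfl (fun j hj => by rw [hrpos (i-1) j (by omega)])
            rw [e0, e1]
            have := hr'sum (i-1) (Finset.mem_Icc.mpr ⟨by omega, by omega⟩)
            rw [hs'j (i-1), show i - 1 + 1 = i by omega] at this
            exact this

/-! ### Identity between the two forms of the deficit condition -/

lemma max0_swap (a b : ℝ) : max 0 (b - a) - max 0 (a - b) = b - a := by
  rcases le_total a b with h | h
  · rw [max_eq_right (by linarith), max_eq_left (by linarith)]; ring
  · rw [max_eq_left (by linarith), max_eq_right (by linarith)]; ring

lemma sum_Icc_split_s16 (f : ℕ → ℝ) (k m : ℕ) (hkm : k ≤ m) :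
    ∑ j ∈ Icc 1 m, f j = (∑ j ∈ Icc 1 k, f j) + ∑ j ∈ Icc (k+1) m, f j := by
  rw [show Icc 1 m = Ioc 0 m from by rw [← Finset.Icc_add_one_left_eq_Ioc]; rfl,
    show Icc 1 k = Ioc 0 k from by rw [← Finset.Icc_add_one_left_eq_Ioc]; rfl,
    show Icc (k+1) m = Ioc k m from by rw [← Finset.Icc_add_one_left_eq_Ioc]]
  exact (Finset.sum_Ioc_consecutive f (Nat.zero_le k) hkm).symm

lemma form_identity (m k : ℕ) (lam lamb : ℕ → ℝ) (hkm : k ≤ m) :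
    (∑ j ∈ Icc 1 k, lam j) - (∑ j ∈ Icc (m - k + 1) m, lamb j)
      - (∑ j ∈ Icc 1 m, if k < j then max 0 (lamb (j - k) - lam j) else 0)
    = ((∑ j ∈ Icc 1 m, lam j) - (∑ j ∈ Icc 1 m, lamb j)) - gP m lam lamb k := by
  have hΔ : (∑ j ∈ Icc 1 m, if k < j then max 0 (lamb (j - k) - lam j) else 0)
      = ∑ j ∈ Icc (k+1) m, max 0 (lamb (j - k) - lam j) := by
    rw [Finset.sum_ite, Finset.sum_const_zero, add_zero]
    apply Finset.sum_congr _ (fun _ _ => rfl)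
    ext j; simp only [Finset.mem_filter, mem_Icc]; omega
  have hg := gP_window m lam lamb k
  have hdiff : (∑ j ∈ Icc (k+1) m, max 0 (lamb (j - k) - lam j)) - gP m lam lamb k
      = (∑ j ∈ Icc (k+1) m, lamb (j - k)) - ∑ j ∈ Icc (k+1) m, lam j := by
    rw [hg, ← Finset.sum_sub_distrib, ← Finset.sum_sub_distrib]
    exact Finset.sum_congr rfl (fun j _ => max0_swap (lam j) (lamb (j-k)))
  have hshift : (∑ j ∈ Icc (k+1) m, lamb (j - k)) = ∑ p ∈ Icc 1 (m - k), lamb p := by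
    rw [sum_Icc_shift (fun j => lamb (j - k)) k m]
    exact Finset.sum_congr rfl (fun p _ => by rw [show p + k - k = p by omega])
  have hlam_split := sum_Icc_split_s16 lam k m hkm
  have hlamb_split := sum_Icc_split_s16 lamb (m - k) m (by omega)
  rw [show m - k + 1 = (m - k) + 1 from rfl] at *
  rw [hΔ]
  have h1 : (∑ j ∈ Icc (k+1) m, max 0 (lamb (j - k) - lam j))
      = gP m lam lamb k + (∑ p ∈ Icc 1 (m-k), lamb p) - ∑ j ∈ Icc (k+1) m, lam j := by
    rw [← hshift]; linarith
  rw [h1]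
  linarith

/-! ### Array ↔ chain -/

lemma pd_of_chain (r : ℕ → ℕ → ℝ) (mu : ℕ → ℝ) (i j : ℕ) (hj : 1 ≤ j) :
    ((∑ t ∈ Icc 1 i, mu t) + ∑ p ∈ Icc 1 j, r i p)
      - ((∑ t ∈ Icc 1 i, mu t) + ∑ p ∈ Icc 1 (j-1), r i p) = r i j := by
  rw [sum_Icc_top (r i) j hj]
  ring


/-- Parallelogram-wise existence theorem: a strip-concave `▱`-array with boundary data
`λ, λ̄, μ, ν` exists iff the deficit inequalities hold for every `I ⊆ {1,…,n}`. -/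
theorem stmt16 (n m : ℕ) (hn : 1 ≤ n) (lam lamb mu nu : ℕ → ℝ)
    (hld : ∀ j, 1 ≤ j → j < m → lam (j + 1) ≤ lam j)
    (hlbd : ∀ j, 1 ≤ j → j < m → lamb (j + 1) ≤ lamb j)
    (hsum : (∑ j ∈ Icc 1 m, lam j) - (∑ j ∈ Icc 1 m, lamb j)
      + (∑ i ∈ Icc 1 n, mu i) - (∑ i ∈ Icc 1 n, nu i) = 0) :
    (∃ x : ℕ → ℕ → ℝ, x 0 0 = 0 ∧ ParSC n m x ∧
      (∀ j, 1 ≤ j → j ≤ m → pd x n j = lam j) ∧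
      (∀ j, 1 ≤ j → j ≤ m → pd x 0 j = lamb j) ∧
      (∀ i, 1 ≤ i → i ≤ n → x i 0 - x (i - 1) 0 = mu i) ∧
      (∀ i, 1 ≤ i → i ≤ n → x i m - x (i - 1) m = nu i)) ↔
    (∀ I : Finset ℕ, I ⊆ Icc 1 n →
      (I.card ≤ m →
        (∑ j ∈ Icc 1 I.card, lam j) - (∑ j ∈ Icc (m - I.card + 1) m, lamb j)
          + (∑ i ∈ I, mu i) - (∑ i ∈ I, nu i)
          - (∑ j ∈ Icc 1 m, if I.card < j
              then max 0 (lamb (j - I.card) - lam j) else 0) ≥ 0) ∧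
      (m < I.card →
        (∑ j ∈ Icc 1 m, lam j) - (∑ j ∈ Icc 1 m, lamb j)
          + (∑ i ∈ I, mu i) - (∑ i ∈ I, nu i) ≥ 0)) := by
  set s : ℕ → ℝ := fun i => nu i - mu i with hs_def
  have hs : ∀ i, s i = nu i - mu i := fun _ => rfl
  have hTs : ∑ i ∈ Icc 1 n, s i
      = (∑ j ∈ Icc 1 m, lam j) - ∑ j ∈ Icc 1 m, lamb j := by
    rw [show (∑ i ∈ Icc 1 n, s i) = ∑ i ∈ Icc 1 n, (nu i - mu i)
      from Finset.sum_congr rfl (fun i _ => hs i), Finset.sum_sub_distrib]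
    linarith [hsum]
  have hmunu : ∀ I : Finset ℕ,
      (∑ i ∈ I, mu i) - (∑ i ∈ I, nu i) = - ∑ i ∈ I, s i := by
    intro I
    rw [show (∑ i ∈ I, s i) = ∑ i ∈ I, (nu i - mu i)
      from Finset.sum_congr rfl (fun i _ => hs i), Finset.sum_sub_distrib]
    ring
  constructor
  · rintro ⟨x, hx0, hSC, hlam, hlamb, hmu, hnu⟩ I hI
    have hch : Chain m n lamb lam s := by
      refine ⟨fun i j => x i j - x i (j-1), ?_, ?_, ?_, ?_, ?_⟩
      · intro j hj; simp only [mem_Icc] at hj; exact hlamb j hj.1 hj.2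
      · intro j hj; simp only [mem_Icc] at hj; exact hlam j hj.1 hj.2
      · intro i hi j hj; simp only [mem_Icc] at hi hj
        exact (hSC i j hi.1 hi.2 hj.1 hj.2).1
      · intro i hi j hj; simp only [mem_Icc] at hi hj
        exact (hSC i j hi.1 hi.2 hj.1 (by omega)).2 (by omega)
      · intro i hi; simp only [mem_Icc] at hi
        show (∑ j ∈ Icc 1 m, (x i j - x i (j-1)))
          - (∑ j ∈ Icc 1 m, (x (i-1) j - x (i-1) (j-1))) = s i
        rw [telescope_sum (x i) m, telescope_sum (x (i-1)) m, hs i]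
        have h1 := hmu i hi.1 hi.2
        have h2 := hnu i hi.1 hi.2
        linarith
    have hnecc := chain_nec m n lamb lam s hch I hI
    rw [hTs] at hnecc
    constructor
    · intro hkm
      have hid := form_identity m I.card lam lamb hkm
      have h3 := hmunu I
      linarith
    · intro hmk
      have hg0 : gP m lam lamb I.card = 0 := gP_eq_zero _ _ _ _ (by omega)
      have h3 := hmunu I
      linarith
  · intro hRHS
    have hC : ∀ I ⊆ Icc 1 n, ∑ i ∈ I, s i
        ≤ ((∑ j ∈ Icc 1 m, lam j) - ∑ j ∈ Icc 1 m, lamb j)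
          - gP m lam lamb I.card := by
      intro I hI
      rcases le_or_gt I.card m with hkm | hkm
      · have h1 := (hRHS I hI).1 hkm
        have hid := form_identity m I.card lam lamb hkm
        have h3 := hmunu I
        linarith
      · have h1 := (hRHS I hI).2 hkm
        rw [gP_eq_zero _ _ _ _ (by omega)]
        have h3 := hmunu I
        linarith
    obtain ⟨r, hr0, hrn, hmono, hshift, hrsum⟩ :=
      chain_suff m lam hld n lamb s hlbd hTs hC
    set x : ℕ → ℕ → ℝ := fun i j => (∑ t ∈ Icc 1 i, mu t) + ∑ p ∈ Icc 1 j, r i p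
      with hx_def
    have key : ∀ i j, 1 ≤ j → pd x i j = r i j :=
      fun i j hj => pd_of_chain r mu i j hj
    have hx0col : ∀ i, x i 0 = ∑ t ∈ Icc 1 i, mu t := by
      intro i
      show (∑ t ∈ Icc 1 i, mu t) + ∑ p ∈ Icc 1 0, r i p = _
      rw [show Icc 1 0 = (∅ : Finset ℕ) from Icc_eq_empty_of_lt (by omega)]
      simp
    have hxm : ∀ i, x i m = (∑ t ∈ Icc 1 i, mu t) + ∑ p ∈ Icc 1 m, r i p :=
      fun i => rfl
    refine ⟨x, ?_, ?_, ?_, ?_, ?_, ?_⟩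
    · rw [hx0col 0, show Icc 1 0 = (∅ : Finset ℕ) from Icc_eq_empty_of_lt (by omega)]
      simp
    · intro i j h1i hin h1j hjm
      constructor
      · show pd x (i-1) j ≤ pd x i j
        rw [key i j h1j, key (i-1) j h1j]
        exact hmono i (Finset.mem_Icc.mpr ⟨h1i, hin⟩) j (Finset.mem_Icc.mpr ⟨h1j, hjm⟩)
      · intro hjm'
        show pd x i (j+1) ≤ pd x (i-1) j
        rw [key (i-1) j h1j, key i (j+1) (by omega)]
        exact hshift i (Finset.mem_Icc.mpr ⟨h1i, hin⟩) j (Finset.mem_Icc.mpr ⟨h1j, by omega⟩)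
    · intro j h1j hjm
      rw [key n j h1j]
      exact hrn j (Finset.mem_Icc.mpr ⟨h1j, hjm⟩)
    · intro j h1j hjm
      rw [key 0 j h1j]
      exact hr0 j (Finset.mem_Icc.mpr ⟨h1j, hjm⟩)
    · intro i h1i hin
      rw [hx0col i, hx0col (i-1), sum_Icc_top mu i h1i]
      ring
    · intro i h1i hin
      rw [hxm i, hxm (i-1), sum_Icc_top mu i h1i]
      have h4 := hrsum i (Finset.mem_Icc.mpr ⟨h1i, hin⟩)
      rw [hs i] at h4
      linarith
end

section
/- Let λ, ν ∈ R^n with λ weakly decreasing. If there exists a strip-concave triangular array X of size n with x_{i0} = 0, ∂x_{nj} = λ_j and x_{ii} − x_{i−1,i−1} = ν_i for all i, then λ_1 + … + λ_k ≥ Σ_{i∈I} ν_i for every I ⊆ {1,…,n} with |I| = k, and λ_1 + … + λ_n = ν_1 + … + ν_n; i.e., ν lies in the permutohedron generated by λ. -/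
open Finset

/-- If a strip-concave triangular array realizes `λ` (weakly decreasing) and `ν`, then
`ν` lies in the permutohedron generated by `λ`: `ν(I) ≤ λ[1,|I|]` for all `I ⊆ {1,…,n}`
and `|ν| = |λ|`. -/
theorem stmt19 (n : ℕ) (lam nu : ℕ → ℝ) (x : ℕ → ℕ → ℝ)
    (hdec : ∀ j, 1 ≤ j → j < n → lam (j + 1) ≤ lam j)
    (hsc : TriSC n x) (hx0 : ∀ i ≤ n, x i 0 = 0)
    (hl : ∀ j, 1 ≤ j → j ≤ n → pd x n j = lam j)
    (hnu : ∀ i, 1 ≤ i → i ≤ n → x i i - x (i - 1) (i - 1) = nu i) :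
    (∀ I : Finset ℕ, I ⊆ Icc 1 n → ∑ i ∈ I, nu i ≤ ∑ j ∈ Icc 1 I.card, lam j) ∧
    (∑ j ∈ Icc 1 n, lam j = ∑ i ∈ Icc 1 n, nu i) := by
  -- telescoping of rows
  have hS : ∀ m k : ℕ, ∑ j ∈ Ioc 0 k, pd x m j = x m k - x m 0 := by
    intro m k
    induction k with
    | zero => simp
    | succ k ih =>
      rw [Finset.sum_Ioc_succ_top (Nat.zero_le k), ih]
      simp only [pd, Nat.add_sub_cancel]
      ring
  have hXval : ∀ m, m ≤ n → ∀ k, x m k = ∑ j ∈ Ioc 0 k, pd x m j := by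
    intro m hm k
    rw [hS, hx0 m hm, sub_zero]
  -- key inductive lemma
  have key : ∀ m, m ≤ n → ∀ I : Finset ℕ, I ⊆ Icc 1 m → ∑ i ∈ I, nu i ≤ x m I.card := by
    intro m
    induction m with
    | zero =>
      intro _ I hI
      have hIe : I = ∅ := by
        refine Finset.eq_empty_of_forall_notMem fun a ha => ?_
        have := hI ha
        simp [Finset.mem_Icc] at this
      subst hIe
      simp [hx0 0 (Nat.zero_le n)]
    | succ m ih =>
      intro hmn I hI
      have hm1 : (m : ℕ) ≤ n := by omega
      by_cases hm : (m + 1) ∈ I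
      · -- last row index belongs to I
        have h1 : 1 ≤ I.card := Finset.card_pos.mpr ⟨_, hm⟩
        have hI'sub : I.erase (m + 1) ⊆ Icc 1 m := by
          intro a ha
          rw [Finset.mem_erase] at ha
          have := hI ha.2
          rw [Finset.mem_Icc] at this ⊢
          have := ha.1
          omega
        have hcard : I.card = (I.erase (m + 1)).card + 1 := by
          rw [Finset.card_erase_of_mem hm]; omega
        set k := (I.erase (m + 1)).card with hk
        have hkm : k ≤ m := le_trans (Finset.card_le_card hI'sub) (by simp)
        have ihsum : ∑ i ∈ I.erase (m + 1), nu i ≤ x m k := ih hm1 _ hI'sub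
        have hsplit : nu (m + 1) + ∑ i ∈ I.erase (m + 1), nu i = ∑ i ∈ I, nu i :=
          Finset.add_sum_erase I nu hm
        have hnuval : nu (m + 1) = x (m + 1) (m + 1) - x m m := by
          have := hnu (m + 1) (by omega) hmn
          simpa using this.symm
        rw [← hsplit, hcard, hnuval]
        -- reduce to sum comparison
        have e1 : x (m + 1) (m + 1) - x (m + 1) (k + 1)
            = ∑ j ∈ Ioc (k + 1) (m + 1), pd x (m + 1) j := by
          rw [hXval (m + 1) hmn, hXval (m + 1) hmn]
          rw [← Finset.sum_Ioc_consecutive _ (Nat.zero_le (k + 1)) (by omega)]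
          ring
        have e2 : x m m - x m k = ∑ j ∈ Ioc k m, pd x m j := by
          rw [hXval m hm1, hXval m hm1]
          rw [← Finset.sum_Ioc_consecutive _ (Nat.zero_le k) hkm]
          ring
        have e3 : ∑ j ∈ Ioc (k + 1) (m + 1), pd x (m + 1) j
            = ∑ j ∈ Ioc k m, pd x (m + 1) (j + 1) := by
          rw [← Finset.map_add_right_Ioc k m 1, Finset.sum_map]
          rfl
        have hcomp : ∑ j ∈ Ioc k m, pd x (m + 1) (j + 1) ≤ ∑ j ∈ Ioc k m, pd x m j := by
          refine Finset.sum_le_sum fun j hj => ?_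
          rw [Finset.mem_Ioc] at hj
          have h := (hsc (m + 1) j (by omega) hmn (by omega) (by omega)).2 (by omega)
          simpa using h
        have : x (m + 1) (m + 1) - x (m + 1) (k + 1) ≤ x m m - x m k := by
          rw [e1, e2, e3]; exact hcomp
        linarith
      · -- m+1 not in I
        have hIsub : I ⊆ Icc 1 m := by
          intro a ha
          have h2 := hI ha
          rw [Finset.mem_Icc] at h2 ⊢
          have : a ≠ m + 1 := fun h => hm (h ▸ ha)
          omega
        have hkm : I.card ≤ m := le_trans (Finset.card_le_card hIsub) (by simp)
        refine le_trans (ih hm1 I hIsub) ?_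
        rw [hXval m hm1, hXval (m + 1) hmn]
        refine Finset.sum_le_sum fun j hj => ?_
        rw [Finset.mem_Ioc] at hj
        have h := (hsc (m + 1) j (by omega) hmn (by omega) (by omega)).1 (by omega)
        simpa using h
  -- diagonal telescoping
  have hdiag : ∑ i ∈ Icc 1 n, nu i = x n n := by
    have : ∀ m, m ≤ n → ∑ i ∈ Ioc 0 m, nu i = x m m - x 0 0 := by
      intro m
      induction m with
      | zero => simp
      | succ m ih =>
        intro hmn
        rw [Finset.sum_Ioc_succ_top (Nat.zero_le m), ih (by omega)]
        have := hnu (m + 1) (by omega) hmn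
        simp only [Nat.add_sub_cancel] at this
        linarith
    have h0 : Icc 1 n = Ioc 0 n := by rw [← Finset.Icc_add_one_left_eq_Ioc, zero_add]
    rw [h0, this n le_rfl, hx0 0 (Nat.zero_le n), sub_zero]
  have hlamsum : ∀ k, k ≤ n → ∑ j ∈ Icc 1 k, lam j = x n k := by
    intro k hk
    rw [hXval n le_rfl k, ← Finset.Icc_add_one_left_eq_Ioc]
    exact Finset.sum_congr rfl fun j hj => by
      rw [Finset.mem_Icc] at hj
      exact (hl j hj.1 (by omega)).symm
  constructor
  · intro I hI
    have hk : I.card ≤ n := le_trans (Finset.card_le_card hI) (by simp)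
    calc ∑ i ∈ I, nu i ≤ x n I.card := key n le_rfl I hI
      _ = ∑ j ∈ Icc 1 I.card, lam j := (hlamsum I.card hk).symm
  · rw [hlamsum n le_rfl, hdiag]
end
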